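/- arXiv:1206.2459 — 7 statements merged into one kernel-verified Lean document; each statement's English description precedes it below -/
import Mathlib

section
/- For any probability measures P and Q on a measurable space (X, 𝓐) with densities p, q with respect to a common σ-finite dominating measure μ, the Rényi divergence of order 0 has the closed form D_0(P‖Q) = −log Q({x ∈ X : p(x) > 0}). -/
open MeasureTheory Real Filter Set
open scoped ENNReal NNReal Topology Classical

/-- The Hellinger integral `∫ p^α q^(1-α) dμ`, computed with the dominating
measure `μ = P + Q` (the value does not depend on the choice of dominating
measure). The `ℝ≥0∞`-valued `rpow` automatically implements the conventions
`0/0 = 0` and `x/0 = ∞` for `x > 0` when `α > 1`. -/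
noncomputable def hellingerInt {X : Type*} [MeasurableSpace X]
    (α : ℝ) (P Q : Measure X) : ℝ≥0∞ :=
  ∫⁻ x, P.rnDeriv (P + Q) x ^ α * Q.rnDeriv (P + Q) x ^ (1 - α) ∂(P + Q)

/-- Rényi divergence of a simple order `α ∈ (0,1) ∪ (1,∞)`:
`D_α(P‖Q) = (α-1)⁻¹ log ∫ p^α q^(1-α) dμ`. -/
noncomputable def renyiSimple {X : Type*} [MeasurableSpace X]
    (α : ℝ) (P Q : Measure X) : EReal :=
  (((α - 1)⁻¹ : ℝ) : EReal) * ENNReal.log (hellingerInt α P Q)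

/-- Rényi divergence of any order `α ∈ [0,∞]`.  The extended orders `0`, `1`, `∞`
are defined as the limits of the simple orders (the limits exist by monotonicity
in the order, so they coincide with the `limsup`s used here). -/
noncomputable def renyiDiv {X : Type*} [MeasurableSpace X]
    (α : ℝ≥0∞) (P Q : Measure X) : EReal :=
  if α = 0 then Filter.limsup (fun a : ℝ => renyiSimple a P Q) (nhdsWithin (0:ℝ) (Set.Ioi 0))
  else if α = 1 then Filter.limsup (fun a : ℝ => renyiSimple a P Q) (nhdsWithin (1:ℝ) (Set.Iio 1))
  else if α = ∞ then Filter.limsup (fun a : ℝ => renyiSimple a P Q) Filter.atTop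
  else renyiSimple α.toReal P Q

/-- Kullback-Leibler divergence `D(P‖Q) = ∫ p log (p/q) dμ`, with the conventions
`0 log (0/q) = 0` and `p log (p/0) = ∞` for `p > 0`; in particular `D(P‖Q) = ∞`
whenever `P` is not absolutely continuous w.r.t. `Q`, or the integral diverges. -/
noncomputable def klDiv {X : Type*} [MeasurableSpace X] (P Q : Measure X) : EReal :=
  if P ≪ Q ∧ Integrable (llr P Q) P then ((∫ x, llr P Q x ∂P : ℝ) : EReal) else ⊤

lemma tendsto_rpow_exp {x : ℝ≥0∞} (hx0 : x ≠ 0) (hxt : x ≠ ∞) (b : ℝ) :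
    Tendsto (fun a : ℝ => x ^ a) (𝓝 b) (𝓝 (x ^ b)) := by
  have ht : 0 < x.toReal := ENNReal.toReal_pos hx0 hxt
  have hx : ∀ a : ℝ, x ^ a = ENNReal.ofReal (x.toReal ^ a) := by
    intro a
    rw [← ENNReal.ofReal_rpow_of_pos ht, ENNReal.ofReal_toReal hxt]
  simp_rw [hx]
  exact (ENNReal.continuous_ofReal.tendsto _).comp (Real.continuousAt_const_rpow ht.ne')

lemma hellinger_tendsto {X : Type*} [MeasurableSpace X] (P Q : Measure X)
    [IsProbabilityMeasure P] [IsProbabilityMeasure Q] :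
    Tendsto (fun a : ℝ => hellingerInt a P Q) (𝓝[>] (0:ℝ))
      (𝓝 (Q {x | 0 < P.rnDeriv (P + Q) x})) := by
  set ν := P + Q with hν
  set r := P.rnDeriv ν with hr
  set s := Q.rnDeriv ν with hs
  have hrm : Measurable r := Measure.measurable_rnDeriv P ν
  have hsm : Measurable s := Measure.measurable_rnDeriv Q ν
  have hB : MeasurableSet {x | 0 < r x} := measurableSet_lt measurable_const hrm
  have hQν : Q ≪ ν := Measure.absolutelyContinuous_of_le (Measure.le_add_left le_rfl)
  have hr_le : r ≤ᵐ[ν] 1 := Measure.rnDeriv_le_one_of_le (Measure.le_add_right le_rfl)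
  have hs_le : s ≤ᵐ[ν] 1 := Measure.rnDeriv_le_one_of_le (Measure.le_add_left le_rfl)
  have hkey : Q {x | 0 < r x} = ∫⁻ x, ({x | 0 < r x}).indicator s x ∂ν := by
    rw [lintegral_indicator hB, Measure.setLIntegral_rnDeriv' hQν hB]
  rw [hkey]
  refine tendsto_lintegral_filter_of_dominated_convergence (fun _ => 1)
    (Eventually.of_forall fun a => ((ENNReal.continuous_rpow_const.measurable.comp hrm).mul
      (ENNReal.continuous_rpow_const.measurable.comp hsm))) ?_ ?_ ?_
  · filter_upwards [Ioo_mem_nhdsGT_of_mem (by simp : (0:ℝ) ∈ Ico 0 1)] with a ha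
    filter_upwards [hr_le, hs_le] with x hx1 hx2
    calc r x ^ a * s x ^ (1 - a) ≤ 1 * 1 := by
          refine mul_le_mul' (ENNReal.rpow_le_one hx1 ha.1.le)
            (ENNReal.rpow_le_one hx2 (by linarith [ha.2] : (0:ℝ) ≤ 1 - a))
      _ = 1 := by simp
  · simp [measure_ne_top]
  · filter_upwards [hr_le, hs_le] with x hx1 hx2
    by_cases hrx : r x = 0
    · have h0 : ∀ᶠ a in 𝓝[>] (0:ℝ), r x ^ a * s x ^ (1 - a) = 0 := by
        filter_upwards [self_mem_nhdsWithin] with a (ha : 0 < a)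
        simp [hrx, ENNReal.zero_rpow_of_pos ha]
      have : ({x | 0 < r x}).indicator s x = 0 := by
        simp [Set.indicator, hrx]
      rw [this]
      exact tendsto_const_nhds.congr' (h0.mono fun a ha => ha.symm)
    · have hrx' : 0 < r x := pos_iff_ne_zero.mpr hrx
      have hrfin : r x ≠ ∞ := (lt_of_le_of_lt hx1 (by simp)).ne
      have hind : ({x | 0 < r x}).indicator s x = s x := by
        simp [Set.indicator, hrx']
      rw [hind]
      have h1 : Tendsto (fun a : ℝ => r x ^ a) (𝓝[>] (0:ℝ)) (𝓝 1) := by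
        have := (tendsto_rpow_exp hrx hrfin 0).mono_left
          (nhdsWithin_le_nhds : 𝓝[>] (0:ℝ) ≤ 𝓝 0)
        simpa using this
      have h2 : Tendsto (fun a : ℝ => s x ^ (1 - a)) (𝓝[>] (0:ℝ)) (𝓝 (s x)) := by
        by_cases hsx : s x = 0
        · have h0 : ∀ᶠ a in 𝓝[>] (0:ℝ), s x ^ (1 - a) = 0 := by
            have : Iio (1:ℝ) ∈ 𝓝[>] (0:ℝ) :=
              nhdsWithin_le_nhds (Iio_mem_nhds (by norm_num))
            filter_upwards [this] with a (ha : a < 1)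
            simp [hsx, ENNReal.zero_rpow_of_pos (by linarith : (0:ℝ) < 1 - a)]
          rw [hsx] at h0 ⊢
          exact tendsto_const_nhds.congr' (h0.mono fun a ha => ha.symm)
        · have hsfin : s x ≠ ∞ := (lt_of_le_of_lt hx2 (by simp)).ne
          have hsub : Tendsto (fun a : ℝ => 1 - a) (𝓝[>] (0:ℝ)) (𝓝 1) := by
            have : Tendsto (fun a : ℝ => 1 - a) (𝓝 (0:ℝ)) (𝓝 (1 - 0)) :=
              (continuous_const.sub continuous_id).tendsto 0
            simpa using this.mono_left nhdsWithin_le_nhds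
          have := (tendsto_rpow_exp hsx hsfin 1).comp hsub
          simpa [Function.comp_def] using this
      have := ENNReal.Tendsto.mul h1 (Or.inl one_ne_zero) h2
        (Or.inr (by simp : (1:ℝ≥0∞) ≠ ∞))
      simpa using this

lemma q_pos_set_eq {X : Type*} [MeasurableSpace X] (P Q : Measure X)
    [IsProbabilityMeasure P] [IsProbabilityMeasure Q]
    (μ : Measure X) [SigmaFinite μ] (p q : X → ℝ≥0∞)
    (hp : Measurable p) (hq : Measurable q)
    (hP : P = μ.withDensity p) (hQ : Q = μ.withDensity q) :
    Q {x | 0 < P.rnDeriv (P + Q) x} = Q {x | 0 < p x} := by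
  set ν := P + Q with hν
  set r := P.rnDeriv ν with hr
  have hrm : Measurable r := Measure.measurable_rnDeriv P ν
  have hB : MeasurableSet {x | 0 < r x} := measurableSet_lt measurable_const hrm
  have hA : MeasurableSet {x | 0 < p x} := measurableSet_lt measurable_const hp
  have hPν : P ≪ ν := Measure.absolutelyContinuous_of_le (Measure.le_add_right le_rfl)
  have hQν : Q ≪ ν := Measure.absolutelyContinuous_of_le (Measure.le_add_left le_rfl)
  have hQμ : Q ≪ μ := hQ ▸ withDensity_absolutelyContinuous μ q
  have hPμrep : ∀ t : Set X, MeasurableSet t → P t = ∫⁻ x in t, p x ∂μ := by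
    intro t ht; rw [hP, withDensity_apply _ ht]
  have hPνrep : ∀ t : Set X, MeasurableSet t → P t = ∫⁻ x in t, r x ∂ν := fun t ht =>
    (Measure.setLIntegral_rnDeriv' hPν ht).symm
  have h1 : Q ({x | 0 < p x} \ {x | 0 < r x}) = 0 := by
    set t := {x | 0 < p x} \ {x | 0 < r x} with hts
    have hm : MeasurableSet t := hA.diff hB
    have hP0 : P t = 0 := by
      rw [hPνrep t hm]
      have : ∫⁻ x in t, r x ∂ν = ∫⁻ x in t, 0 ∂ν := by
        refine setLIntegral_congr_fun hm (fun x hx => ?_)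
        simpa using hx.2
      simp [this]
    rw [hPμrep t hm, setLIntegral_eq_zero_iff hm hp] at hP0
    refine hQμ (measure_mono_null ?_ ((ae_iff.mp hP0)))
    intro x hx
    simp only [Set.mem_setOf_eq, Classical.not_imp]
    exact ⟨hx, hx.1.ne'⟩
  have h2 : Q ({x | 0 < r x} \ {x | 0 < p x}) = 0 := by
    set t := {x | 0 < r x} \ {x | 0 < p x} with hts
    have hm : MeasurableSet t := hB.diff hA
    have hP0 : P t = 0 := by
      rw [hPμrep t hm]
      have : ∫⁻ x in t, p x ∂μ = ∫⁻ x in t, 0 ∂μ := by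
        refine setLIntegral_congr_fun hm (fun x hx => ?_)
        simpa using hx.2
      simp [this]
    rw [hPνrep t hm, setLIntegral_eq_zero_iff hm hrm] at hP0
    refine hQν (measure_mono_null ?_ ((ae_iff.mp hP0)))
    intro x hx
    simp only [Set.mem_setOf_eq, Classical.not_imp]
    exact ⟨hx, hx.1.ne'⟩
  exact measure_congr (MeasureTheory.ae_eq_set.mpr ⟨h2, h1⟩)

/-- **Order 0.** For probability measures `P, Q` with densities `p, q` with respect to
a common σ-finite dominating measure `μ`, the Rényi divergence of order `0` has the
closed form `D_0(P‖Q) = - log Q({x | p(x) > 0})`. -/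
theorem renyiDiv_zero_eq_neg_log
    {X : Type*} [MeasurableSpace X] (P Q : Measure X)
    [IsProbabilityMeasure P] [IsProbabilityMeasure Q]
    (μ : Measure X) [SigmaFinite μ] (p q : X → ℝ≥0∞)
    (hp : Measurable p) (hq : Measurable q)
    (hP : P = μ.withDensity p) (hQ : Q = μ.withDensity q) :
    renyiDiv 0 P Q = - ENNReal.log (Q {x | 0 < p x}) := by
  have hset := q_pos_set_eq P Q μ p q hp hq hP hQ
  have hT : Tendsto (fun a : ℝ => hellingerInt a P Q) (𝓝[>] (0:ℝ))
      (𝓝 (Q {x | 0 < p x})) := hset ▸ hellinger_tendsto P Q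
  have hlog : Tendsto (fun a : ℝ => ENNReal.log (hellingerInt a P Q)) (𝓝[>] (0:ℝ))
      (𝓝 (ENNReal.log (Q {x | 0 < p x}))) :=
    (ENNReal.continuous_log.tendsto _).comp hT
  have hcoef : Tendsto (fun a : ℝ => (((a - 1)⁻¹ : ℝ) : EReal)) (𝓝[>] (0:ℝ))
      (𝓝 (((-1 : ℝ) : EReal))) := by
    rw [EReal.tendsto_coe]
    have h1 : ContinuousAt (fun a : ℝ => (a - 1)⁻¹) 0 :=
      (continuousAt_id.sub continuousAt_const).inv₀ (by norm_num)
    have := h1.tendsto.mono_left (nhdsWithin_le_nhds : 𝓝[>] (0:ℝ) ≤ 𝓝 0)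
    norm_num at this
    exact this
  have hmul : Tendsto (fun a : ℝ => renyiSimple a P Q) (𝓝[>] (0:ℝ))
      (𝓝 (((-1 : ℝ) : EReal) * ENNReal.log (Q {x | 0 < p x}))) := by
    have hc : ContinuousAt (fun z : EReal × EReal => z.1 * z.2)
        ((((-1 : ℝ) : EReal)), ENNReal.log (Q {x | 0 < p x})) :=
      EReal.continuousAt_mul
        (Or.inl (by simp : (((-1 : ℝ) : EReal), ENNReal.log (Q {x | 0 < p x})).1 ≠ 0))
        (Or.inl (by simp : (((-1 : ℝ) : EReal), ENNReal.log (Q {x | 0 < p x})).1 ≠ 0))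
        (Or.inl (EReal.coe_ne_bot _)) (Or.inl (EReal.coe_ne_top _))
    exact hc.tendsto.comp (hcoef.prodMk_nhds hlog)
  have hlimsup : renyiDiv 0 P Q
      = ((-1 : ℝ) : EReal) * ENNReal.log (Q {x | 0 < p x}) := by
    rw [renyiDiv, if_pos rfl]
    exact hmul.limsup_eq
  rw [hlimsup, show ((-1 : ℝ) : EReal) = -1 by norm_num, neg_one_mul]
end

section
/- (Data processing inequality.) For any order α ∈ [0,∞], any probability measures P and Q on a measurable space (X, 𝓐), and any sub-σ-algebra 𝓖 ⊆ 𝓐, the Rényi divergence of the restrictions satisfies D_α(P|𝓖 ‖ Q|𝓖) ≤ D_α(P‖Q). -/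
open MeasureTheory Real Filter Set
open scoped ENNReal NNReal Topology Classical

/-! ### Auxiliary pointwise inequalities -/

private lemma real_div_rpow_mul₁ {α a b : ℝ} (ha : 0 < a) (hb : 0 < b) :
    (a / b) ^ (α - 1) * a = a ^ α * b ^ (1 - α) := by
  rw [Real.div_rpow ha.le hb.le, div_mul_eq_mul_div, ← Real.rpow_add_one ha.ne' (α - 1),
    sub_add_cancel, div_eq_mul_inv, ← Real.rpow_neg hb.le, neg_sub]

private lemma real_div_rpow_mul₂ {α a b : ℝ} (ha : 0 < a) (hb : 0 < b) :
    (a / b) ^ α * b = a ^ α * b ^ (1 - α) := by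
  rw [Real.div_rpow ha.le hb.le, Real.rpow_sub hb, Real.rpow_one, div_mul_eq_mul_div,
    mul_div_assoc]

private lemma ennreal_div_rpow_mul₁ {α : ℝ} {a b : ℝ≥0∞} (ha : a ≠ 0) (ha' : a ≠ ⊤)
    (hb : b ≠ 0) (hb' : b ≠ ⊤) :
    (a / b) ^ (α - 1) * a = a ^ α * b ^ (1 - α) := by
  lift a to ℝ≥0 using ha'
  lift b to ℝ≥0 using hb'
  have ha0 : a ≠ 0 := by exact_mod_cast ha
  have hb0 : b ≠ 0 := by exact_mod_cast hb
  rw [← ENNReal.coe_div hb0, ← ENNReal.coe_rpow_of_ne_zero (div_ne_zero ha0 hb0),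
    ← ENNReal.coe_rpow_of_ne_zero ha0, ← ENNReal.coe_rpow_of_ne_zero hb0,
    ← ENNReal.coe_mul, ← ENNReal.coe_mul, ENNReal.coe_inj]
  apply NNReal.coe_injective
  push_cast [NNReal.coe_rpow]
  exact real_div_rpow_mul₁ (by positivity) (by positivity)

private lemma ennreal_div_rpow_mul₂ {α : ℝ} {a b : ℝ≥0∞} (ha : a ≠ 0) (ha' : a ≠ ⊤)
    (hb : b ≠ 0) (hb' : b ≠ ⊤) :
    (a / b) ^ α * b = a ^ α * b ^ (1 - α) := by
  lift a to ℝ≥0 using ha'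
  lift b to ℝ≥0 using hb'
  have ha0 : a ≠ 0 := by exact_mod_cast ha
  have hb0 : b ≠ 0 := by exact_mod_cast hb
  rw [← ENNReal.coe_div hb0, ← ENNReal.coe_rpow_of_ne_zero (div_ne_zero ha0 hb0),
    ← ENNReal.coe_rpow_of_ne_zero ha0, ← ENNReal.coe_rpow_of_ne_zero hb0,
    ← ENNReal.coe_mul, ← ENNReal.coe_mul, ENNReal.coe_inj]
  apply NNReal.coe_injective
  push_cast [NNReal.coe_rpow]
  exact real_div_rpow_mul₂ (by positivity) (by positivity)

/-- AM–GM for two `ℝ≥0∞` numbers. -/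
lemma ennreal_geom_mean {w : ℝ} (hw0 : 0 < w) (hw1 : w < 1) (x y : ℝ≥0∞) :
    x ^ w * y ^ (1 - w) ≤ ENNReal.ofReal w * x + ENNReal.ofReal (1 - w) * y := by
  have hw1' : (0:ℝ) < 1 - w := by linarith
  have how : ENNReal.ofReal w ≠ 0 := (ENNReal.ofReal_pos.mpr hw0).ne'
  have how' : ENNReal.ofReal (1 - w) ≠ 0 := (ENNReal.ofReal_pos.mpr hw1').ne'
  rcases eq_or_ne x ⊤ with hx | hx
  · rcases eq_or_ne y 0 with hy | hy
    · simp [hy, ENNReal.zero_rpow_of_pos hw1']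
    · have h : ENNReal.ofReal w * x = ⊤ := by rw [hx, ENNReal.mul_top how]
      rw [h, top_add]
      exact le_top
  rcases eq_or_ne y ⊤ with hy | hy
  · have h : ENNReal.ofReal (1 - w) * y = ⊤ := by rw [hy, ENNReal.mul_top how']
    rw [h, add_top]
    exact le_top
  lift x to ℝ≥0 using hx
  lift y to ℝ≥0 using hy
  rw [← ENNReal.coe_rpow_of_nonneg x hw0.le, ← ENNReal.coe_rpow_of_nonneg y hw1'.le,
    ENNReal.ofReal, ENNReal.ofReal, ← ENNReal.coe_mul, ← ENNReal.coe_mul, ← ENNReal.coe_mul,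
    ← ENNReal.coe_add, ENNReal.coe_le_coe]
  have hsum : w.toNNReal + (1 - w).toNNReal = 1 := by
    ext
    push_cast [Real.coe_toNNReal _ hw0.le, Real.coe_toNNReal _ hw1'.le]
    ring
  have h := NNReal.geom_mean_le_arith_mean2_weighted w.toNNReal (1 - w).toNNReal x y hsum
  rwa [Real.coe_toNNReal _ hw0.le, Real.coe_toNNReal _ hw1'.le] at h

/-- For `0 < α < 1`: pointwise bound `p^α q^(1-α) ≤ α t^(α-1) p + (1-α) t^α q`. -/
lemma pt_lt_one {α : ℝ} (h0 : 0 < α) (h1 : α < 1) (p q t : ℝ≥0∞) (hp : p ≠ ⊤) (hq : q ≠ ⊤) :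
    p ^ α * q ^ (1 - α)
      ≤ ENNReal.ofReal α * (t ^ (α - 1) * p) + ENNReal.ofReal (1 - α) * (t ^ α * q) := by
  have h1' : (0:ℝ) < 1 - α := by linarith
  have hneg : α - 1 < 0 := by linarith
  have hoα : ENNReal.ofReal α ≠ 0 := (ENNReal.ofReal_pos.mpr h0).ne'
  have hoα' : ENNReal.ofReal (1 - α) ≠ 0 := (ENNReal.ofReal_pos.mpr h1').ne'
  rcases eq_or_ne t 0 with ht | ht
  · rcases eq_or_ne p 0 with hp0 | hp0
    · simp [hp0, ENNReal.zero_rpow_of_pos h0]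
    · have h : t ^ (α - 1) * p = ⊤ := by
        rw [ht, ENNReal.zero_rpow_of_neg hneg, ENNReal.top_mul hp0]
      rw [h, ENNReal.mul_top hoα, top_add]
      exact le_top
  rcases eq_or_ne t ⊤ with ht' | ht'
  · rcases eq_or_ne q 0 with hq0 | hq0
    · simp [hq0, ENNReal.zero_rpow_of_pos h1']
    · have h : t ^ α * q = ⊤ := by
        rw [ht', ENNReal.top_rpow_of_pos h0, ENNReal.top_mul hq0]
      rw [h, ENNReal.mul_top hoα', add_top]
      exact le_top
  refine le_trans (le_of_eq ?_) (ennreal_geom_mean h0 h1 (t ^ (α - 1) * p) (t ^ α * q))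
  rw [ENNReal.mul_rpow_of_nonneg _ _ h0.le, ENNReal.mul_rpow_of_nonneg _ _ h1'.le,
    ← ENNReal.rpow_mul, ← ENNReal.rpow_mul, mul_mul_mul_comm,
    ← ENNReal.rpow_add _ _ ht ht', show (α - 1) * α + α * (1 - α) = 0 by ring,
    ENNReal.rpow_zero, one_mul]

/-- For `α > 1`: pointwise bound `α s^(α-1) p ≤ p^α q^(1-α) + (α-1) s^α q`. -/
lemma pt_gt_one {α : ℝ} (h1 : 1 < α) (p q s : ℝ≥0∞) :
    ENNReal.ofReal α * (s ^ (α - 1) * p)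
      ≤ p ^ α * q ^ (1 - α) + ENNReal.ofReal (α - 1) * (s ^ α * q) := by
  have h0 : (0:ℝ) < α := by linarith
  have ha1 : (0:ℝ) < α - 1 := by linarith
  have hneg : 1 - α < 0 := by linarith
  have hoα : ENNReal.ofReal (α - 1) ≠ 0 := (ENNReal.ofReal_pos.mpr ha1).ne'
  rcases eq_or_ne s 0 with hs | hs
  · simp [hs, ENNReal.zero_rpow_of_pos ha1]
  rcases eq_or_ne p 0 with hp | hp
  · simp [hp]
  rcases eq_or_ne q 0 with hq | hq
  · have h : p ^ α * q ^ (1 - α) = ⊤ := by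
      rw [hq, ENNReal.zero_rpow_of_neg hneg, ENNReal.mul_top]
      simp [ENNReal.rpow_eq_zero_iff, hp, not_lt.mpr h0.le]
    rw [h, top_add]
    exact le_top
  rcases eq_or_ne q ⊤ with hq' | hq'
  · have h : ENNReal.ofReal (α - 1) * (s ^ α * q) = ⊤ := by
      rw [hq', ENNReal.mul_top (by simp [ENNReal.rpow_eq_zero_iff, hs, not_lt.mpr h0.le]),
        ENNReal.mul_top hoα]
    rw [h, add_top]
    exact le_top
  rcases eq_or_ne s ⊤ with hs' | hs'
  · have h : ENNReal.ofReal (α - 1) * (s ^ α * q) = ⊤ := by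
      rw [hs', ENNReal.top_rpow_of_pos h0, ENNReal.top_mul hq, ENNReal.mul_top hoα]
    rw [h, add_top]
    exact le_top
  rcases eq_or_ne p ⊤ with hp' | hp'
  · have h : p ^ α * q ^ (1 - α) = ⊤ := by
      rw [hp', ENNReal.top_rpow_of_pos h0, ENNReal.top_mul]
      simp [ENNReal.rpow_eq_zero_iff, hq, hq', not_lt.mpr hneg.le]
    rw [h, top_add]
    exact le_top
  -- main case: everything finite and `p q s ≠ 0`
  have hw0 : (0:ℝ) < 1 / α := by positivity
  have hw1 : 1 / α < 1 := by rw [div_lt_one h0]; exact h1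
  have key := ennreal_geom_mean hw0 hw1 (p ^ α * q ^ (1 - α)) (s ^ α * q)
  have hmul := mul_le_mul_right key (ENNReal.ofReal α)
  have hid : (p ^ α * q ^ (1 - α)) ^ (1 / α) * (s ^ α * q) ^ (1 - 1 / α)
      = s ^ (α - 1) * p := by
    rw [ENNReal.mul_rpow_of_nonneg _ _ hw0.le,
      ENNReal.mul_rpow_of_nonneg _ _ (by nlinarith : (0:ℝ) ≤ 1 - 1 / α),
      ← ENNReal.rpow_mul, ← ENNReal.rpow_mul, ← ENNReal.rpow_mul,
      show α * (1 / α) = 1 by field_simp, ENNReal.rpow_one,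
      show α * (1 - 1 / α) = α - 1 by field_simp,
      mul_mul_mul_comm, ← ENNReal.rpow_add _ _ hq hq',
      show (1 - α) * (1 / α) + (1 - 1 / α) = 0 by field_simp; ring, ENNReal.rpow_zero, mul_one,
      mul_comm]
  rw [hid] at hmul
  refine hmul.trans (le_of_eq ?_)
  have e1 : ENNReal.ofReal α * (ENNReal.ofReal (1 / α) * (p ^ α * q ^ (1 - α)))
      = p ^ α * q ^ (1 - α) := by
    rw [← mul_assoc, ← ENNReal.ofReal_mul h0.le, show α * (1 / α) = 1 by field_simp,
      ENNReal.ofReal_one, one_mul]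
  have e2 : ENNReal.ofReal α * (ENNReal.ofReal (1 - 1 / α) * (s ^ α * q))
      = ENNReal.ofReal (α - 1) * (s ^ α * q) := by
    rw [← mul_assoc, ← ENNReal.ofReal_mul h0.le, show α * (1 - 1 / α) = α - 1 by field_simp]
  rw [mul_add, e1, e2]

/-- For `α > 1`: the identity `(a/b)^(α-1) * a = a^α * b^(1-α)` in `ℝ≥0∞`. -/
lemma div_rpow_mul_self_eq {α : ℝ} (h1 : 1 < α) (a b : ℝ≥0∞) :
    (a / b) ^ (α - 1) * a = a ^ α * b ^ (1 - α) := by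
  have h0 : (0:ℝ) < α := by linarith
  have ha1 : (0:ℝ) < α - 1 := by linarith
  have hneg : 1 - α < 0 := by linarith
  rcases eq_or_ne a 0 with ha | ha
  · simp [ha, ENNReal.zero_rpow_of_pos ha1, ENNReal.zero_rpow_of_pos h0, zero_div]
  rcases eq_or_ne b 0 with hb | hb
  · rw [hb, ENNReal.div_zero ha, ENNReal.top_rpow_of_pos ha1, ENNReal.top_mul ha,
      ENNReal.zero_rpow_of_neg hneg, ENNReal.mul_top
        (by simp [ENNReal.rpow_eq_zero_iff, ha, not_lt.mpr h0.le])]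
  rcases eq_or_ne b ⊤ with hb' | hb'
  · rcases eq_or_ne a ⊤ with ha' | ha'
    · rw [ha', hb', ENNReal.div_top, ENNReal.zero_rpow_of_pos ha1, zero_mul,
        ENNReal.top_rpow_of_pos h0, ENNReal.top_rpow_of_neg hneg, mul_zero]
    · rw [hb', ENNReal.div_top, ENNReal.zero_rpow_of_pos ha1, zero_mul,
        ENNReal.top_rpow_of_neg hneg, mul_zero]
  rcases eq_or_ne a ⊤ with ha' | ha'
  · rw [ha', ENNReal.top_div_of_ne_top hb', ENNReal.top_rpow_of_pos ha1,
      ENNReal.top_rpow_of_pos h0, ENNReal.top_mul_top, ENNReal.top_mul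
        (by simp [ENNReal.rpow_eq_zero_iff, hb, hb', not_lt.mpr hneg.le])]
  · exact ennreal_div_rpow_mul₁ ha ha' hb hb'

/-- For `0 < α < 1`: `(a/b)^(α-1) * a ≤ a^α * b^(1-α)` in `ℝ≥0∞`. -/
lemma div_rpow_mul_self_le₁ {α : ℝ} (h0 : 0 < α) (h1 : α < 1) (a b : ℝ≥0∞) :
    (a / b) ^ (α - 1) * a ≤ a ^ α * b ^ (1 - α) := by
  have h1' : (0:ℝ) < 1 - α := by linarith
  have hneg : α - 1 < 0 := by linarith
  rcases eq_or_ne a 0 with ha | ha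
  · simp [ha, ENNReal.zero_rpow_of_pos h0]
  rcases eq_or_ne b 0 with hb | hb
  · rw [hb, ENNReal.div_zero ha, ENNReal.top_rpow_of_neg hneg, zero_mul]
    exact zero_le
  rcases eq_or_ne a ⊤ with ha' | ha'
  · rcases eq_or_ne b ⊤ with hb' | hb'
    · rw [ha', hb', ENNReal.div_top, ENNReal.zero_rpow_of_neg hneg,
        ENNReal.top_rpow_of_pos h0, ENNReal.top_rpow_of_pos h1', ENNReal.top_mul_top]
    · rw [ha', ENNReal.top_div_of_ne_top hb', ENNReal.top_rpow_of_neg hneg, zero_mul]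
      exact zero_le
  rcases eq_or_ne b ⊤ with hb' | hb'
  · rw [hb', ENNReal.div_top, ENNReal.zero_rpow_of_neg hneg, ENNReal.top_rpow_of_pos h1',
      ENNReal.top_mul ha, ENNReal.mul_top
        (by simp [ENNReal.rpow_eq_zero_iff, ha, ha', not_lt.mpr h0.le])]
  · exact le_of_eq (ennreal_div_rpow_mul₁ ha ha' hb hb')

/-- For `0 < α < 1`: `(a/b)^α * b ≤ a^α * b^(1-α)` in `ℝ≥0∞`. -/
lemma div_rpow_mul_self_le₂ {α : ℝ} (h0 : 0 < α) (h1 : α < 1) (a b : ℝ≥0∞) :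
    (a / b) ^ α * b ≤ a ^ α * b ^ (1 - α) := by
  have h1' : (0:ℝ) < 1 - α := by linarith
  rcases eq_or_ne a 0 with ha | ha
  · simp [ha, ENNReal.zero_rpow_of_pos h0]
  rcases eq_or_ne b 0 with hb | hb
  · rw [hb, mul_zero]
    exact zero_le
  rcases eq_or_ne b ⊤ with hb' | hb'
  · rw [hb', ENNReal.div_top, ENNReal.zero_rpow_of_pos h0, zero_mul]
    exact zero_le
  rcases eq_or_ne a ⊤ with ha' | ha'
  · rw [ha', ENNReal.top_div_of_ne_top hb', ENNReal.top_rpow_of_pos h0, ENNReal.top_mul hb,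
      ENNReal.top_mul (by simp [ENNReal.rpow_eq_zero_iff, hb, hb'])]
  · exact le_of_eq (ennreal_div_rpow_mul₂ ha ha' hb hb')

/-- `⨆ n, (min x n)^c = x^c` for `c > 0`. -/
lemma iSup_min_rpow {c : ℝ} (hc : 0 < c) (x : ℝ≥0∞) :
    ⨆ n : ℕ, (min x (n : ℝ≥0∞)) ^ c = x ^ c := by
  refine le_antisymm (iSup_le fun n => ENNReal.rpow_le_rpow (min_le_left _ _) hc.le) ?_
  rcases eq_or_ne x ⊤ with hx | hx
  · rw [hx, ENNReal.top_rpow_of_pos hc, top_le_iff, iSup_eq_top]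
    intro b hb
    obtain ⟨n, hn⟩ := ENNReal.exists_nat_gt
      (ENNReal.rpow_ne_top_of_nonneg (x := b) (y := 1 / c) (by positivity) hb.ne)
    refine ⟨n, ?_⟩
    have hbe : b = (b ^ (1 / c)) ^ c := by
      rw [← ENNReal.rpow_mul, one_div, inv_mul_cancel₀ hc.ne', ENNReal.rpow_one]
    calc b = (b ^ (1 / c)) ^ c := hbe
      _ < ((n : ℝ≥0∞)) ^ c := ENNReal.rpow_lt_rpow hn hc
      _ = (min ⊤ (n : ℝ≥0∞)) ^ c := by rw [min_eq_right le_top]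
  · obtain ⟨n, hn⟩ := ENNReal.exists_nat_gt hx
    calc x ^ c = (min x (n : ℝ≥0∞)) ^ c := by rw [min_eq_left hn.le]
      _ ≤ ⨆ n : ℕ, (min x (n : ℝ≥0∞)) ^ c :=
          le_iSup (fun n : ℕ => (min x (n : ℝ≥0∞)) ^ c) n

/-! ### Transfer of integrals to the trimmed measures -/

lemma lintegral_mul_rnDeriv_trim {X : Type*} {mX : MeasurableSpace X} (R S : Measure X)
    [IsFiniteMeasure R] [IsFiniteMeasure S] {m : MeasurableSpace X} (hm : m ≤ mX)
    (hRS : R ≪ S) {f : X → ℝ≥0∞} (hf : Measurable[m] f) :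
    ∫⁻ x, f x * R.rnDeriv S x ∂S
      = ∫⁻ x, f x * (R.trim hm).rnDeriv (S.trim hm) x ∂(S.trim hm) := by
  have h1 : ∫⁻ x, f x * R.rnDeriv S x ∂S = ∫⁻ x, f x ∂(R) := by
    rw [lintegral_congr (fun x => mul_comm (f x) (R.rnDeriv S x))]
    exact lintegral_rnDeriv_mul hRS (Measurable.aemeasurable (hf.mono hm le_rfl))
  have h2 : ∫⁻ x, f x * (R.trim hm).rnDeriv (S.trim hm) x ∂(S.trim hm)
      = ∫⁻ x, f x ∂(R.trim hm) := by
    rw [lintegral_congr (fun x => mul_comm (f x) ((R.trim hm).rnDeriv (S.trim hm) x))]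
    exact lintegral_rnDeriv_mul (hRS.trim hm) hf.aemeasurable
  rw [h1, h2, lintegral_trim hm hf]

/-! ### The two monotonicity results for the Hellinger integral -/

section Hellinger

lemma hellinger_le_trim {X : Type*} {mX : MeasurableSpace X} (P Q : Measure X)
    [IsProbabilityMeasure P] [IsProbabilityMeasure Q]
    {m : MeasurableSpace X} (hm : m ≤ mX) {α : ℝ} (h0 : 0 < α) (h1 : α < 1) :
    @hellingerInt X mX α P Q ≤ @hellingerInt X m α (P.trim hm) (Q.trim hm) := by
  have h1' : (0:ℝ) < 1 - α := by linarith
  set μ : @Measure X mX := P + Q with hμdef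
  have hPμ : P ≪ μ := by
    refine Measure.AbsolutelyContinuous.mk fun s hs hs0 => ?_
    rw [hμdef, Measure.coe_add, Pi.add_apply, add_eq_zero] at hs0
    exact hs0.1
  have hQμ : Q ≪ μ := by
    refine Measure.AbsolutelyContinuous.mk fun s hs hs0 => ?_
    rw [hμdef, Measure.coe_add, Pi.add_apply, add_eq_zero] at hs0
    exact hs0.2
  set ν : @Measure X m := μ.trim hm with hνdef
  have htrim : P.trim hm + Q.trim hm = ν := (trim_add hm).symm
  set p : X → ℝ≥0∞ := P.rnDeriv μ with hpdef
  set q : X → ℝ≥0∞ := Q.rnDeriv μ with hqdef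
  set p' : X → ℝ≥0∞ := (P.trim hm).rnDeriv ν with hp'def
  set q' : X → ℝ≥0∞ := (Q.trim hm).rnDeriv ν with hq'def
  set t : X → ℝ≥0∞ := fun x => p' x / q' x with htdef
  have hp'm : Measurable[m] p' := Measure.measurable_rnDeriv _ _
  have hq'm : Measurable[m] q' := Measure.measurable_rnDeriv _ _
  have htm : Measurable[m] t := hp'm.div hq'm
  have hpm : Measurable[mX] p := Measure.measurable_rnDeriv _ _
  have hqm : Measurable[mX] q := Measure.measurable_rnDeriv _ _
  have ht1m : Measurable[m] fun x => t x ^ (α - 1) := htm.pow_const _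
  have ht2m : Measurable[m] fun x => t x ^ α := htm.pow_const _
  have hH : @hellingerInt X mX α P Q = ∫⁻ x, p x ^ α * q x ^ (1 - α) ∂μ := rfl
  have hH' : @hellingerInt X m α (P.trim hm) (Q.trim hm) = ∫⁻ x, p' x ^ α * q' x ^ (1 - α) ∂ν := by
    simp only [hellingerInt]
    rw [htrim]
  rw [hH, hH']
  have step1 : ∫⁻ x, p x ^ α * q x ^ (1 - α) ∂μ
      ≤ ∫⁻ x, (ENNReal.ofReal α * (t x ^ (α - 1) * p x)
          + ENNReal.ofReal (1 - α) * (t x ^ α * q x)) ∂μ := by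
    refine lintegral_mono_ae ?_
    filter_upwards [Measure.rnDeriv_ne_top P μ, Measure.rnDeriv_ne_top Q μ] with x hp hq
    exact pt_lt_one h0 h1 _ _ _ hp hq
  have m1 : Measurable[mX] fun x => ENNReal.ofReal α * (t x ^ (α - 1) * p x) :=
    (((ht1m.mono hm le_rfl)).mul hpm).const_mul _
  have m2 : Measurable[mX] fun x => t x ^ (α - 1) * p x := (ht1m.mono hm le_rfl).mul hpm
  have m3 : Measurable[mX] fun x => t x ^ α * q x := (ht2m.mono hm le_rfl).mul hqm
  have step2 : ∫⁻ x, (ENNReal.ofReal α * (t x ^ (α - 1) * p x)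
          + ENNReal.ofReal (1 - α) * (t x ^ α * q x)) ∂μ
      = ENNReal.ofReal α * ∫⁻ x, t x ^ (α - 1) * p x ∂μ
        + ENNReal.ofReal (1 - α) * ∫⁻ x, t x ^ α * q x ∂μ := by
    rw [lintegral_add_left m1, lintegral_const_mul _ m2, lintegral_const_mul _ m3]
  have t1 : ∫⁻ x, t x ^ (α - 1) * p x ∂μ = ∫⁻ x, t x ^ (α - 1) * p' x ∂ν :=
    lintegral_mul_rnDeriv_trim P μ hm hPμ ht1m
  have t2 : ∫⁻ x, t x ^ α * q x ∂μ = ∫⁻ x, t x ^ α * q' x ∂ν :=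
    lintegral_mul_rnDeriv_trim Q μ hm hQμ ht2m
  have b1 : ∫⁻ x, t x ^ (α - 1) * p' x ∂ν ≤ ∫⁻ x, p' x ^ α * q' x ^ (1 - α) ∂ν :=
    lintegral_mono fun x => div_rpow_mul_self_le₁ h0 h1 (p' x) (q' x)
  have b2 : ∫⁻ x, t x ^ α * q' x ∂ν ≤ ∫⁻ x, p' x ^ α * q' x ^ (1 - α) ∂ν :=
    lintegral_mono fun x => div_rpow_mul_self_le₂ h0 h1 (p' x) (q' x)
  calc ∫⁻ x, p x ^ α * q x ^ (1 - α) ∂μ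
      ≤ ENNReal.ofReal α * ∫⁻ x, t x ^ (α - 1) * p x ∂μ
        + ENNReal.ofReal (1 - α) * ∫⁻ x, t x ^ α * q x ∂μ := step1.trans (le_of_eq step2)
    _ ≤ ENNReal.ofReal α * ∫⁻ x, p' x ^ α * q' x ^ (1 - α) ∂ν
        + ENNReal.ofReal (1 - α) * ∫⁻ x, p' x ^ α * q' x ^ (1 - α) ∂ν := by
        rw [t1, t2]
        exact add_le_add (mul_le_mul_right b1 _) (mul_le_mul_right b2 _)
    _ = ∫⁻ x, p' x ^ α * q' x ^ (1 - α) ∂ν := by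
        rw [← add_mul, ← ENNReal.ofReal_add h0.le h1'.le,
          show α + (1 - α) = 1 by ring, ENNReal.ofReal_one, one_mul]

lemma hellinger_trim_le {X : Type*} {mX : MeasurableSpace X} (P Q : Measure X)
    [IsProbabilityMeasure P] [IsProbabilityMeasure Q]
    {m : MeasurableSpace X} (hm : m ≤ mX) {α : ℝ} (h1 : 1 < α) :
    @hellingerInt X m α (P.trim hm) (Q.trim hm) ≤ @hellingerInt X mX α P Q := by
  have h0 : (0:ℝ) < α := by linarith
  have ha1 : (0:ℝ) < α - 1 := by linarith
  set μ : @Measure X mX := P + Q with hμdef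
  have hPμ : P ≪ μ := by
    refine Measure.AbsolutelyContinuous.mk fun s hs hs0 => ?_
    rw [hμdef, Measure.coe_add, Pi.add_apply, add_eq_zero] at hs0
    exact hs0.1
  have hQμ : Q ≪ μ := by
    refine Measure.AbsolutelyContinuous.mk fun s hs hs0 => ?_
    rw [hμdef, Measure.coe_add, Pi.add_apply, add_eq_zero] at hs0
    exact hs0.2
  set ν : @Measure X m := μ.trim hm with hνdef
  have htrim : P.trim hm + Q.trim hm = ν := (trim_add hm).symm
  set p : X → ℝ≥0∞ := P.rnDeriv μ with hpdef
  set q : X → ℝ≥0∞ := Q.rnDeriv μ with hqdef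
  set p' : X → ℝ≥0∞ := (P.trim hm).rnDeriv ν with hp'def
  set q' : X → ℝ≥0∞ := (Q.trim hm).rnDeriv ν with hq'def
  set t : X → ℝ≥0∞ := fun x => p' x / q' x with htdef
  have hp'm : Measurable[m] p' := Measure.measurable_rnDeriv _ _
  have hq'm : Measurable[m] q' := Measure.measurable_rnDeriv _ _
  have htm : Measurable[m] t := hp'm.div hq'm
  have hpm : Measurable[mX] p := Measure.measurable_rnDeriv _ _
  have hqm : Measurable[mX] q := Measure.measurable_rnDeriv _ _
  set g : ℕ → X → ℝ≥0∞ := fun n x => min (t x) (n : ℝ≥0∞) with hgdef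
  have hgm : ∀ n, Measurable[m] (g n) := fun n => htm.min measurable_const
  have hH : @hellingerInt X mX α P Q = ∫⁻ x, p x ^ α * q x ^ (1 - α) ∂μ := rfl
  have hH' : @hellingerInt X m α (P.trim hm) (Q.trim hm) = ∫⁻ x, p' x ^ α * q' x ^ (1 - α) ∂ν := by
    simp only [hellingerInt]
    rw [htrim]
  rw [hH, hH']
  -- rewrite the trimmed Hellinger integral using `t`
  have hident : ∫⁻ x, p' x ^ α * q' x ^ (1 - α) ∂ν = ∫⁻ x, t x ^ (α - 1) * p' x ∂ν :=
    lintegral_congr fun x => (div_rpow_mul_self_eq h1 (p' x) (q' x)).symm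
  rw [hident]
  set B : ℕ → ℝ≥0∞ := fun n => ∫⁻ x, g n x ^ (α - 1) * p' x ∂ν with hBdef
  have hgm1 : ∀ n, Measurable[m] fun x => g n x ^ (α - 1) := fun n => (hgm n).pow_const _
  have hgm2 : ∀ n, Measurable[m] fun x => g n x ^ α := fun n => (hgm n).pow_const _
  have hBfin : ∀ n, B n ≠ ⊤ := by
    intro n
    have hle : B n ≤ (n : ℝ≥0∞) ^ (α - 1) * ∫⁻ x, p' x ∂ν := by
      rw [← lintegral_const_mul _ hp'm]
      exact lintegral_mono fun x =>
        mul_le_mul_left (ENNReal.rpow_le_rpow (min_le_right _ _) ha1.le) _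
    have hp'int : ∫⁻ x, p' x ∂ν = (P.trim hm) Set.univ :=
      Measure.lintegral_rnDeriv (hPμ.trim hm)
    refine ne_top_of_le_ne_top ?_ hle
    exact ENNReal.mul_ne_top (ENNReal.rpow_ne_top_of_nonneg ha1.le (ENNReal.natCast_ne_top n))
      (by rw [hp'int]; exact measure_ne_top _ _)
  have hBH : ∀ n, B n ≤ ∫⁻ x, p x ^ α * q x ^ (1 - α) ∂μ := by
    intro n
    have e1 : B n = ∫⁻ x, g n x ^ (α - 1) * p x ∂μ :=
      (lintegral_mul_rnDeriv_trim P μ hm hPμ (hgm1 n)).symm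
    have e2 : ∫⁻ x, g n x ^ α * q x ∂μ = ∫⁻ x, g n x ^ α * q' x ∂ν :=
      lintegral_mul_rnDeriv_trim Q μ hm hQμ (hgm2 n)
    have hgq : ∀ x, g n x ^ α * q' x ≤ g n x ^ (α - 1) * p' x := by
      intro x
      rcases eq_or_ne (g n x) 0 with hg0 | hg0
      · rw [hg0, ENNReal.zero_rpow_of_pos h0, zero_mul]
        exact zero_le
      · have hgt : g n x ≠ ⊤ :=
          ne_top_of_le_ne_top (ENNReal.natCast_ne_top n) (min_le_right _ _)
        have hexp : g n x ^ α = g n x ^ (α - 1) * g n x := by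
          calc g n x ^ α = g n x ^ (α - 1 + 1) := by rw [sub_add_cancel]
            _ = g n x ^ (α - 1) * g n x ^ (1:ℝ) := ENNReal.rpow_add _ _ hg0 hgt
            _ = g n x ^ (α - 1) * g n x := by rw [ENNReal.rpow_one]
        rw [hexp, mul_assoc]
        refine mul_le_mul_right ?_ _
        calc g n x * q' x ≤ t x * q' x := mul_le_mul_left (min_le_left _ _) _
          _ = q' x * (p' x / q' x) := mul_comm _ _
          _ ≤ p' x := ENNReal.mul_div_le
    have step : ENNReal.ofReal α * B n
        ≤ ∫⁻ x, p x ^ α * q x ^ (1 - α) ∂μ + ENNReal.ofReal (α - 1) * B n := by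
      have mgp : Measurable[mX] fun x => g n x ^ (α - 1) * p x :=
        ((hgm1 n).mono hm le_rfl).mul hpm
      have mgq : Measurable[mX] fun x => g n x ^ α * q x :=
        ((hgm2 n).mono hm le_rfl).mul hqm
      have mH : Measurable[mX] fun x => p x ^ α * q x ^ (1 - α) :=
        (hpm.pow_const _).mul (hqm.pow_const _)
      calc ENNReal.ofReal α * B n
          = ∫⁻ x, ENNReal.ofReal α * (g n x ^ (α - 1) * p x) ∂μ := by
            rw [e1, lintegral_const_mul _ mgp]
        _ ≤ ∫⁻ x, (p x ^ α * q x ^ (1 - α) + ENNReal.ofReal (α - 1) * (g n x ^ α * q x)) ∂μ :=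
            lintegral_mono fun x => pt_gt_one h1 (p x) (q x) (g n x)
        _ = ∫⁻ x, p x ^ α * q x ^ (1 - α) ∂μ
            + ENNReal.ofReal (α - 1) * ∫⁻ x, g n x ^ α * q x ∂μ := by
            rw [lintegral_add_left mH, lintegral_const_mul _ mgq]
        _ ≤ ∫⁻ x, p x ^ α * q x ^ (1 - α) ∂μ + ENNReal.ofReal (α - 1) * B n := by
            refine add_le_add_right (mul_le_mul_right ?_ _) _
            rw [e2]
            exact lintegral_mono hgq
    have hofα : ENNReal.ofReal α = 1 + ENNReal.ofReal (α - 1) := by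
      rw [← ENNReal.ofReal_one, ← ENNReal.ofReal_add (by norm_num) ha1.le,
        show (1:ℝ) + (α - 1) = α by ring]
    rw [hofα, add_mul, one_mul, add_comm (B n) (ENNReal.ofReal (α - 1) * B n),
      add_comm (∫⁻ x, p x ^ α * q x ^ (1 - α) ∂μ) (ENNReal.ofReal (α - 1) * B n)] at step
    exact (ENNReal.add_le_add_iff_left
      (ENNReal.mul_ne_top ENNReal.ofReal_ne_top (hBfin n))).mp step
  -- monotone convergence
  have hsup : ∫⁻ x, t x ^ (α - 1) * p' x ∂ν = ⨆ n, B n := by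
    rw [hBdef]
    rw [← lintegral_iSup (f := fun n x => g n x ^ (α - 1) * p' x) (fun n => ((hgm1 n).mul hp'm))]
    · refine lintegral_congr fun x => ?_
      rw [← ENNReal.iSup_mul, iSup_min_rpow ha1 (t x)]
    · intro i j hij
      intro x
      exact mul_le_mul_left
        (ENNReal.rpow_le_rpow (min_le_min le_rfl (by exact_mod_cast hij)) ha1.le) _
  rw [hsup]
  exact iSup_le hBH

end Hellinger

/-! ### From the Hellinger integral to the Rényi divergence -/

private lemma ereal_mul_le_of_nonneg {c : ℝ} (hc : 0 ≤ c) {x y : EReal} (h : x ≤ y) :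
    (c : EReal) * x ≤ (c : EReal) * y :=
  mul_le_mul_of_nonneg_left h (by exact_mod_cast hc)

private lemma ereal_mul_le_of_nonpos {c : ℝ} (hc : c ≤ 0) {x y : EReal} (h : x ≤ y) :
    (c : EReal) * y ≤ (c : EReal) * x := by
  have h' : ((-c : ℝ) : EReal) * x ≤ ((-c : ℝ) : EReal) * y :=
    ereal_mul_le_of_nonneg (by linarith) h
  rw [EReal.coe_neg, EReal.neg_mul, EReal.neg_mul] at h'
  exact EReal.neg_le_neg_iff.mp h'

lemma renyiSimple_trim_le {X : Type*} {mX : MeasurableSpace X} (P Q : Measure X)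
    [IsProbabilityMeasure P] [IsProbabilityMeasure Q]
    {m : MeasurableSpace X} (hm : m ≤ mX) {a : ℝ} (ha : (0 < a ∧ a < 1) ∨ 1 < a) :
    @renyiSimple X m a (P.trim hm) (Q.trim hm) ≤ @renyiSimple X mX a P Q := by
  unfold renyiSimple
  rcases ha with ⟨h0, h1⟩ | h1
  · have hH := hellinger_le_trim P Q hm h0 h1
    have hlog := ENNReal.log_monotone hH
    exact ereal_mul_le_of_nonpos (by
      rw [inv_nonpos]; linarith) hlog
  · have hH := hellinger_trim_le P Q hm h1
    have hlog := ENNReal.log_monotone hH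
    exact ereal_mul_le_of_nonneg (by
      rw [inv_nonneg]; linarith) hlog

/-- **Data processing inequality.** For any order `α ∈ [0,∞]` and any sub-σ-algebra
`m` of the σ-algebra on `X`, restricting `P` and `Q` to `m` can only decrease the
Rényi divergence: `D_α(P|m ‖ Q|m) ≤ D_α(P‖Q)`. -/
theorem renyiDiv_data_processing
    {X : Type*} {mX : MeasurableSpace X} (P Q : Measure X)
    [IsProbabilityMeasure P] [IsProbabilityMeasure Q]
    {m : MeasurableSpace X} (hm : m ≤ mX) (α : ℝ≥0∞) :
    @renyiDiv X m α (@Measure.trim X m mX P hm) (@Measure.trim X m mX Q hm)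
      ≤ @renyiDiv X mX α P Q := by
  have key : ∀ a : ℝ, (0 < a ∧ a < 1) ∨ 1 < a →
      @renyiSimple X m a (P.trim hm) (Q.trim hm) ≤ @renyiSimple X mX a P Q :=
    fun a ha => renyiSimple_trim_le P Q hm ha
  unfold renyiDiv
  split_ifs with h0 h1 htop
  · refine Filter.limsup_le_limsup ?_
    filter_upwards [Ioo_mem_nhdsGT_of_mem
      (show (0:ℝ) ∈ Set.Ico (0:ℝ) 1 by constructor <;> norm_num)] with a ha
    exact key a (Or.inl ⟨ha.1, ha.2⟩)
  · refine Filter.limsup_le_limsup ?_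
    filter_upwards [Ioo_mem_nhdsLT_of_mem
      (show (1:ℝ) ∈ Set.Ioc (0:ℝ) 1 by constructor <;> norm_num)] with a ha
    exact key a (Or.inl ⟨ha.1, ha.2⟩)
  · refine Filter.limsup_le_limsup ?_
    filter_upwards [eventually_gt_atTop (1:ℝ)] with a ha
    exact key a (Or.inr ha)
  · have htr : 0 < α.toReal := ENNReal.toReal_pos h0 htop
    have hne1 : α.toReal ≠ 1 := fun h => h1 ((ENNReal.toReal_eq_one_iff α).mp h)
    rcases lt_or_gt_of_ne hne1 with h | h
    · exact key _ (Or.inl ⟨htr, h⟩)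
    · exact key _ (Or.inr h)
end

section
/- (Joint convexity for α ∈ [0,1].) For any order α ∈ [0,1], any two pairs of probability distributions (P₀, Q₀) and (P₁, Q₁) on a common measurable space, and any λ ∈ (0,1), the Rényi divergence satisfies D_α((1−λ)P₀ + λP₁ ‖ (1−λ)Q₀ + λQ₁) ≤ (1−λ)·D_α(P₀‖Q₀) + λ·D_α(P₁‖Q₁). -/
open MeasureTheory Real Filter Set
open scoped ENNReal NNReal Topology Classical

-- limsup const mul for EReal
lemma my_limsup_const_mul {α : Type*} {f : Filter α} (u : α → EReal) {c : ℝ} (hc : 0 < c) :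
    Filter.limsup (fun x => (c : EReal) * u x) f = (c : EReal) * Filter.limsup u f := by
  have hmono : ∀ (d : ℝ), 0 < d → Monotone (fun x : EReal => (d : EReal) * x) := by
    intro d hd x y hxy
    exact mul_le_mul_of_nonneg_left hxy (by exact_mod_cast hd.le)
  let g : EReal ≃o EReal :=
    { toFun := fun x => (c : EReal) * x
      invFun := fun x => ((c⁻¹ : ℝ) : EReal) * x
      left_inv := fun x => by
        show (↑c⁻¹ : EReal) * ((c:EReal) * x) = x
        rw [← mul_assoc, ← EReal.coe_mul, inv_mul_cancel₀ hc.ne', EReal.coe_one, one_mul]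
      right_inv := fun x => by
        show (↑c : EReal) * ((↑c⁻¹:EReal) * x) = x
        rw [← mul_assoc, ← EReal.coe_mul, mul_inv_cancel₀ hc.ne', EReal.coe_one, one_mul]
      map_rel_iff' := by
        intro x y
        constructor
        · intro h
          have := hmono c⁻¹ (by positivity) h
          simpa [← mul_assoc, ← EReal.coe_mul, inv_mul_cancel₀ hc.ne'] using this
        · intro h; exact hmono c hc h }
  exact (g.limsup_apply).symm

lemma my_geom_le_arith {w₁ w₂ : ℝ} (h1 : 0 < w₁) (h2 : 0 < w₂) (hw : w₁ + w₂ = 1)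
    (p₁ p₂ : ℝ≥0∞) :
    p₁ ^ w₁ * p₂ ^ w₂ ≤ ENNReal.ofReal w₁ * p₁ + ENNReal.ofReal w₂ * p₂ := by
  rcases eq_or_ne p₁ ⊤ with rfl | ht1
  · rcases eq_or_ne p₂ 0 with rfl | h0
    · simp [ENNReal.zero_rpow_of_pos h2]
    · rw [ENNReal.top_rpow_of_pos h1, ENNReal.top_mul (by simp [ENNReal.rpow_eq_zero_iff, h0, h2.le, h2.ne'])]
      rw [ENNReal.mul_top (by simp [ENNReal.ofReal_eq_zero, h1, not_le.mpr h1])]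
      exact le_top.trans_eq (by simp)
  rcases eq_or_ne p₂ ⊤ with rfl | ht2
  · rcases eq_or_ne p₁ 0 with rfl | h0
    · simp [ENNReal.zero_rpow_of_pos h1]
    · rw [ENNReal.top_rpow_of_pos h2, ENNReal.mul_top (by simp [ENNReal.rpow_eq_zero_iff, h0, h1.le, h1.ne'])]
      rw [ENNReal.mul_top (by simp [ENNReal.ofReal_eq_zero, not_le.mpr h2])]
      exact le_top.trans_eq (by simp)
  -- both finite
  lift p₁ to ℝ≥0 using ht1
  lift p₂ to ℝ≥0 using ht2
  have := NNReal.geom_mean_le_arith_mean2_weighted (w₁.toNNReal) (w₂.toNNReal) p₁ p₂ (by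
    have : (w₁.toNNReal : ℝ) + (w₂.toNNReal : ℝ) = 1 := by
      rw [Real.coe_toNNReal _ h1.le, Real.coe_toNNReal _ h2.le]; exact hw
    exact_mod_cast this)
  rw [Real.coe_toNNReal _ h1.le, Real.coe_toNNReal _ h2.le] at this
  calc (p₁ : ℝ≥0∞) ^ w₁ * (p₂ : ℝ≥0∞) ^ w₂
      = ((p₁ ^ w₁ * p₂ ^ w₂ : ℝ≥0) : ℝ≥0∞) := by
        rw [ENNReal.coe_mul, ← ENNReal.coe_rpow_of_nonneg _ h1.le, ← ENNReal.coe_rpow_of_nonneg _ h2.le]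
    _ ≤ ((w₁.toNNReal * p₁ + w₂.toNNReal * p₂ : ℝ≥0) : ℝ≥0∞) := by exact_mod_cast this
    _ = ENNReal.ofReal w₁ * p₁ + ENNReal.ofReal w₂ * p₂ := by
        simp [ENNReal.ofReal, ENNReal.coe_mul]

lemma my_geom_superadd {a : ℝ} (ha : 0 < a) (ha1 : a < 1) (x₁ y₁ x₂ y₂ : ℝ≥0∞) :
    x₁ ^ a * y₁ ^ (1 - a) + x₂ ^ a * y₂ ^ (1 - a) ≤ (x₁ + x₂) ^ a * (y₁ + y₂) ^ (1 - a) := by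
  have ha' : 0 < 1 - a := by linarith
  set X := x₁ + x₂ with hX
  set Y := y₁ + y₂ with hY
  rcases eq_or_ne X 0 with hX0 | hX0
  · obtain ⟨rfl, rfl⟩ := add_eq_zero.mp hX0
    simp [ENNReal.zero_rpow_of_pos ha]
  rcases eq_or_ne Y 0 with hY0 | hY0
  · obtain ⟨rfl, rfl⟩ := add_eq_zero.mp hY0
    simp [ENNReal.zero_rpow_of_pos ha']
  have hne : ∀ (Z : ℝ≥0∞) (b : ℝ), Z ≠ 0 → 0 < b → Z ^ b ≠ 0 := by
    intro Z b h hb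
    rcases eq_or_ne Z ⊤ with rfl | hZt
    · rw [ENNReal.top_rpow_of_pos hb]; simp
    · exact (ENNReal.rpow_pos (h.bot_lt) hZt).ne'
  rcases eq_or_ne X ⊤ with hXt | hXt
  · rw [hXt, ENNReal.top_rpow_of_pos ha, ENNReal.top_mul (hne Y _ hY0 ha')]
    exact le_top
  rcases eq_or_ne Y ⊤ with hYt | hYt
  · rw [hYt, ENNReal.top_rpow_of_pos ha', ENNReal.mul_top (hne X _ hX0 ha)]
    exact le_top
  -- main case
  have key : ∀ x y : ℝ≥0∞, x ≤ X → y ≤ Y →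
      x ^ a * y ^ (1 - a) ≤ X ^ a * Y ^ (1 - a) * (ENNReal.ofReal a * (x / X) + ENNReal.ofReal (1 - a) * (y / Y)) := by
    intro x y hx hy
    have hxe : x = X * (x / X) := (ENNReal.mul_div_cancel hX0 hXt).symm
    calc x ^ a * y ^ (1 - a)
        = (X * (x / X)) ^ a * (Y * (y / Y)) ^ (1 - a) := by
          rw [ENNReal.mul_div_cancel hX0 hXt, ENNReal.mul_div_cancel hY0 hYt]
      _ = X ^ a * Y ^ (1 - a) * ((x / X) ^ a * (y / Y) ^ (1 - a)) := by
          rw [ENNReal.mul_rpow_of_nonneg _ _ ha.le, ENNReal.mul_rpow_of_nonneg _ _ ha'.le]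
          ring
      _ ≤ _ := by
          gcongr
          exact my_geom_le_arith ha ha' (by ring) _ _
  calc x₁ ^ a * y₁ ^ (1 - a) + x₂ ^ a * y₂ ^ (1 - a)
      ≤ X ^ a * Y ^ (1 - a) * (ENNReal.ofReal a * (x₁ / X) + ENNReal.ofReal (1 - a) * (y₁ / Y))
        + X ^ a * Y ^ (1 - a) * (ENNReal.ofReal a * (x₂ / X) + ENNReal.ofReal (1 - a) * (y₂ / Y)) := by
        exact add_le_add (key _ _ le_self_add le_self_add) (key _ _ le_add_self le_add_self)
    _ = X ^ a * Y ^ (1 - a) * (ENNReal.ofReal a * (x₁ / X + x₂ / X) + ENNReal.ofReal (1 - a) * (y₁ / Y + y₂ / Y)) := by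
        ring
    _ = X ^ a * Y ^ (1 - a) := by
        rw [ENNReal.div_add_div_same, ENNReal.div_add_div_same, ← hX, ← hY,
          ENNReal.div_self hX0 hXt, ENNReal.div_self hY0 hYt, mul_one, mul_one,
          ← ENNReal.ofReal_add ha.le ha'.le]
        simp

lemma my_hellingerInt_eq {X : Type*} [MeasurableSpace X] {a : ℝ} (ha : 0 < a) (ha1 : a < 1)
    (P Q ν : Measure X) [IsFiniteMeasure P] [IsFiniteMeasure Q] [SigmaFinite ν]
    (hP : P ≪ ν) (hQ : Q ≪ ν) :
    hellingerInt a P Q = ∫⁻ x, P.rnDeriv ν x ^ a * Q.rnDeriv ν x ^ (1 - a) ∂ν := by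
  have ha' : 0 < 1 - a := by linarith
  have hPQ : P + Q ≪ ν := by
    refine Measure.AbsolutelyContinuous.mk fun s hs h0 => ?_
    simp [hP h0, hQ h0]
  have hPP : P ≪ P + Q := (Measure.le_add_right le_rfl).absolutelyContinuous
  have hQQ : Q ≪ P + Q := (Measure.le_add_left le_rfl).absolutelyContinuous
  have h1 := Measure.rnDeriv_mul_rnDeriv (κ := ν) hPP
  have h2 := Measure.rnDeriv_mul_rnDeriv (κ := ν) hQQ
  have hmt := Measure.rnDeriv_ne_top (P + Q) ν
  have hmeas : AEMeasurable (fun x => P.rnDeriv (P+Q) x ^ a * Q.rnDeriv (P+Q) x ^ (1-a)) ν :=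
    (((P.measurable_rnDeriv (P+Q)).pow_const _).mul
      ((Q.measurable_rnDeriv (P+Q)).pow_const _)).aemeasurable
  rw [hellingerInt, ← lintegral_rnDeriv_mul hPQ hmeas]
  refine lintegral_congr_ae ?_
  filter_upwards [h1, h2, hmt] with x hx1 hx2 hxt
  simp only [Pi.mul_apply] at hx1 hx2
  rcases eq_or_ne ((P+Q).rnDeriv ν x) 0 with h0 | h0
  · simp only [← hx1, ← hx2, h0, zero_mul, mul_zero,
      ENNReal.zero_rpow_of_pos ha, ENNReal.zero_rpow_of_pos ha']
  · rw [← hx1, ← hx2, ENNReal.mul_rpow_of_nonneg _ _ ha.le, ENNReal.mul_rpow_of_nonneg _ _ ha'.le]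
    calc (P+Q).rnDeriv ν x * (P.rnDeriv (P+Q) x ^ a * Q.rnDeriv (P+Q) x ^ (1-a))
        = (P.rnDeriv (P+Q) x ^ a * Q.rnDeriv (P+Q) x ^ (1-a)) * ((P+Q).rnDeriv ν x ^ a * (P+Q).rnDeriv ν x ^ (1-a)) := by
          rw [← ENNReal.rpow_add _ _ h0 hxt]
          norm_num [mul_comm]
      _ = P.rnDeriv (P+Q) x ^ a * (P+Q).rnDeriv ν x ^ a * (Q.rnDeriv (P+Q) x ^ (1-a) * (P+Q).rnDeriv ν x ^ (1-a)) := by ring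

lemma my_hellingerInt_le_one {X : Type*} [MeasurableSpace X] {a : ℝ} (ha : 0 < a) (ha1 : a < 1)
    (P Q : Measure X) [IsProbabilityMeasure P] [IsProbabilityMeasure Q] :
    hellingerInt a P Q ≤ 1 := by
  have ha' : 0 < 1 - a := by linarith
  have hPP : P ≪ P + Q := (Measure.le_add_right le_rfl).absolutelyContinuous
  have hQQ : Q ≪ P + Q := (Measure.le_add_left le_rfl).absolutelyContinuous
  calc hellingerInt a P Q
      ≤ ∫⁻ x, (ENNReal.ofReal a * P.rnDeriv (P+Q) x + ENNReal.ofReal (1-a) * Q.rnDeriv (P+Q) x) ∂(P+Q) := by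
        refine lintegral_mono fun x => ?_
        exact my_geom_le_arith ha ha' (by ring) _ _
    _ = ENNReal.ofReal a * ∫⁻ x, P.rnDeriv (P+Q) x ∂(P+Q)
        + ENNReal.ofReal (1-a) * ∫⁻ x, Q.rnDeriv (P+Q) x ∂(P+Q) := by
        rw [lintegral_add_left (by fun_prop), lintegral_const_mul _ (P.measurable_rnDeriv _),
          lintegral_const_mul _ (Q.measurable_rnDeriv _)]
    _ ≤ 1 := by
        rw [Measure.lintegral_rnDeriv hPP, Measure.lintegral_rnDeriv hQQ]
        simp only [measure_univ, mul_one]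
        rw [← ENNReal.ofReal_add ha.le ha'.le]
        norm_num

lemma my_renyiSimple_nonneg {X : Type*} [MeasurableSpace X] {a : ℝ} (ha : 0 < a) (ha1 : a < 1)
    (P Q : Measure X) [IsProbabilityMeasure P] [IsProbabilityMeasure Q] :
    0 ≤ renyiSimple a P Q := by
  have hc : (0:ℝ) ≤ -(a - 1)⁻¹ := by
    have : (a - 1)⁻¹ < 0 := inv_lt_zero.mpr (by linarith)
    linarith
  have hL : ENNReal.log (hellingerInt a P Q) ≤ 0 :=
    ENNReal.log_le_zero_iff.mpr (my_hellingerInt_le_one ha ha1 P Q)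
  have h1 : (0:EReal) ≤ ((-(a - 1)⁻¹ : ℝ) : EReal) := by exact_mod_cast hc
  have h2 : (0:EReal) ≤ -(ENNReal.log (hellingerInt a P Q)) := by
    apply EReal.le_neg_of_le_neg; simpa using hL
  have := mul_nonneg h1 h2
  rwa [EReal.coe_neg, neg_mul_neg] at this

lemma my_renyiSimple_convex {X : Type*} [MeasurableSpace X] {a : ℝ} (ha : 0 < a) (ha1 : a < 1)
    (P₀ P₁ Q₀ Q₁ : Measure X)
    [IsProbabilityMeasure P₀] [IsProbabilityMeasure P₁]
    [IsProbabilityMeasure Q₀] [IsProbabilityMeasure Q₁]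
    {l : ℝ≥0∞} (hl0 : 0 < l) (hl1 : l < 1) :
    renyiSimple a ((1 - l) • P₀ + l • P₁) ((1 - l) • Q₀ + l • Q₁)
      ≤ ((1 - l : ℝ≥0∞) : EReal) * renyiSimple a P₀ Q₀ + (l : EReal) * renyiSimple a P₁ Q₁ := by
  have ha' : 0 < 1 - a := by linarith
  have hlt : l ≠ ⊤ := (hl1.trans_le le_top).ne
  set k : ℝ≥0∞ := 1 - l with hk
  have hk0 : k ≠ 0 := (tsub_pos_of_lt hl1).ne'
  have hkt : k ≠ ⊤ := (tsub_le_self.trans_lt (by norm_num : (1:ℝ≥0∞) < ⊤)).ne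
  have hkl : k + l = 1 := tsub_add_cancel_of_le hl1.le
  set MP := k • P₀ + l • P₁ with hMP
  set MQ := k • Q₀ + l • Q₁ with hMQ
  haveI : IsProbabilityMeasure MP := by
    constructor
    simp [hMP, Measure.add_apply, Measure.smul_apply, hkl]
  haveI : IsProbabilityMeasure MQ := by
    constructor
    simp [hMQ, Measure.add_apply, Measure.smul_apply, hkl]
  haveI : IsFiniteMeasure (k • P₀) := ⟨by simpa [lt_top_iff_ne_top] using hkt⟩
  haveI : IsFiniteMeasure (l • P₁) := ⟨by simpa [lt_top_iff_ne_top] using hlt⟩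
  haveI : IsFiniteMeasure (k • Q₀) := ⟨by simpa [lt_top_iff_ne_top] using hkt⟩
  haveI : IsFiniteMeasure (l • Q₁) := ⟨by simpa [lt_top_iff_ne_top] using hlt⟩
  set ν : Measure X := MP + MQ with hν
  -- absolute continuity
  have habs : ∀ (μ : Measure X) (c : ℝ≥0∞), c ≠ 0 → c • μ ≤ ν → μ ≪ ν := by
    intro μ c hc hle
    refine Measure.AbsolutelyContinuous.mk fun s hs h0 => ?_
    have := (hle s).trans_eq h0
    simp only [Measure.smul_apply, smul_eq_mul, nonpos_iff_eq_zero, mul_eq_zero] at this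
    tauto
  have hP₀ : P₀ ≪ ν := habs P₀ k hk0
    ((Measure.le_add_right le_rfl).trans (Measure.le_add_right le_rfl))
  have hP₁ : P₁ ≪ ν := habs P₁ l hl0.ne'
    ((Measure.le_add_left le_rfl).trans (Measure.le_add_right le_rfl))
  have hQ₀ : Q₀ ≪ ν := habs Q₀ k hk0
    ((Measure.le_add_right le_rfl).trans (Measure.le_add_left le_rfl))
  have hQ₁ : Q₁ ≪ ν := habs Q₁ l hl0.ne'
    ((Measure.le_add_left le_rfl).trans (Measure.le_add_left le_rfl))
  set H₀ := hellingerInt a P₀ Q₀ with hH₀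
  set H₁ := hellingerInt a P₁ Q₁ with hH₁
  set H := hellingerInt a MP MQ with hHdef
  -- key integral inequality
  have hH : k * H₀ + l * H₁ ≤ H := by
    rw [hH₀, hH₁, my_hellingerInt_eq ha ha1 P₀ Q₀ ν hP₀ hQ₀,
      my_hellingerInt_eq ha ha1 P₁ Q₁ ν hP₁ hQ₁, hHdef, hellingerInt]
    rw [← lintegral_const_mul _ (by fun_prop), ← lintegral_const_mul _ (by fun_prop),
      ← lintegral_add_left (by fun_prop)]
    have hdP : MP.rnDeriv ν =ᵐ[ν] fun x => k * P₀.rnDeriv ν x + l * P₁.rnDeriv ν x := by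
      filter_upwards [Measure.rnDeriv_add' (k • P₀) (l • P₁) ν,
        Measure.rnDeriv_smul_left_of_ne_top P₀ ν hkt,
        Measure.rnDeriv_smul_left_of_ne_top P₁ ν hlt] with x h1 h2 h3
      rw [hMP, h1, Pi.add_apply, h2, h3]
      simp
    have hdQ : MQ.rnDeriv ν =ᵐ[ν] fun x => k * Q₀.rnDeriv ν x + l * Q₁.rnDeriv ν x := by
      filter_upwards [Measure.rnDeriv_add' (k • Q₀) (l • Q₁) ν,
        Measure.rnDeriv_smul_left_of_ne_top Q₀ ν hkt,
        Measure.rnDeriv_smul_left_of_ne_top Q₁ ν hlt] with x h1 h2 h3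
      rw [hMQ, h1, Pi.add_apply, h2, h3]
      simp
    refine lintegral_mono_ae ?_
    filter_upwards [hdP, hdQ] with x hx1 hx2
    rw [hx1, hx2]
    have e₀ : k * (P₀.rnDeriv ν x ^ a * Q₀.rnDeriv ν x ^ (1 - a))
        = (k * P₀.rnDeriv ν x) ^ a * (k * Q₀.rnDeriv ν x) ^ (1 - a) := by
      rw [ENNReal.mul_rpow_of_nonneg _ _ ha.le, ENNReal.mul_rpow_of_nonneg _ _ ha'.le,
        mul_mul_mul_comm, ← ENNReal.rpow_add _ _ hk0 hkt]
      norm_num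
    have e₁ : l * (P₁.rnDeriv ν x ^ a * Q₁.rnDeriv ν x ^ (1 - a))
        = (l * P₁.rnDeriv ν x) ^ a * (l * Q₁.rnDeriv ν x) ^ (1 - a) := by
      rw [ENNReal.mul_rpow_of_nonneg _ _ ha.le, ENNReal.mul_rpow_of_nonneg _ _ ha'.le,
        mul_mul_mul_comm, ← ENNReal.rpow_add _ _ hl0.ne' hlt]
      norm_num
    rw [e₀, e₁]
    exact my_geom_superadd ha ha1 _ _ _ _
  -- weights
  set w₀ : ℝ := k.toReal with hw₀
  set w₁ : ℝ := l.toReal with hw₁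
  have hw₀pos : 0 < w₀ := ENNReal.toReal_pos hk0 hkt
  have hw₁pos : 0 < w₁ := ENNReal.toReal_pos hl0.ne' hlt
  have hwsum : w₀ + w₁ = 1 := by
    rw [hw₀, hw₁, ← ENNReal.toReal_add hkt hlt, hkl, ENNReal.toReal_one]
  have hofk : ENNReal.ofReal w₀ = k := ENNReal.ofReal_toReal hkt
  have hofl : ENNReal.ofReal w₁ = l := ENNReal.ofReal_toReal hlt
  -- AM-GM
  have hgeom : H₀ ^ w₀ * H₁ ^ w₁ ≤ H := by
    refine le_trans ?_ hH
    rw [← hofk, ← hofl] at *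
    exact my_geom_le_arith hw₀pos hw₁pos hwsum H₀ H₁
  -- coefficient
  set c : ℝ := (a - 1)⁻¹ with hc
  have hcneg : c < 0 := inv_lt_zero.mpr (by linarith)
  -- coe weights to EReal
  have hkE : ((k : ℝ≥0∞) : EReal) = ((w₀ : ℝ) : EReal) := by
    rw [← hofk, EReal.coe_ennreal_ofReal, max_eq_left hw₀pos.le]
  have hlE : ((l : ℝ≥0∞) : EReal) = ((w₁ : ℝ) : EReal) := by
    rw [← hofl, EReal.coe_ennreal_ofReal, max_eq_left hw₁pos.le]
  show ((c:ℝ):EReal) * ENNReal.log H ≤ (k : EReal) * renyiSimple a P₀ Q₀ + (l : EReal) * renyiSimple a P₁ Q₁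
  have hr₁nonneg : (0:EReal) ≤ renyiSimple a P₁ Q₁ := my_renyiSimple_nonneg ha ha1 P₁ Q₁
  have hr₀nonneg : (0:EReal) ≤ renyiSimple a P₀ Q₀ := my_renyiSimple_nonneg ha ha1 P₀ Q₀
  rcases eq_or_ne H₀ 0 with h00 | h00
  · have : renyiSimple a P₀ Q₀ = ⊤ := by
      rw [renyiSimple, ← hH₀, h00, ENNReal.log_zero, ← hc, EReal.coe_mul_bot_of_neg hcneg]
    rw [this, hkE, EReal.coe_mul_top_of_pos hw₀pos, EReal.top_add_of_ne_bot]
    · exact le_top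
    · intro hbot
      exact absurd (hbot ▸ mul_nonneg (by exact_mod_cast EReal.coe_ennreal_nonneg l) hr₁nonneg)
        (by simp)
  rcases eq_or_ne H₁ 0 with h10 | h10
  · have : renyiSimple a P₁ Q₁ = ⊤ := by
      rw [renyiSimple, ← hH₁, h10, ENNReal.log_zero, ← hc, EReal.coe_mul_bot_of_neg hcneg]
    rw [this, hlE, EReal.coe_mul_top_of_pos hw₁pos, EReal.add_top_of_ne_bot]
    · exact le_top
    · intro hbot
      exact absurd (hbot ▸ mul_nonneg (by exact_mod_cast EReal.coe_ennreal_nonneg k) hr₀nonneg)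
        (by simp)
  -- main case: all positive and finite
  have hH₀le : H₀ ≤ 1 := my_hellingerInt_le_one ha ha1 P₀ Q₀
  have hH₁le : H₁ ≤ 1 := my_hellingerInt_le_one ha ha1 P₁ Q₁
  have hHle : H ≤ 1 := my_hellingerInt_le_one ha ha1 MP MQ
  have hH₀t : H₀ ≠ ⊤ := (hH₀le.trans_lt (by norm_num)).ne
  have hH₁t : H₁ ≠ ⊤ := (hH₁le.trans_lt (by norm_num)).ne
  have hHt : H ≠ ⊤ := (hHle.trans_lt (by norm_num)).ne
  have hHpos : H ≠ 0 := by
    intro h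
    rw [h, le_zero_iff] at hgeom
    rcases mul_eq_zero.mp hgeom with h' | h'
    · exact h00 (by simpa [ENNReal.rpow_eq_zero_iff, hH₀t, hw₀pos, hw₀pos.le] using h')
    · exact h10 (by simpa [ENNReal.rpow_eq_zero_iff, hH₁t, hw₁pos, hw₁pos.le] using h')
  set r₀ : ℝ := Real.log H₀.toReal with hr₀
  set r₁ : ℝ := Real.log H₁.toReal with hr₁
  set r : ℝ := Real.log H.toReal with hrr
  have hL₀ : ENNReal.log H₀ = (r₀ : EReal) :=
    ENNReal.log_pos_real' (ENNReal.toReal_pos h00 hH₀t)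
  have hL₁ : ENNReal.log H₁ = (r₁ : EReal) :=
    ENNReal.log_pos_real' (ENNReal.toReal_pos h10 hH₁t)
  have hL : ENNReal.log H = (r : EReal) :=
    ENNReal.log_pos_real' (ENNReal.toReal_pos hHpos hHt)
  -- real inequality
  have hreal : w₀ * r₀ + w₁ * r₁ ≤ r := by
    have h1 : H₀.toReal ^ w₀ * H₁.toReal ^ w₁ ≤ H.toReal := by
      rw [ENNReal.toReal_rpow, ENNReal.toReal_rpow, ← ENNReal.toReal_mul]
      exact ENNReal.toReal_mono hHt hgeom
    have h₀pos : 0 < H₀.toReal := ENNReal.toReal_pos h00 hH₀t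
    have h₁pos : 0 < H₁.toReal := ENNReal.toReal_pos h10 hH₁t
    calc w₀ * r₀ + w₁ * r₁ = Real.log (H₀.toReal ^ w₀ * H₁.toReal ^ w₁) := by
          rw [Real.log_mul (by positivity) (by positivity), Real.log_rpow h₀pos,
            Real.log_rpow h₁pos]
      _ ≤ r := Real.log_le_log (by positivity) h1
  rw [renyiSimple, renyiSimple, ← hH₀, ← hH₁, hL₀, hL₁, hL, hkE, hlE, ← hc]
  have hfin : c * r ≤ w₀ * (c * r₀) + w₁ * (c * r₁) := by
    nlinarith [mul_le_mul_of_nonpos_left hreal hcneg.le]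
  exact_mod_cast hfin

lemma my_limsup_combo {F : Filter ℝ} [F.NeBot] (f g h : ℝ → EReal) {w₀ w₁ : ℝ}
    (hw₀ : 0 < w₀) (hw₁ : 0 < w₁)
    (hev : ∀ᶠ a in F, h a ≤ (w₀ : EReal) * f a + (w₁ : EReal) * g a ∧ 0 ≤ f a ∧ 0 ≤ g a) :
    Filter.limsup h F ≤ (w₀ : EReal) * Filter.limsup f F + (w₁ : EReal) * Filter.limsup g F := by
  have h0f : (0:EReal) ≤ Filter.limsup (fun a => (w₀ : EReal) * f a) F :=
    le_limsup_of_frequently_le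
      ((hev.mono fun a ha => mul_nonneg (by exact_mod_cast hw₀.le) ha.2.1).frequently)
  have h0g : (0:EReal) ≤ Filter.limsup (fun a => (w₁ : EReal) * g a) F :=
    le_limsup_of_frequently_le
      ((hev.mono fun a ha => mul_nonneg (by exact_mod_cast hw₁.le) ha.2.2).frequently)
  calc Filter.limsup h F
      ≤ Filter.limsup (fun a => (w₀ : EReal) * f a + (w₁ : EReal) * g a) F :=
        Filter.limsup_le_limsup (hev.mono fun a ha => ha.1)
    _ ≤ Filter.limsup (fun a => (w₀ : EReal) * f a) F
        + Filter.limsup (fun a => (w₁ : EReal) * g a) F :=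
        EReal.limsup_add_le
          (Or.inl (((bot_lt_iff_ne_bot.mpr (by simp)).trans_le h0f).ne'))
          (Or.inr (((bot_lt_iff_ne_bot.mpr (by simp)).trans_le h0g).ne'))
    _ = _ := by rw [my_limsup_const_mul f hw₀, my_limsup_const_mul g hw₁]


lemma my_limsup_main {X : Type*} [MeasurableSpace X]
    (P₀ P₁ Q₀ Q₁ : Measure X)
    [IsProbabilityMeasure P₀] [IsProbabilityMeasure P₁]
    [IsProbabilityMeasure Q₀] [IsProbabilityMeasure Q₁]
    {l : ℝ≥0∞} (hl0 : 0 < l) (hl1 : l < 1) {F : Filter ℝ} [F.NeBot]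
    (hev : ∀ᶠ a in F, 0 < a ∧ a < 1) :
    Filter.limsup (fun a => renyiSimple a ((1 - l) • P₀ + l • P₁) ((1 - l) • Q₀ + l • Q₁)) F
      ≤ ((1 - l : ℝ≥0∞) : EReal) * Filter.limsup (fun a => renyiSimple a P₀ Q₀) F
        + (l : EReal) * Filter.limsup (fun a => renyiSimple a P₁ Q₁) F := by
  have hlt : l ≠ ⊤ := (hl1.trans_le le_top).ne
  have hk0 : (1 - l : ℝ≥0∞) ≠ 0 := (tsub_pos_of_lt hl1).ne'
  have hkt : (1 - l : ℝ≥0∞) ≠ ⊤ := (tsub_le_self.trans_lt (by norm_num : (1:ℝ≥0∞) < ⊤)).ne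
  have hw₀pos : 0 < (1 - l : ℝ≥0∞).toReal := ENNReal.toReal_pos hk0 hkt
  have hw₁pos : 0 < l.toReal := ENNReal.toReal_pos hl0.ne' hlt
  have hkE : ((1 - l : ℝ≥0∞) : EReal) = (((1 - l : ℝ≥0∞).toReal : ℝ) : EReal) := by
    rw [← ENNReal.ofReal_toReal hkt, EReal.coe_ennreal_ofReal, max_eq_left ENNReal.toReal_nonneg,
      ENNReal.ofReal_toReal hkt]
  have hlE : ((l : ℝ≥0∞) : EReal) = ((l.toReal : ℝ) : EReal) := by
    rw [← ENNReal.ofReal_toReal hlt, EReal.coe_ennreal_ofReal, max_eq_left ENNReal.toReal_nonneg,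
      ENNReal.ofReal_toReal hlt]
  rw [hkE, hlE]
  refine my_limsup_combo _ _ _ hw₀pos hw₁pos (hev.mono fun a ha => ⟨?_, ?_, ?_⟩)
  · have := my_renyiSimple_convex ha.1 ha.2 P₀ P₁ Q₀ Q₁ hl0 hl1
    rwa [hkE, hlE] at this
  · exact my_renyiSimple_nonneg ha.1 ha.2 _ _
  · exact my_renyiSimple_nonneg ha.1 ha.2 _ _

/-- **Joint convexity for orders `α ∈ [0,1]`.** For any two pairs `(P₀,Q₀)` and
`(P₁,Q₁)` of probability distributions and any `0 < l < 1`,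
`D_α((1-l)P₀ + lP₁ ‖ (1-l)Q₀ + lQ₁) ≤ (1-l) D_α(P₀‖Q₀) + l D_α(P₁‖Q₁)`. -/
theorem renyiDiv_jointly_convex
    {X : Type*} [MeasurableSpace X] (α : ℝ≥0∞) (hα : α ≤ 1)
    (P₀ P₁ Q₀ Q₁ : Measure X)
    [IsProbabilityMeasure P₀] [IsProbabilityMeasure P₁]
    [IsProbabilityMeasure Q₀] [IsProbabilityMeasure Q₁]
    (l : ℝ≥0∞) (hl0 : 0 < l) (hl1 : l < 1) :
    renyiDiv α ((1 - l) • P₀ + l • P₁) ((1 - l) • Q₀ + l • Q₁)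
      ≤ ((1 - l : ℝ≥0∞) : EReal) * renyiDiv α P₀ Q₀
        + (l : EReal) * renyiDiv α P₁ Q₁ := by
  rcases eq_or_ne α 0 with rfl | hα0
  · simp only [renyiDiv, if_pos rfl]
    exact my_limsup_main P₀ P₁ Q₀ Q₁ hl0 hl1
      (eventually_of_mem (Ioo_mem_nhdsGT_of_mem ⟨le_refl (0:ℝ), zero_lt_one⟩)
        (fun a ha => ⟨ha.1, ha.2⟩))
  rcases eq_or_ne α 1 with rfl | hα1
  · simp only [renyiDiv, if_neg one_ne_zero, if_pos rfl]
    exact my_limsup_main P₀ P₁ Q₀ Q₁ hl0 hl1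
      (eventually_of_mem (Ioo_mem_nhdsLT_of_mem ⟨zero_lt_one, le_refl (1:ℝ)⟩)
        (fun a ha => ⟨ha.1, ha.2⟩))
  · have hαt : α ≠ ∞ := (hα.trans_lt (by norm_num : (1:ℝ≥0∞) < ⊤)).ne
    simp only [renyiDiv, if_neg hα0, if_neg hα1, if_neg hαt]
    have h1 : 0 < α.toReal := ENNReal.toReal_pos hα0 hαt
    have h2 : α.toReal < 1 := by
      have : α < 1 := lt_of_le_of_ne hα hα1
      have := (ENNReal.toReal_lt_toReal hαt (by norm_num : (1:ℝ≥0∞) ≠ ⊤)).mpr this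
      simpa using this
    exact my_renyiSimple_convex h1 h2 P₀ P₁ Q₀ Q₁ hl0 hl1
end

section
/- For any orders 0 < α ≤ β < 1 and any probability measures P, Q on a measurable space, (α/β)·((1−β)/(1−α))·D_β(P‖Q) ≤ D_α(P‖Q) ≤ D_β(P‖Q). Consequently, for orders in (0,1), the Rényi divergences of distinct orders are all within constant multiplicative factors of each other. -/
open MeasureTheory Real Filter Set
open scoped ENNReal NNReal Topology Classical

/-- Weighted Hölder inequality for lower integrals. -/
private lemma holder_theta {X : Type*} [MeasurableSpace X] (μ : Measure X)
    {g h : X → ℝ≥0∞} (hg : Measurable g) (hh : Measurable h)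
    {θ : ℝ} (hθ0 : 0 < θ) (hθ1 : θ ≤ 1) :
    ∫⁻ x, g x ^ θ * h x ^ (1 - θ) ∂μ
      ≤ (∫⁻ x, g x ∂μ) ^ θ * (∫⁻ x, h x ∂μ) ^ (1 - θ) := by
  rcases eq_or_lt_of_le hθ1 with rfl | hθ1'
  · simp
  · have hθ1'' : 0 < 1 - θ := by linarith
    have hpq : (1/θ).HolderConjugate (1/(1-θ)) := by
      constructor
      · simp only [one_div, inv_inv, inv_one]; ring
      · exact one_div_pos.mpr hθ0
      · exact one_div_pos.mpr hθ1''
    have H := ENNReal.lintegral_mul_le_Lp_mul_Lq μ hpq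
      (f := fun x => g x ^ θ) (g := fun x => h x ^ (1-θ))
      (hg.pow_const θ).aemeasurable (hh.pow_const (1-θ)).aemeasurable
    simp only [Pi.mul_apply] at H
    have e1 : ∀ x, (g x ^ θ) ^ (1/θ) = g x := by
      intro x
      rw [← ENNReal.rpow_mul, mul_one_div_cancel hθ0.ne', ENNReal.rpow_one]
    have e2 : ∀ x, (h x ^ (1-θ)) ^ (1/(1-θ)) = h x := by
      intro x
      rw [← ENNReal.rpow_mul, mul_one_div_cancel hθ1''.ne', ENNReal.rpow_one]
    simp only [e1, e2, one_div_one_div] at H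
    exact H

private lemma lintegral_rnDeriv_one_left {X : Type*} [MeasurableSpace X]
    (P Q : Measure X) [IsProbabilityMeasure P] [IsProbabilityMeasure Q] :
    ∫⁻ x, P.rnDeriv (P + Q) x ∂(P + Q) = 1 := by
  have hP : P ≪ P + Q := Measure.AbsolutelyContinuous.rfl.add_right Q
  rw [Measure.lintegral_rnDeriv hP, measure_univ]

private lemma lintegral_rnDeriv_one_right {X : Type*} [MeasurableSpace X]
    (P Q : Measure X) [IsProbabilityMeasure P] [IsProbabilityMeasure Q] :
    ∫⁻ x, Q.rnDeriv (P + Q) x ∂(P + Q) = 1 := by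
  have hQ : Q ≪ P + Q := by
    rw [add_comm]; exact Measure.AbsolutelyContinuous.rfl.add_right P
  rw [Measure.lintegral_rnDeriv hQ, measure_univ]

private lemma hellinger_holder_left {X : Type*} [MeasurableSpace X]
    (P Q : Measure X) [IsProbabilityMeasure P] [IsProbabilityMeasure Q]
    {α β : ℝ} (hα : 0 < α) (hαβ : α ≤ β) (hβ : β < 1) :
    hellingerInt α P Q ≤ hellingerInt β P Q ^ (α/β) := by
  set μ := P + Q
  set p := P.rnDeriv μ with hp
  set q := Q.rnDeriv μ with hq
  have hpm : Measurable p := Measure.measurable_rnDeriv P μ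
  have hqm : Measurable q := Measure.measurable_rnDeriv Q μ
  set θ := α / β with hθ
  have hβ0 : 0 < β := lt_of_lt_of_le hα hαβ
  have hθ0 : 0 < θ := div_pos hα hβ0
  have hθ1 : θ ≤ 1 := by rw [div_le_one hβ0]; exact hαβ
  have e1 : β * θ = α := by rw [hθ]; field_simp [hβ0.ne']
  have e2 : (1-β)*θ + (1-θ) = 1 - α := by
    have h' : β * θ = α := e1
    nlinarith [h']
  have hpt : ∀ x, p x ^ α * q x ^ (1-α)
      = (p x ^ β * q x ^ (1-β)) ^ θ * q x ^ (1-θ) := by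
    intro x
    rw [ENNReal.mul_rpow_of_nonneg _ _ hθ0.le, ← ENNReal.rpow_mul, ← ENNReal.rpow_mul,
      mul_assoc, ← ENNReal.rpow_add_of_nonneg _ _ (by nlinarith) (by linarith),
      e1, e2]
  have key := holder_theta μ ((hpm.pow_const β).mul (hqm.pow_const (1-β))) hqm hθ0 hθ1
  calc hellingerInt α P Q
      = ∫⁻ x, (p x ^ β * q x ^ (1-β)) ^ θ * q x ^ (1-θ) ∂μ := by
        unfold hellingerInt; exact lintegral_congr fun x => hpt x
    _ ≤ (∫⁻ x, p x ^ β * q x ^ (1-β) ∂μ) ^ θ * (∫⁻ x, q x ∂μ) ^ (1-θ) := key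
    _ = hellingerInt β P Q ^ θ := by
        rw [lintegral_rnDeriv_one_right P Q, ENNReal.one_rpow, mul_one]; rfl

private lemma hellinger_holder_right {X : Type*} [MeasurableSpace X]
    (P Q : Measure X) [IsProbabilityMeasure P] [IsProbabilityMeasure Q]
    {α β : ℝ} (hα : 0 < α) (hαβ : α ≤ β) (hβ : β < 1) :
    hellingerInt β P Q ≤ hellingerInt α P Q ^ ((1-β)/(1-α)) := by
  set μ := P + Q
  set p := P.rnDeriv μ with hp
  set q := Q.rnDeriv μ with hq
  have hpm : Measurable p := Measure.measurable_rnDeriv P μ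
  have hqm : Measurable q := Measure.measurable_rnDeriv Q μ
  have hα1 : α < 1 := lt_of_le_of_lt hαβ hβ
  set θ := (1-β) / (1-α) with hθ
  have hθ0 : 0 < θ := div_pos (by linarith) (by linarith)
  have hθ1 : θ ≤ 1 := by rw [div_le_one (by linarith)]; linarith
  have h1a : (1:ℝ) - α ≠ 0 := by intro h; linarith
  have e1 : (1-α) * θ = 1 - β := by rw [hθ]; field_simp
  have e2 : α*θ + (1-θ) = β := by nlinarith [e1]
  have hpt : ∀ x, p x ^ β * q x ^ (1-β)
      = (p x ^ α * q x ^ (1-α)) ^ θ * p x ^ (1-θ) := by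
    intro x
    rw [ENNReal.mul_rpow_of_nonneg _ _ hθ0.le, ← ENNReal.rpow_mul, ← ENNReal.rpow_mul,
      mul_right_comm, ← ENNReal.rpow_add_of_nonneg _ _ (by nlinarith) (by linarith),
      e1, e2]
  have key := holder_theta μ ((hpm.pow_const α).mul (hqm.pow_const (1-α))) hpm hθ0 hθ1
  calc hellingerInt β P Q
      = ∫⁻ x, (p x ^ α * q x ^ (1-α)) ^ θ * p x ^ (1-θ) ∂μ := by
        unfold hellingerInt; exact lintegral_congr fun x => hpt x
    _ ≤ (∫⁻ x, p x ^ α * q x ^ (1-α) ∂μ) ^ θ * (∫⁻ x, p x ∂μ) ^ (1-θ) := key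
    _ = hellingerInt α P Q ^ θ := by
        rw [lintegral_rnDeriv_one_left P Q, ENNReal.one_rpow, mul_one]; rfl

private lemma hellinger_le_one {X : Type*} [MeasurableSpace X]
    (P Q : Measure X) [IsProbabilityMeasure P] [IsProbabilityMeasure Q]
    {s : ℝ} (hs0 : 0 < s) (hs1 : s < 1) :
    hellingerInt s P Q ≤ 1 := by
  have h := holder_theta (P+Q) (Measure.measurable_rnDeriv P (P+Q))
    (Measure.measurable_rnDeriv Q (P+Q)) hs0 hs1.le
  rw [lintegral_rnDeriv_one_left P Q, lintegral_rnDeriv_one_right P Q,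
    ENNReal.one_rpow, ENNReal.one_rpow, mul_one] at h
  exact h

/-- **All orders in `(0,1)` are equivalent.** For `0 < α ≤ β < 1`,
`(α/β)·((1-β)/(1-α))·D_β(P‖Q) ≤ D_α(P‖Q) ≤ D_β(P‖Q)`. -/
theorem renyiDiv_orders_equivalent
    {X : Type*} [MeasurableSpace X] (P Q : Measure X)
    [IsProbabilityMeasure P] [IsProbabilityMeasure Q]
    (α β : ℝ) (hα : 0 < α) (hαβ : α ≤ β) (hβ : β < 1) :
    ((α / β * ((1 - β) / (1 - α)) : ℝ) : EReal) * renyiSimple β P Q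
        ≤ renyiSimple α P Q ∧
    renyiSimple α P Q ≤ renyiSimple β P Q := by
  have hβ0 : 0 < β := lt_of_lt_of_le hα hαβ
  have hα1 : α < 1 := lt_of_le_of_lt hαβ hβ
  have hL := hellinger_holder_left P Q hα hαβ hβ
  have hR := hellinger_holder_right P Q hα hαβ hβ
  have hA1 : hellingerInt α P Q ≤ 1 := hellinger_le_one P Q hα hα1
  have hB1 : hellingerInt β P Q ≤ 1 := hellinger_le_one P Q hβ0 hβ
  by_cases hB0 : hellingerInt β P Q = 0
  · -- then both Hellinger integrals vanish, and both divergences are ⊤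
    have hA0 : hellingerInt α P Q = 0 := by
      refine le_antisymm ?_ (zero_le)
      calc hellingerInt α P Q ≤ hellingerInt β P Q ^ (α/β) := hL
        _ = 0 := by rw [hB0, ENNReal.zero_rpow_of_pos (div_pos hα hβ0)]
    have hDα : renyiSimple α P Q = ⊤ := by
      rw [renyiSimple, hA0, ENNReal.log_zero,
        EReal.coe_mul_bot_of_neg (by rw [inv_neg'']; linarith)]
    have hDβ : renyiSimple β P Q = ⊤ := by
      rw [renyiSimple, hB0, ENNReal.log_zero,
        EReal.coe_mul_bot_of_neg (by rw [inv_neg'']; linarith)]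
    constructor
    · rw [hDα]; exact le_top
    · rw [hDα, hDβ]
  · -- nondegenerate case: everything is a real number
    have hA0 : hellingerInt α P Q ≠ 0 := by
      intro h
      apply hB0
      refine le_antisymm ?_ (zero_le)
      calc hellingerInt β P Q ≤ hellingerInt α P Q ^ ((1-β)/(1-α)) := hR
        _ = 0 := by rw [h, ENNReal.zero_rpow_of_pos (div_pos (by linarith) (by linarith))]
    have hAt : hellingerInt α P Q ≠ ⊤ := by
      intro h; rw [h] at hA1
      exact (lt_irrefl _ (lt_of_le_of_lt hA1 ENNReal.one_lt_top)).elim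
    have hBt : hellingerInt β P Q ≠ ⊤ := by
      intro h; rw [h] at hB1
      exact (lt_irrefl _ (lt_of_le_of_lt hB1 ENNReal.one_lt_top)).elim
    set A := (hellingerInt α P Q).toReal with hA
    set B := (hellingerInt β P Q).toReal with hBdef
    have hApos : 0 < A := ENNReal.toReal_pos hA0 hAt
    have hBpos : 0 < B := ENNReal.toReal_pos hB0 hBt
    set a := Real.log A with ha
    set b := Real.log B with hb
    have hlogα : ENNReal.log (hellingerInt α P Q) = (a : EReal) :=
      ENNReal.log_pos_real hA0 hAt
    have hlogβ : ENNReal.log (hellingerInt β P Q) = (b : EReal) :=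
      ENNReal.log_pos_real hB0 hBt
    -- real inequalities from the Hölder estimates
    have hab : a ≤ (α/β) * b := by
      have h1 : A ≤ B ^ (α/β) := by
        rw [hA, hBdef, ENNReal.toReal_rpow]
        exact ENNReal.toReal_mono
          (ENNReal.rpow_ne_top_of_nonneg (div_nonneg hα.le hβ0.le) hBt) hL
      calc a = Real.log A := ha
        _ ≤ Real.log (B ^ (α/β)) := Real.log_le_log hApos h1
        _ = (α/β) * Real.log B := Real.log_rpow hBpos _
        _ = (α/β) * b := rfl
    have hba : b ≤ ((1-β)/(1-α)) * a := by
      have h1 : B ≤ A ^ ((1-β)/(1-α)) := by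
        rw [hA, hBdef, ENNReal.toReal_rpow]
        exact ENNReal.toReal_mono
          (ENNReal.rpow_ne_top_of_nonneg (div_nonneg (by linarith) (by linarith)) hAt) hR
      calc b = Real.log B := hb
        _ ≤ Real.log (A ^ ((1-β)/(1-α))) := Real.log_le_log hBpos h1
        _ = ((1-β)/(1-α)) * Real.log A := Real.log_rpow hApos _
        _ = ((1-β)/(1-α)) * a := rfl
    rw [renyiSimple, renyiSimple, hlogα, hlogβ, ← EReal.coe_mul, ← EReal.coe_mul,
      ← EReal.coe_mul]
    have hαne : α - 1 ≠ 0 := by linarith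
    have hβne : β - 1 ≠ 0 := by linarith
    constructor
    · rw [EReal.coe_le_coe_iff]
      have step : (α-1)⁻¹ * ((α/β) * b) ≤ (α-1)⁻¹ * a :=
        mul_le_mul_of_nonpos_left hab (by rw [inv_nonpos]; linarith)
      have eqn : α / β * ((1 - β) / (1 - α)) * ((β - 1)⁻¹ * b)
          = (α-1)⁻¹ * ((α/β) * b) := by
        have h1a : (1:ℝ) - α ≠ 0 := by intro h; apply hαne; linarith
        have h1b : (1:ℝ) - β ≠ 0 := by intro h; apply hβne; linarith
        field_simp [hβ0.ne', h1a, h1b]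
        ring
      rw [eqn]; exact step
    · rw [EReal.coe_le_coe_iff]
      have step : (β-1)⁻¹ * (((1-β)/(1-α)) * a) ≤ (β-1)⁻¹ * b :=
        mul_le_mul_of_nonpos_left hba (by rw [inv_nonpos]; linarith)
      have eqn : (β-1)⁻¹ * (((1-β)/(1-α)) * a) = (α-1)⁻¹ * a := by
        have h1a : (1:ℝ) - α ≠ 0 := by intro h; apply hαne; linarith
        have h1b : (1:ℝ) - β ≠ 0 := by intro h; apply hβne; linarith
        field_simp [h1a, h1b]
        ring
      rw [← eqn]; exact step
end

section
/- Let α ∈ (0,1). For all probability measures P₁, Q₁, P₂, Q₂ on a measurable space (X, 𝓐) dominated by a common σ-finite measure μ, and every ε > 0, the Hellinger integrals satisfy |∫ p₁^α q₁^{1−α} dμ − ∫ p₂^α q₂^{1−α} dμ| ≤ ε^α + ε^{α−1}·V(P₁,P₂) + ε^{1−α} + ε^{−α}·V(Q₁,Q₂), where V denotes total variation distance. Consequently, the map (P,Q) ↦ D_α(P‖Q) (with values in [0,∞]) is uniformly continuous with respect to the total variation distance on pairs. -/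
open MeasureTheory Real Filter Set
open scoped ENNReal NNReal Topology Classical

/-- The total variation distance `V(P,Q) = ∫ |p - q| dμ`, computed with the dominating
measure `μ = P + Q` (the value does not depend on the choice of dominating measure);
`|p - q|` is expressed in `ℝ≥0∞` as `(p - q) + (q - p)` with truncated subtraction. -/
noncomputable def tvDist {X : Type*} [MeasurableSpace X] (P Q : Measure X) : ℝ≥0∞ :=
  ∫⁻ x, (P.rnDeriv (P + Q) x - Q.rnDeriv (P + Q) x)
      + (Q.rnDeriv (P + Q) x - P.rnDeriv (P + Q) x) ∂(P + Q)

namespace RenyiTVAux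

lemma rpow_self_mul {α : ℝ} (h0 : 0 < α) (h1 : α < 1) (y : ℝ≥0∞) :
    y ^ α * y ^ (1 - α) = y := by
  rcases eq_or_ne y 0 with rfl | hy0
  · rw [ENNReal.zero_rpow_of_pos h0, zero_mul]
  rcases eq_or_ne y ⊤ with rfl | hyt
  · rw [ENNReal.top_rpow_of_pos h0, ENNReal.top_rpow_of_pos (by linarith), ENNReal.top_mul_top]
  · rw [← ENNReal.rpow_add _ _ hy0 hyt]; simp

lemma ptBound {α : ℝ} (h0 : 0 < α) (h1 : α < 1) {e : ℝ≥0∞} (he0 : e ≠ 0) (het : e ≠ ⊤)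
    (x y : ℝ≥0∞) : x ^ α * y ^ (1 - α) ≤ e ^ α * y + e ^ (α - 1) * x := by
  rcases le_total x (e * y) with h | h
  · calc x ^ α * y ^ (1 - α) ≤ (e * y) ^ α * y ^ (1 - α) :=
          mul_le_mul_left (ENNReal.rpow_le_rpow h h0.le) _
      _ = e ^ α * (y ^ α * y ^ (1 - α)) := by
          rw [ENNReal.mul_rpow_of_nonneg _ _ h0.le, mul_assoc]
      _ = e ^ α * y := by rw [rpow_self_mul h0 h1]
      _ ≤ _ := le_self_add
  · have hy : y ≤ e⁻¹ * x := by
      calc y = e⁻¹ * (e * y) := by rw [← mul_assoc, ENNReal.inv_mul_cancel he0 het, one_mul]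
        _ ≤ e⁻¹ * x := mul_le_mul_right h _
    have hinv : e⁻¹ ^ (1 - α) = e ^ (α - 1) := by
      rw [ENNReal.inv_rpow, ← ENNReal.rpow_neg]; ring_nf
    calc x ^ α * y ^ (1 - α) ≤ x ^ α * (e⁻¹ * x) ^ (1 - α) :=
          mul_le_mul_right (ENNReal.rpow_le_rpow hy (by linarith)) _
      _ = e ^ (α - 1) * (x ^ α * x ^ (1 - α)) := by
          rw [ENNReal.mul_rpow_of_nonneg _ _ (by linarith : (0:ℝ) ≤ 1 - α), hinv]; ring
      _ = e ^ (α - 1) * x := by rw [rpow_self_mul h0 h1]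
      _ ≤ _ := le_add_self

lemma ptDiff {α : ℝ} (h0 : 0 < α) (h1 : α < 1) {e : ℝ≥0∞} (he0 : e ≠ 0) (het : e ≠ ⊤)
    (a₁ b₁ a₂ b₂ : ℝ≥0∞) :
    a₁ ^ α * b₁ ^ (1 - α) ≤ a₂ ^ α * b₂ ^ (1 - α)
      + (e ^ α * b₁ + (e ^ (α - 1) * ((a₁ - a₂) + (a₂ - a₁))
        + (e ^ (1 - α) * a₂ + e ^ (-α) * ((b₁ - b₂) + (b₂ - b₁))))) := by
  have ha : a₁ ^ α ≤ a₂ ^ α + (a₁ - a₂) ^ α := by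
    calc a₁ ^ α ≤ (a₂ + (a₁ - a₂)) ^ α := ENNReal.rpow_le_rpow le_add_tsub h0.le
      _ ≤ _ := ENNReal.rpow_add_le_add_rpow _ _ h0.le h1.le
  have hb : b₁ ^ (1 - α) ≤ b₂ ^ (1 - α) + (b₁ - b₂) ^ (1 - α) := by
    calc b₁ ^ (1 - α) ≤ (b₂ + (b₁ - b₂)) ^ (1 - α) :=
          ENNReal.rpow_le_rpow le_add_tsub (by linarith)
      _ ≤ _ := ENNReal.rpow_add_le_add_rpow _ _ (by linarith) (by linarith)
  have key1 : (a₁ - a₂) ^ α * b₁ ^ (1 - α) ≤ e ^ α * b₁ + e ^ (α - 1) * ((a₁ - a₂) + (a₂ - a₁)) := by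
    refine (ptBound h0 h1 he0 het _ _).trans ?_
    exact add_le_add_right (mul_le_mul_right le_self_add _) _
  have key2 : a₂ ^ α * (b₁ - b₂) ^ (1 - α)
      ≤ e ^ (1 - α) * a₂ + e ^ (-α) * ((b₁ - b₂) + (b₂ - b₁)) := by
    have := ptBound (show (0:ℝ) < 1 - α by linarith) (show (1:ℝ) - α < 1 by linarith)
      he0 het (b₁ - b₂) a₂
    rw [show (1:ℝ) - (1 - α) = α by ring, show (1:ℝ) - α - 1 = -α by ring] at this
    refine le_trans (le_of_eq (mul_comm _ _)) ((this.trans ?_))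
    exact add_le_add_right (mul_le_mul_right le_self_add _) _
  calc a₁ ^ α * b₁ ^ (1 - α) ≤ (a₂ ^ α + (a₁ - a₂) ^ α) * b₁ ^ (1 - α) :=
        mul_le_mul_left ha _
    _ = a₂ ^ α * b₁ ^ (1 - α) + (a₁ - a₂) ^ α * b₁ ^ (1 - α) := add_mul _ _ _
    _ ≤ a₂ ^ α * (b₂ ^ (1 - α) + (b₁ - b₂) ^ (1 - α)) + (a₁ - a₂) ^ α * b₁ ^ (1 - α) :=
        add_le_add_left (mul_le_mul_right hb _) _
    _ = a₂ ^ α * b₂ ^ (1 - α) + (a₂ ^ α * (b₁ - b₂) ^ (1 - α) + (a₁ - a₂) ^ α * b₁ ^ (1 - α)) := by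
        ring
    _ ≤ _ := by
        refine add_le_add_right ?_ _
        calc a₂ ^ α * (b₁ - b₂) ^ (1 - α) + (a₁ - a₂) ^ α * b₁ ^ (1 - α)
            ≤ (e ^ (1 - α) * a₂ + e ^ (-α) * ((b₁ - b₂) + (b₂ - b₁)))
              + (e ^ α * b₁ + e ^ (α - 1) * ((a₁ - a₂) + (a₂ - a₁))) := add_le_add key2 key1
          _ = _ := by ring

lemma oneSided {X : Type*} [MeasurableSpace X] {α : ℝ} (h0 : 0 < α) (h1 : α < 1)
    (μ : Measure X) {p₁ q₁ p₂ q₂ : X → ℝ≥0∞}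
    (hp₁m : Measurable p₁) (hq₁m : Measurable q₁) (hp₂m : Measurable p₂) (hq₂m : Measurable q₂)
    (hq₁ : ∫⁻ x, q₁ x ∂μ ≤ 1) (hp₂ : ∫⁻ x, p₂ x ∂μ ≤ 1)
    {ε : ℝ} (hε : 0 < ε) :
    ∫⁻ x, p₁ x ^ α * q₁ x ^ (1 - α) ∂μ ≤
      (∫⁻ x, p₂ x ^ α * q₂ x ^ (1 - α) ∂μ)
      + (ENNReal.ofReal ε ^ α
        + ENNReal.ofReal ε ^ (α - 1) * ∫⁻ x, ((p₁ x - p₂ x) + (p₂ x - p₁ x)) ∂μ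
        + ENNReal.ofReal ε ^ (1 - α)
        + ENNReal.ofReal ε ^ (-α) * ∫⁻ x, ((q₁ x - q₂ x) + (q₂ x - q₁ x)) ∂μ) := by
  set e : ℝ≥0∞ := ENNReal.ofReal ε with he
  have he0 : e ≠ 0 := (ENNReal.ofReal_pos.2 hε).ne'
  have het : e ≠ ⊤ := ENNReal.ofReal_ne_top
  have hetc : ∀ γ : ℝ, e ^ γ ≠ ⊤ := fun γ => by
    rw [he, ENNReal.ofReal_rpow_of_pos hε]; exact ENNReal.ofReal_ne_top
  have hm2 : Measurable fun x => p₂ x ^ α * q₂ x ^ (1 - α) :=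
    (ENNReal.continuous_rpow_const.measurable.comp hp₂m).mul
      (ENNReal.continuous_rpow_const.measurable.comp hq₂m)
  have hmp : Measurable fun x => (p₁ x - p₂ x) + (p₂ x - p₁ x) :=
    (hp₁m.sub hp₂m).add (hp₂m.sub hp₁m)
  have hmq : Measurable fun x => (q₁ x - q₂ x) + (q₂ x - q₁ x) :=
    (hq₁m.sub hq₂m).add (hq₂m.sub hq₁m)
  calc ∫⁻ x, p₁ x ^ α * q₁ x ^ (1 - α) ∂μ
      ≤ ∫⁻ x, (p₂ x ^ α * q₂ x ^ (1 - α)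
        + (e ^ α * q₁ x + (e ^ (α - 1) * ((p₁ x - p₂ x) + (p₂ x - p₁ x))
          + (e ^ (1 - α) * p₂ x + e ^ (-α) * ((q₁ x - q₂ x) + (q₂ x - q₁ x)))))) ∂μ :=
        lintegral_mono fun x => ptDiff h0 h1 he0 het _ _ _ _
    _ = (∫⁻ x, p₂ x ^ α * q₂ x ^ (1 - α) ∂μ)
        + (e ^ α * ∫⁻ x, q₁ x ∂μ + (e ^ (α - 1) * ∫⁻ x, ((p₁ x - p₂ x) + (p₂ x - p₁ x)) ∂μ
          + (e ^ (1 - α) * ∫⁻ x, p₂ x ∂μ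
            + e ^ (-α) * ∫⁻ x, ((q₁ x - q₂ x) + (q₂ x - q₁ x)) ∂μ))) := by
        rw [lintegral_add_left hm2, lintegral_add_left (hq₁m.const_mul _),
          lintegral_add_left (hmp.const_mul _), lintegral_add_left (hp₂m.const_mul _),
          lintegral_const_mul' _ _ (hetc _), lintegral_const_mul' _ _ (hetc _),
          lintegral_const_mul' _ _ (hetc _), lintegral_const_mul' _ _ (hetc _)]
    _ ≤ (∫⁻ x, p₂ x ^ α * q₂ x ^ (1 - α) ∂μ)
        + (e ^ α * 1 + (e ^ (α - 1) * ∫⁻ x, ((p₁ x - p₂ x) + (p₂ x - p₁ x)) ∂μ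
          + (e ^ (1 - α) * 1
            + e ^ (-α) * ∫⁻ x, ((q₁ x - q₂ x) + (q₂ x - q₁ x)) ∂μ))) := by
        gcongr
    _ = _ := by rw [mul_one, mul_one]; ring

lemma rnDeriv_of_withDensity {X : Type*} [MeasurableSpace X] {ν : Measure X} [SigmaFinite ν]
    {P : Measure X} {f : X → ℝ≥0∞} (hf : Measurable f) (hP : P = ν.withDensity f) :
    P.rnDeriv ν =ᵐ[ν] f := by
  rw [hP]; exact Measure.rnDeriv_withDensity ν hf

section inv

variable {X : Type*} [MeasurableSpace X] {μ : Measure X} [SigmaFinite μ]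
  {p q : X → ℝ≥0∞} {P Q : Measure X} [IsFiniteMeasure P] [IsFiniteMeasure Q]

omit [SigmaFinite μ] [IsFiniteMeasure P] [IsFiniteMeasure Q] in
lemma sum_eq_withDensity (hp : Measurable p) (hq : Measurable q)
    (hP : P = μ.withDensity p) (hQ : Q = μ.withDensity q) :
    P + Q = μ.withDensity (fun x => p x + q x) := by
  rw [hP, hQ, ← withDensity_add_left hp q]; rfl

omit [SigmaFinite μ] in
lemma r_ae_fin (hp : Measurable p) (hq : Measurable q)
    (hP : P = μ.withDensity p) (hQ : Q = μ.withDensity q) :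
    ∀ᵐ x ∂μ, p x + q x ≠ ⊤ := by
  refine (ae_lt_top (hp.add hq) ?_).mono fun x hx => hx.ne
  rw [← setLIntegral_univ, ← withDensity_apply _ MeasurableSet.univ,
    show μ.withDensity (p + q) = P + Q from (sum_eq_withDensity hp hq hP hQ).symm]
  exact measure_ne_top _ _

omit [SigmaFinite μ] in
lemma withDensity_div_eq (hp : Measurable p) (hq : Measurable q)
    (hP : P = μ.withDensity p) (hQ : Q = μ.withDensity q) :
    P = (P + Q).withDensity (fun x => p x / (p x + q x)) := by
  rw [sum_eq_withDensity hp hq hP hQ, ← withDensity_mul μ (f := fun x => p x + q x) (g := fun x => p x / (p x + q x)) (hp.add hq)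
    (hp.div (hp.add hq)), hP]
  refine (withDensity_congr_ae ?_).symm
  filter_upwards [r_ae_fin hp hq hP hQ] with x hx
  rcases eq_or_ne (p x + q x) 0 with h | h
  · have hp0 : p x = 0 := by
      have := le_self_add (a := p x) (b := q x)
      rw [h] at this
      exact le_antisymm this zero_le
    simp [h, hp0]
  · exact ENNReal.mul_div_cancel h hx

omit [SigmaFinite μ] in
lemma hell_inv {α : ℝ} (h0 : 0 < α) (h1 : α < 1)
    (hp : Measurable p) (hq : Measurable q)
    (hP : P = μ.withDensity p) (hQ : Q = μ.withDensity q) :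
    hellingerInt α P Q = ∫⁻ x, p x ^ α * q x ^ (1 - α) ∂μ := by
  have hr : Measurable fun x => p x + q x := hp.add hq
  have h₁ : P.rnDeriv (P + Q) =ᵐ[P + Q] fun x => p x / (p x + q x) :=
    rnDeriv_of_withDensity (hp.div hr) (withDensity_div_eq hp hq hP hQ)
  have h₂ : Q.rnDeriv (P + Q) =ᵐ[P + Q] fun x => q x / (p x + q x) := by
    have := rnDeriv_of_withDensity (hq.div (hq.add hp))
      (withDensity_div_eq hq hp hQ hP)
    rw [add_comm Q P] at this
    refine this.trans (Filter.EventuallyEq.of_eq ?_)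
    funext x; rw [Pi.div_apply, Pi.add_apply, add_comm (q x) (p x)]
  have hmeas : Measurable fun x => (p x / (p x + q x)) ^ α * (q x / (p x + q x)) ^ (1 - α) :=
    (ENNReal.continuous_rpow_const.measurable.comp (hp.div hr)).mul
      (ENNReal.continuous_rpow_const.measurable.comp (hq.div hr))
  calc hellingerInt α P Q
      = ∫⁻ x, (p x / (p x + q x)) ^ α * (q x / (p x + q x)) ^ (1 - α) ∂(P + Q) := by
        refine lintegral_congr_ae ?_
        filter_upwards [h₁, h₂] with x e₁ e₂
        rw [e₁, e₂]
    _ = ∫⁻ x, (p x + q x) * ((p x / (p x + q x)) ^ α * (q x / (p x + q x)) ^ (1 - α)) ∂μ := by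
        rw [sum_eq_withDensity hp hq hP hQ, lintegral_withDensity_eq_lintegral_mul μ hr hmeas]
        rfl
    _ = ∫⁻ x, p x ^ α * q x ^ (1 - α) ∂μ := by
        refine lintegral_congr_ae ?_
        filter_upwards [r_ae_fin hp hq hP hQ] with x hx
        rcases eq_or_ne (p x + q x) 0 with h | h
        · have hp0 : p x = 0 := by
            have := le_self_add (a := p x) (b := q x)
            rw [h] at this
            exact le_antisymm this zero_le
          simp [h, hp0, ENNReal.zero_rpow_of_pos h0]
        · rw [div_eq_mul_inv, div_eq_mul_inv,
            ENNReal.mul_rpow_of_nonneg _ _ h0.le,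
            ENNReal.mul_rpow_of_nonneg _ _ (by linarith : (0:ℝ) ≤ 1 - α),
            show (p x ^ α * ((p x + q x)⁻¹) ^ α) * (q x ^ (1 - α) * ((p x + q x)⁻¹) ^ (1 - α))
              = (p x ^ α * q x ^ (1 - α)) * (((p x + q x)⁻¹) ^ α * ((p x + q x)⁻¹) ^ (1 - α))
              from by ring,
            rpow_self_mul h0 h1, show (p x + q x) * (p x ^ α * q x ^ (1 - α) * (p x + q x)⁻¹)
              = (p x ^ α * q x ^ (1 - α)) * ((p x + q x) * (p x + q x)⁻¹) from by ring,
            ENNReal.mul_inv_cancel h hx, mul_one]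

omit [SigmaFinite μ] in
lemma tv_inv (hp : Measurable p) (hq : Measurable q)
    (hP : P = μ.withDensity p) (hQ : Q = μ.withDensity q) :
    tvDist P Q = ∫⁻ x, (p x - q x) + (q x - p x) ∂μ := by
  have hr : Measurable fun x => p x + q x := hp.add hq
  have h₁ : P.rnDeriv (P + Q) =ᵐ[P + Q] fun x => p x / (p x + q x) :=
    rnDeriv_of_withDensity (hp.div hr) (withDensity_div_eq hp hq hP hQ)
  have h₂ : Q.rnDeriv (P + Q) =ᵐ[P + Q] fun x => q x / (p x + q x) := by
    have := rnDeriv_of_withDensity (hq.div (hq.add hp))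
      (withDensity_div_eq hq hp hQ hP)
    rw [add_comm Q P] at this
    refine this.trans (Filter.EventuallyEq.of_eq ?_)
    funext x; rw [Pi.div_apply, Pi.add_apply, add_comm (q x) (p x)]
  have hmeas : Measurable fun x =>
      (p x / (p x + q x) - q x / (p x + q x)) + (q x / (p x + q x) - p x / (p x + q x)) :=
    ((hp.div hr).sub (hq.div hr)).add ((hq.div hr).sub (hp.div hr))
  calc tvDist P Q
      = ∫⁻ x, (p x / (p x + q x) - q x / (p x + q x))
          + (q x / (p x + q x) - p x / (p x + q x)) ∂(P + Q) := by
        refine lintegral_congr_ae ?_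
        filter_upwards [h₁, h₂] with x e₁ e₂
        rw [e₁, e₂]
    _ = ∫⁻ x, (p x + q x) * ((p x / (p x + q x) - q x / (p x + q x))
          + (q x / (p x + q x) - p x / (p x + q x))) ∂μ := by
        rw [sum_eq_withDensity hp hq hP hQ, lintegral_withDensity_eq_lintegral_mul μ hr hmeas]
        rfl
    _ = ∫⁻ x, (p x - q x) + (q x - p x) ∂μ := by
        refine lintegral_congr_ae ?_
        filter_upwards [r_ae_fin hp hq hP hQ] with x hx
        rcases eq_or_ne (p x + q x) 0 with h | h
        · have hp0 : p x = 0 := by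
            have := le_self_add (a := p x) (b := q x)
            rw [h] at this
            exact le_antisymm this zero_le
          have hq0 : q x = 0 := by
            have := le_add_self (a := q x) (b := p x)
            rw [h] at this
            exact le_antisymm this zero_le
          simp [h, hp0, hq0]
        · have hpr : (p x + q x) * (p x / (p x + q x)) = p x := ENNReal.mul_div_cancel h hx
          have hqr : (p x + q x) * (q x / (p x + q x)) = q x := ENNReal.mul_div_cancel h hx
          rw [mul_add, ENNReal.mul_sub (fun _ _ => hx), ENNReal.mul_sub (fun _ _ => hx),
            hpr, hqr]

end inv

lemma hell_ne_top {X : Type*} [MeasurableSpace X] {α : ℝ} (h0 : 0 < α) (h1 : α < 1)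
    {P Q : Measure X} [IsProbabilityMeasure P] [IsProbabilityMeasure Q] :
    hellingerInt α P Q ≠ ⊤ := by
  have hb : hellingerInt α P Q ≤ 2 := by
    have step : hellingerInt α P Q
        ≤ ∫⁻ x, (Q.rnDeriv (P + Q) x + P.rnDeriv (P + Q) x) ∂(P + Q) := by
      refine lintegral_mono fun x => ?_
      have := ptBound h0 h1 (e := 1) one_ne_zero ENNReal.one_ne_top
        (P.rnDeriv (P + Q) x) (Q.rnDeriv (P + Q) x)
      simpa using this
    refine step.trans ?_
    rw [lintegral_add_left (Q.measurable_rnDeriv _),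
      Measure.lintegral_rnDeriv (Measure.absolutelyContinuous_of_le (Measure.le_add_left le_rfl)),
      Measure.lintegral_rnDeriv (Measure.absolutelyContinuous_of_le (Measure.le_add_right le_rfl))]
    simp [measure_univ]
    norm_num
  exact fun h => by simp [h] at hb

lemma renyi_eq {X : Type*} [MeasurableSpace X] {α : ℝ}
    {P Q : Measure X} (hne : hellingerInt α P Q ≠ 0) (hnt : hellingerInt α P Q ≠ ⊤) :
    renyiSimple α P Q = (((α - 1)⁻¹ * Real.log (hellingerInt α P Q).toReal : ℝ) : EReal) := by
  rw [renyiSimple, ENNReal.log_pos_real hne hnt, ← EReal.coe_mul]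

lemma renyi_top {X : Type*} [MeasurableSpace X] {α : ℝ} (h1 : α < 1)
    {P Q : Measure X} (hz : hellingerInt α P Q = 0) :
    renyiSimple α P Q = ⊤ := by
  rw [renyiSimple, hz, ENNReal.log_zero, EReal.coe_mul_bot_of_neg]
  simpa using inv_lt_zero.mpr (by linarith : α - 1 < 0)

lemma renyi_ge {X : Type*} [MeasurableSpace X] {α ε : ℝ} (h0 : 0 < α) (h1 : α < 1) (hε : 0 < ε)
    {P Q : Measure X} (hfin : hellingerInt α P Q ≠ ⊤)
    (hle : hellingerInt α P Q ≤ ENNReal.ofReal (Real.exp ((α - 1) / ε))) :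
    ((ε⁻¹ : ℝ) : EReal) ≤ renyiSimple α P Q := by
  rcases eq_or_ne (hellingerInt α P Q) 0 with hz | hz
  · rw [renyi_top h1 hz]; exact le_top
  · rw [renyi_eq hz hfin]
    have hexp : (0:ℝ) < Real.exp ((α - 1) / ε) := Real.exp_pos _
    have htop : (hellingerInt α P Q).toReal ≤ Real.exp ((α - 1) / ε) := by
      have := ENNReal.toReal_mono ENNReal.ofReal_ne_top hle
      rwa [ENNReal.toReal_ofReal hexp.le] at this
    have hpos : 0 < (hellingerInt α P Q).toReal := ENNReal.toReal_pos hz hfin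
    have hlog : Real.log (hellingerInt α P Q).toReal ≤ (α - 1) / ε := by
      calc Real.log (hellingerInt α P Q).toReal ≤ Real.log (Real.exp ((α - 1) / ε)) :=
            Real.log_le_log hpos htop
        _ = (α - 1) / ε := Real.log_exp _
    have hneg : (α - 1)⁻¹ ≤ 0 := (inv_lt_zero.mpr (by linarith : α - 1 < 0)).le
    have hmul := mul_le_mul_of_nonpos_left hlog hneg
    have hc : (α - 1)⁻¹ * ((α - 1) / ε) = ε⁻¹ := by
      rw [div_eq_mul_inv, ← mul_assoc, inv_mul_cancel₀ (by linarith : α - 1 ≠ 0), one_mul]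
    have : ε⁻¹ ≤ (α - 1)⁻¹ * Real.log (hellingerInt α P Q).toReal := by linarith
    exact_mod_cast this

lemma realStep {α ε T m : ℝ} (h1 : α < 1) (hm : 0 < m)
    (hT0 : 0 ≤ T) (hTm : T ≤ ε * (1 - α) * m) {h₁ h₂ : ℝ}
    (hm1 : m ≤ h₁) (hm2 : m ≤ h₂) (hle : h₂ ≤ h₁ + T) :
    (α - 1)⁻¹ * Real.log h₁ ≤ (α - 1)⁻¹ * Real.log h₂ + ε := by
  have hh₁ : 0 < h₁ := lt_of_lt_of_le hm hm1
  have hh₂ : 0 < h₂ := lt_of_lt_of_le hm hm2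
  have hlog : Real.log h₂ - Real.log h₁ ≤ ε * (1 - α) := by
    calc Real.log h₂ - Real.log h₁ = Real.log (h₂ / h₁) :=
          (Real.log_div hh₂.ne' hh₁.ne').symm
      _ ≤ h₂ / h₁ - 1 := Real.log_le_sub_one_of_pos (div_pos hh₂ hh₁)
      _ = (h₂ - h₁) / h₁ := by rw [sub_div, div_self hh₁.ne']
      _ ≤ T / m := by
          gcongr
          linarith
      _ ≤ ε * (1 - α) := by rw [div_le_iff₀ hm]; linarith
  have hk : (0:ℝ) < (1 - α)⁻¹ := inv_pos.mpr (by linarith)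
  have hneg : (α - 1)⁻¹ = -(1 - α)⁻¹ := by rw [show α - 1 = -(1 - α) by ring, neg_inv]
  have hkl := mul_le_mul_of_nonneg_left hlog hk.le
  have hexp : (1 - α)⁻¹ * (Real.log h₂ - Real.log h₁)
      = (1 - α)⁻¹ * Real.log h₂ - (1 - α)⁻¹ * Real.log h₁ := mul_sub _ _ _
  have hcan : (1 - α)⁻¹ * (ε * (1 - α)) = ε := by
    rw [mul_comm ε, ← mul_assoc, inv_mul_cancel₀ (by linarith : (1:ℝ) - α ≠ 0), one_mul]
  rw [hneg]
  linarith

end RenyiTVAux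

open RenyiTVAux in

/-- **Uniform continuity in total variation for `α ∈ (0,1)`.**  First, for probability
measures `P₁,Q₁,P₂,Q₂` with densities `p₁,q₁,p₂,q₂` w.r.t. a common σ-finite `μ` and
every `ε > 0`, the Hellinger integrals satisfy
`|∫ p₁^α q₁^(1-α) dμ - ∫ p₂^α q₂^(1-α) dμ| ≤ ε^α + ε^(α-1) V(P₁,P₂) + ε^(1-α) + ε^(-α) V(Q₁,Q₂)`.
Consequently, `(P,Q) ↦ D_α(P‖Q)` is uniformly continuous w.r.t. total variation: for
every `ε > 0` there is a `δ > 0` such that if `V(P₁,P₂) < δ` and `V(Q₁,Q₂) < δ`, then the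
`[0,∞]`-valued divergences `D_α(P₁‖Q₁)` and `D_α(P₂‖Q₂)` are `ε`-close (either within `ε`
of each other or both at least `ε⁻¹`). -/

theorem renyiDiv_uniformly_continuous_tv
    {X : Type*} [MeasurableSpace X] (α : ℝ) (hα0 : 0 < α) (hα1 : α < 1) :
    (∀ (P₁ Q₁ P₂ Q₂ : Measure X),
      IsProbabilityMeasure P₁ → IsProbabilityMeasure Q₁ →
      IsProbabilityMeasure P₂ → IsProbabilityMeasure Q₂ →
      ∀ (μ : Measure X) [SigmaFinite μ], ∀ (p₁ q₁ p₂ q₂ : X → ℝ≥0∞),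
      Measurable p₁ → Measurable q₁ → Measurable p₂ → Measurable q₂ →
      P₁ = μ.withDensity p₁ → Q₁ = μ.withDensity q₁ →
      P₂ = μ.withDensity p₂ → Q₂ = μ.withDensity q₂ →
      ∀ ε : ℝ, 0 < ε →
      ((∫⁻ x, p₁ x ^ α * q₁ x ^ (1 - α) ∂μ) - ∫⁻ x, p₂ x ^ α * q₂ x ^ (1 - α) ∂μ)
        + ((∫⁻ x, p₂ x ^ α * q₂ x ^ (1 - α) ∂μ) - ∫⁻ x, p₁ x ^ α * q₁ x ^ (1 - α) ∂μ)
      ≤ ENNReal.ofReal ε ^ α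
        + ENNReal.ofReal ε ^ (α - 1) * ∫⁻ x, ((p₁ x - p₂ x) + (p₂ x - p₁ x)) ∂μ
        + ENNReal.ofReal ε ^ (1 - α)
        + ENNReal.ofReal ε ^ (-α) * ∫⁻ x, ((q₁ x - q₂ x) + (q₂ x - q₁ x)) ∂μ) ∧
    (∀ ε : ℝ, 0 < ε → ∃ δ : ℝ, 0 < δ ∧
      ∀ (P₁ Q₁ P₂ Q₂ : Measure X),
        IsProbabilityMeasure P₁ → IsProbabilityMeasure Q₁ →
        IsProbabilityMeasure P₂ → IsProbabilityMeasure Q₂ →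
        tvDist P₁ P₂ < ENNReal.ofReal δ → tvDist Q₁ Q₂ < ENNReal.ofReal δ →
        ((((ε⁻¹ : ℝ) : EReal) ≤ renyiSimple α P₁ Q₁ ∧
          ((ε⁻¹ : ℝ) : EReal) ≤ renyiSimple α P₂ Q₂) ∨
         (renyiSimple α P₁ Q₁ ≤ renyiSimple α P₂ Q₂ + ((ε : ℝ) : EReal) ∧
          renyiSimple α P₂ Q₂ ≤ renyiSimple α P₁ Q₁ + ((ε : ℝ) : EReal)))) := by
  constructor
  · -- Part 1: the Hellinger integral inequality
    intro P₁ Q₁ P₂ Q₂ hP₁ hQ₁ hP₂ hQ₂ μ _ p₁ q₁ p₂ q₂ hp₁ hq₁ hp₂ hq₂ hPd₁ hQd₁ hPd₂ hQd₂ ε hε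
    haveI := hP₁; haveI := hQ₁; haveI := hP₂; haveI := hQ₂
    have hint : ∀ (f : X → ℝ≥0∞) (R : Measure X), IsProbabilityMeasure R →
        R = μ.withDensity f → ∫⁻ x, f x ∂μ ≤ 1 := by
      intro f R hR hRf
      rw [← setLIntegral_univ, ← withDensity_apply _ MeasurableSet.univ, ← hRf]
      exact le_of_eq measure_univ
    have h12 := oneSided hα0 hα1 μ hp₁ hq₁ hp₂ hq₂
      (hint q₁ Q₁ hQ₁ hQd₁) (hint p₂ P₂ hP₂ hPd₂) hε
    have h21 := oneSided hα0 hα1 μ hp₂ hq₂ hp₁ hq₁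
      (hint q₂ Q₂ hQ₂ hQd₂) (hint p₁ P₁ hP₁ hPd₁) hε
    rw [show (∫⁻ x, ((p₂ x - p₁ x) + (p₁ x - p₂ x)) ∂μ)
          = ∫⁻ x, ((p₁ x - p₂ x) + (p₂ x - p₁ x)) ∂μ from lintegral_congr fun x => add_comm _ _,
      show (∫⁻ x, ((q₂ x - q₁ x) + (q₁ x - q₂ x)) ∂μ)
          = ∫⁻ x, ((q₁ x - q₂ x) + (q₂ x - q₁ x)) ∂μ from
        lintegral_congr fun x => add_comm _ _] at h21
    rcases le_total (∫⁻ x, p₁ x ^ α * q₁ x ^ (1 - α) ∂μ)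
        (∫⁻ x, p₂ x ^ α * q₂ x ^ (1 - α) ∂μ) with h | h
    · rw [tsub_eq_zero_of_le h, zero_add, tsub_le_iff_right, add_comm]
      exact h21
    · rw [tsub_eq_zero_of_le h, add_zero, tsub_le_iff_right, add_comm]
      exact h12
  · -- Part 2: uniform continuity
    intro ε hε
    set b := Real.exp ((α - 1) / ε) with hbdef
    have hb : 0 < b := Real.exp_pos _
    set m := b / 2 with hmdef
    have hm : 0 < m := by positivity
    set T := min (ε * (1 - α) * m) m with hTdef
    have hT : 0 < T := lt_min (mul_pos (mul_pos hε (by linarith)) hm) hm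
    set t := T / 4 with htdef
    have ht : 0 < t := by positivity
    set ε' := min (t ^ (α⁻¹)) (t ^ ((1 - α)⁻¹)) with hε'def
    have hε' : 0 < ε' := lt_min (Real.rpow_pos_of_pos ht _) (Real.rpow_pos_of_pos ht _)
    have hε'α : ε' ^ α ≤ t := by
      calc ε' ^ α ≤ (t ^ (α⁻¹)) ^ α := Real.rpow_le_rpow hε'.le (min_le_left _ _) hα0.le
        _ = t := by rw [← Real.rpow_mul ht.le, inv_mul_cancel₀ hα0.ne', Real.rpow_one]
    have hε'1α : ε' ^ (1 - α) ≤ t := by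
      calc ε' ^ (1 - α) ≤ (t ^ ((1 - α)⁻¹)) ^ (1 - α) :=
            Real.rpow_le_rpow hε'.le (min_le_right _ _) (by linarith)
        _ = t := by
            rw [← Real.rpow_mul ht.le, inv_mul_cancel₀ (by linarith : (1:ℝ) - α ≠ 0),
              Real.rpow_one]
    set s := ε' ^ (α - 1) + ε' ^ (-α) with hsdef
    have hs : 0 < s := add_pos (Real.rpow_pos_of_pos hε' _) (Real.rpow_pos_of_pos hε' _)
    refine ⟨t / s, by positivity, ?_⟩
    intro P₁ Q₁ P₂ Q₂ hP₁ hQ₁ hP₂ hQ₂ hVP hVQ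
    haveI := hP₁; haveI := hQ₁; haveI := hP₂; haveI := hQ₂
    set δ := t / s with hδdef
    set μ := P₁ + Q₁ + P₂ + Q₂ with hμdef
    have hacP₁ : P₁ ≪ μ := Measure.absolutelyContinuous_of_le
      (Measure.le_add_right (Measure.le_add_right (Measure.le_add_right le_rfl)))
    have hacQ₁ : Q₁ ≪ μ := Measure.absolutelyContinuous_of_le
      (Measure.le_add_right (Measure.le_add_right (Measure.le_add_left le_rfl)))
    have hacP₂ : P₂ ≪ μ := Measure.absolutelyContinuous_of_le
      (Measure.le_add_right (Measure.le_add_left le_rfl))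
    have hacQ₂ : Q₂ ≪ μ := Measure.absolutelyContinuous_of_le
      (Measure.le_add_left le_rfl)
    set p₁ := P₁.rnDeriv μ with hp₁def
    set q₁ := Q₁.rnDeriv μ with hq₁def
    set p₂ := P₂.rnDeriv μ with hp₂def
    set q₂ := Q₂.rnDeriv μ with hq₂def
    have hp₁ : Measurable p₁ := Measure.measurable_rnDeriv _ _
    have hq₁ : Measurable q₁ := Measure.measurable_rnDeriv _ _
    have hp₂ : Measurable p₂ := Measure.measurable_rnDeriv _ _
    have hq₂ : Measurable q₂ := Measure.measurable_rnDeriv _ _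
    have hPd₁ : P₁ = μ.withDensity p₁ := (Measure.withDensity_rnDeriv_eq _ _ hacP₁).symm
    have hQd₁ : Q₁ = μ.withDensity q₁ := (Measure.withDensity_rnDeriv_eq _ _ hacQ₁).symm
    have hPd₂ : P₂ = μ.withDensity p₂ := (Measure.withDensity_rnDeriv_eq _ _ hacP₂).symm
    have hQd₂ : Q₂ = μ.withDensity q₂ := (Measure.withDensity_rnDeriv_eq _ _ hacQ₂).symm
    have hH₁ : hellingerInt α P₁ Q₁ = ∫⁻ x, p₁ x ^ α * q₁ x ^ (1 - α) ∂μ :=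
      hell_inv hα0 hα1 hp₁ hq₁ hPd₁ hQd₁
    have hH₂ : hellingerInt α P₂ Q₂ = ∫⁻ x, p₂ x ^ α * q₂ x ^ (1 - α) ∂μ :=
      hell_inv hα0 hα1 hp₂ hq₂ hPd₂ hQd₂
    have hTVP : tvDist P₁ P₂ = ∫⁻ x, (p₁ x - p₂ x) + (p₂ x - p₁ x) ∂μ :=
      tv_inv hp₁ hp₂ hPd₁ hPd₂
    have hTVQ : tvDist Q₁ Q₂ = ∫⁻ x, (q₁ x - q₂ x) + (q₂ x - q₁ x) ∂μ :=
      tv_inv hq₁ hq₂ hQd₁ hQd₂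
    have hint : ∀ (R : Measure X), IsProbabilityMeasure R → R ≪ μ →
        ∫⁻ x, R.rnDeriv μ x ∂μ ≤ 1 := fun R hR hac =>
      le_of_eq (by rw [Measure.lintegral_rnDeriv hac, measure_univ])
    have h12 := oneSided hα0 hα1 μ hp₁ hq₁ hp₂ hq₂
      (hint Q₁ hQ₁ hacQ₁) (hint P₂ hP₂ hacP₂) hε'
    have h21 := oneSided hα0 hα1 μ hp₂ hq₂ hp₁ hq₁
      (hint Q₂ hQ₂ hacQ₂) (hint P₁ hP₁ hacP₁) hε'
    rw [show (∫⁻ x, ((p₂ x - p₁ x) + (p₁ x - p₂ x)) ∂μ)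
          = ∫⁻ x, ((p₁ x - p₂ x) + (p₂ x - p₁ x)) ∂μ from lintegral_congr fun x => add_comm _ _,
      show (∫⁻ x, ((q₂ x - q₁ x) + (q₁ x - q₂ x)) ∂μ)
          = ∫⁻ x, ((q₁ x - q₂ x) + (q₂ x - q₁ x)) ∂μ from
        lintegral_congr fun x => add_comm _ _] at h21
    -- bound the error term by `ofReal T`
    have hofr : ∀ γ : ℝ, ENNReal.ofReal ε' ^ γ = ENNReal.ofReal (ε' ^ γ) := fun γ =>
      ENNReal.ofReal_rpow_of_pos hε'
    have hRT : ENNReal.ofReal ε' ^ α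
        + ENNReal.ofReal ε' ^ (α - 1) * ∫⁻ x, ((p₁ x - p₂ x) + (p₂ x - p₁ x)) ∂μ
        + ENNReal.ofReal ε' ^ (1 - α)
        + ENNReal.ofReal ε' ^ (-α) * ∫⁻ x, ((q₁ x - q₂ x) + (q₂ x - q₁ x)) ∂μ
        ≤ ENNReal.ofReal T := by
      have hVp : (∫⁻ x, ((p₁ x - p₂ x) + (p₂ x - p₁ x)) ∂μ) ≤ ENNReal.ofReal δ :=
        (hTVP ▸ hVP).le
      have hVq : (∫⁻ x, ((q₁ x - q₂ x) + (q₂ x - q₁ x)) ∂μ) ≤ ENNReal.ofReal δ :=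
        (hTVQ ▸ hVQ).le
      calc ENNReal.ofReal ε' ^ α
          + ENNReal.ofReal ε' ^ (α - 1) * ∫⁻ x, ((p₁ x - p₂ x) + (p₂ x - p₁ x)) ∂μ
          + ENNReal.ofReal ε' ^ (1 - α)
          + ENNReal.ofReal ε' ^ (-α) * ∫⁻ x, ((q₁ x - q₂ x) + (q₂ x - q₁ x)) ∂μ
          ≤ ENNReal.ofReal (ε' ^ α) + ENNReal.ofReal (ε' ^ (α - 1)) * ENNReal.ofReal δ
            + ENNReal.ofReal (ε' ^ (1 - α))
            + ENNReal.ofReal (ε' ^ (-α)) * ENNReal.ofReal δ := by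
            rw [hofr, hofr, hofr, hofr]
            gcongr
        _ = ENNReal.ofReal (ε' ^ α + ε' ^ (α - 1) * δ + ε' ^ (1 - α) + ε' ^ (-α) * δ) := by
            rw [← ENNReal.ofReal_mul (Real.rpow_nonneg hε'.le _),
              ← ENNReal.ofReal_mul (Real.rpow_nonneg hε'.le _),
              ← ENNReal.ofReal_add (Real.rpow_nonneg hε'.le _)
                (mul_nonneg (Real.rpow_nonneg hε'.le _) (by positivity)),
              ← ENNReal.ofReal_add (by positivity) (Real.rpow_nonneg hε'.le _),
              ← ENNReal.ofReal_add (by positivity)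
                (mul_nonneg (Real.rpow_nonneg hε'.le _) (by positivity))]
        _ ≤ ENNReal.ofReal T := by
            refine ENNReal.ofReal_le_ofReal ?_
            have hsd : s * δ = t := by
              rw [hδdef]
              field_simp
            have hexpand : ε' ^ (α - 1) * δ + ε' ^ (-α) * δ = s * δ := by
              rw [hsdef]; ring
            have h4 : t * 4 = T := by rw [htdef]; ring
            nlinarith [hε'α, hε'1α]
    have hHle₁ : hellingerInt α P₁ Q₁ ≤ hellingerInt α P₂ Q₂ + ENNReal.ofReal T := by
      rw [hH₁, hH₂]
      exact h12.trans (add_le_add_right hRT _)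
    have hHle₂ : hellingerInt α P₂ Q₂ ≤ hellingerInt α P₁ Q₁ + ENNReal.ofReal T := by
      rw [hH₁, hH₂]
      exact h21.trans (add_le_add_right hRT _)
    have hfin₁ : hellingerInt α P₁ Q₁ ≠ ⊤ := hell_ne_top hα0 hα1
    have hfin₂ : hellingerInt α P₂ Q₂ ≠ ⊤ := hell_ne_top hα0 hα1
    have hreal₁ : (hellingerInt α P₁ Q₁).toReal ≤ (hellingerInt α P₂ Q₂).toReal + T := by
      have := ENNReal.toReal_mono (ENNReal.add_ne_top.2 ⟨hfin₂, ENNReal.ofReal_ne_top⟩) hHle₁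
      rwa [ENNReal.toReal_add hfin₂ ENNReal.ofReal_ne_top, ENNReal.toReal_ofReal hT.le] at this
    have hreal₂ : (hellingerInt α P₂ Q₂).toReal ≤ (hellingerInt α P₁ Q₁).toReal + T := by
      have := ENNReal.toReal_mono (ENNReal.add_ne_top.2 ⟨hfin₁, ENNReal.ofReal_ne_top⟩) hHle₂
      rwa [ENNReal.toReal_add hfin₁ ENNReal.ofReal_ne_top, ENNReal.toReal_ofReal hT.le] at this
    by_cases hcase : hellingerInt α P₁ Q₁ ≤ ENNReal.ofReal b
        ∧ hellingerInt α P₂ Q₂ ≤ ENNReal.ofReal b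
    · exact Or.inl ⟨renyi_ge hα0 hα1 hε hfin₁ hcase.1, renyi_ge hα0 hα1 hε hfin₂ hcase.2⟩
    · right
      have hTm' : T ≤ m := min_le_right _ _
      have hmain : m ≤ (hellingerInt α P₁ Q₁).toReal ∧ m ≤ (hellingerInt α P₂ Q₂).toReal := by
        rcases not_and_or.mp hcase with hc | hc
        · have hb₁ : b < (hellingerInt α P₁ Q₁).toReal :=
            (ENNReal.ofReal_lt_iff_lt_toReal hb.le hfin₁).mp (not_le.mp hc)
          constructor
          · linarith
          · linarith
        · have hb₂ : b < (hellingerInt α P₂ Q₂).toReal :=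
            (ENNReal.ofReal_lt_iff_lt_toReal hb.le hfin₂).mp (not_le.mp hc)
          constructor
          · linarith
          · linarith
      have hne₁ : hellingerInt α P₁ Q₁ ≠ 0 := by
        intro hzz
        rw [hzz] at hmain
        simp at hmain
        linarith [hmain.1]
      have hne₂ : hellingerInt α P₂ Q₂ ≠ 0 := by
        intro hzz
        rw [hzz] at hmain
        simp at hmain
        linarith [hmain.2]
      rw [renyi_eq hne₁ hfin₁, renyi_eq hne₂ hfin₂]
      constructor
      · rw [← EReal.coe_add]
        exact_mod_cast realStep hα1 hm hT.le (min_le_left _ _) hmain.1 hmain.2 hreal₂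
      · rw [← EReal.coe_add]
        exact_mod_cast realStep hα1 hm hT.le (min_le_left _ _) hmain.2 hmain.1 hreal₁
end

section
/- For probability measures P and Q on a measurable space (X, 𝓐) with densities p, q with respect to a common σ-finite dominating measure μ, the following conditions are equivalent: (i) P and Q are mutually singular (P ⊥ Q); (ii) Q({x : p(x) > 0}) = 0; (iii) D_α(P‖Q) = ∞ for some α ∈ [0,1); (iv) D_α(P‖Q) = ∞ for all α ∈ [0,∞]. -/
open MeasureTheory Real Filter Set
open scoped ENNReal NNReal Topology Classical

section RenyiAux
variable {X : Type*} [MeasurableSpace X]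

/-- If `ν.withDensity f A = 0` then `ν (A ∩ {0 < f}) = 0`. -/
lemma withDensity_null_inter {ν : Measure X} {f : X → ℝ≥0∞} (hf : Measurable f)
    {A : Set X} (hA : MeasurableSet A) (h : ν.withDensity f A = 0) :
    ν (A ∩ {x | 0 < f x}) = 0 := by
  rw [withDensity_apply _ hA, lintegral_eq_zero_iff hf] at h
  have h' : ∀ᵐ x ∂ν, x ∈ A → f x = 0 := (ae_restrict_iff' hA).mp h
  rw [measure_eq_zero_iff_ae_notMem]
  filter_upwards [h'] with x hx
  rintro ⟨hxA, hpos⟩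
  exact hpos.ne' (hx hxA)

/-- `ν.withDensity f` vanishes on the set where `f` is not positive. -/
lemma withDensity_not_pos (ν : Measure X) {f : X → ℝ≥0∞} (hf : Measurable f) :
    ν.withDensity f {x | ¬ 0 < f x} = 0 := by
  have hm : MeasurableSet {x | ¬ 0 < f x} := by
    have : {x | ¬ 0 < f x} = f ⁻¹' {0} := by
      ext x; simp [pos_iff_ne_zero]
    rw [this]; exact hf (measurableSet_singleton 0)
  rw [withDensity_apply _ hm]
  have : ∀ᵐ x ∂ν.restrict {x | ¬ 0 < f x}, f x = 0 := by
    refine (ae_restrict_iff' hm).mpr (ae_of_all _ fun x hx => ?_)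
    simpa [pos_iff_ne_zero, not_not] using hx
  rw [lintegral_congr_ae this, lintegral_zero]


variable {P Q : Measure X}

lemma absCont_add_left (P Q : Measure X) : P ≪ P + Q :=
  Measure.absolutelyContinuous_of_le (Measure.le_add_right le_rfl)

lemma absCont_add_right (P Q : Measure X) : Q ≪ P + Q :=
  Measure.absolutelyContinuous_of_le (Measure.le_add_left le_rfl)

section Sing
variable [IsFiniteMeasure P] [IsFiniteMeasure Q]

lemma withDensity_f_eq : (P + Q).withDensity (P.rnDeriv (P + Q)) = P :=
  Measure.withDensity_rnDeriv_eq _ _ (absCont_add_left P Q)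

lemma withDensity_g_eq : (P + Q).withDensity (Q.rnDeriv (P + Q)) = Q :=
  Measure.withDensity_rnDeriv_eq _ _ (absCont_add_right P Q)

/-- Characterization of mutual singularity via the joint positivity set of the densities. -/
lemma mutuallySingular_iff_S :
    P.MutuallySingular Q ↔
      (P + Q) {x | 0 < P.rnDeriv (P + Q) x ∧ 0 < Q.rnDeriv (P + Q) x} = 0 := by
  set ν := P + Q with hν
  set f := P.rnDeriv ν with hfdef
  set g := Q.rnDeriv ν with hgdef
  have hf : Measurable f := Measure.measurable_rnDeriv _ _
  have hg : Measurable g := Measure.measurable_rnDeriv _ _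
  have hfP : ν.withDensity f = P := withDensity_f_eq
  have hgQ : ν.withDensity g = Q := withDensity_g_eq
  constructor
  · rintro ⟨A, hA, hPA, hQAc⟩
    have h1 : ν (A ∩ {x | 0 < f x}) = 0 :=
      withDensity_null_inter hf hA (by rw [hfP]; exact hPA)
    have h2 : ν (Aᶜ ∩ {x | 0 < g x}) = 0 :=
      withDensity_null_inter hg hA.compl (by rw [hgQ]; exact hQAc)
    refine measure_mono_null (fun x hx => ?_) (measure_union_null h1 h2)
    obtain ⟨hxf, hxg⟩ := hx
    by_cases hxA : x ∈ A
    · exact Or.inl ⟨hxA, hxf⟩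
    · exact Or.inr ⟨hxA, hxg⟩
  · intro hS
    refine ⟨{x | 0 < g x}, hg measurableSet_Ioi, ?_, ?_⟩
    · -- P {0 < g} = 0
      have hPf0 : P {x | ¬ 0 < f x} = 0 := by
        have := withDensity_not_pos ν hf; rwa [hfP] at this
      have hPS : P {x | 0 < f x ∧ 0 < g x} = 0 :=
        le_antisymm (le_trans (Measure.le_iff'.mp (Measure.le_add_right le_rfl) _)
          hS.le) (zero_le)
      have h1 : P ({x | 0 < g x} ∩ {x | 0 < f x}) = 0 := by
        refine measure_mono_null ?_ hPS
        intro x hx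
        exact ⟨hx.2, hx.1⟩
      refine measure_mono_null (fun x hx => ?_) (measure_union_null h1 hPf0)
      by_cases hxf : 0 < f x
      · exact Or.inl ⟨hx, hxf⟩
      · exact Or.inr hxf
    · rw [Set.compl_setOf]
      have := withDensity_not_pos ν hg
      rwa [hgQ] at this


lemma measurable_hell (a : ℝ) :
    Measurable fun x => P.rnDeriv (P + Q) x ^ a * Q.rnDeriv (P + Q) x ^ (1 - a) :=
  (ENNReal.continuous_rpow_const.measurable.comp (Measure.measurable_rnDeriv _ _)).mul
    (ENNReal.continuous_rpow_const.measurable.comp (Measure.measurable_rnDeriv _ _))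

lemma hellingerInt_eq_zero_iff {a : ℝ} (h0 : 0 < a) (h1 : a < 1) :
    hellingerInt a P Q = 0 ↔
      (P + Q) {x | 0 < P.rnDeriv (P + Q) x ∧ 0 < Q.rnDeriv (P + Q) x} = 0 := by
  set ν := P + Q
  set f := P.rnDeriv ν
  set g := Q.rnDeriv ν
  have h1a : (0:ℝ) < 1 - a := by linarith
  rw [hellingerInt, lintegral_eq_zero_iff (measurable_hell a), measure_eq_zero_iff_ae_notMem]
  refine eventually_congr (ae_of_all _ fun x => ?_)
  simp only [Pi.zero_apply, mem_setOf_eq, mul_eq_zero, ENNReal.rpow_eq_zero_iff_of_pos h0,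
    ENNReal.rpow_eq_zero_iff_of_pos h1a, pos_iff_ne_zero, not_and_or, not_not]
  exact Iff.rfl

lemma hellingerInt_le {a : ℝ} (h0 : 0 < a) (h1 : a < 1) :
    hellingerInt a P Q ≤ P Set.univ + Q Set.univ := by
  set ν := P + Q
  set f := P.rnDeriv ν with hfdef
  set g := Q.rnDeriv ν with hgdef
  have h1a : (0:ℝ) < 1 - a := by linarith
  have hpt : ∀ x, f x ^ a * g x ^ (1 - a) ≤ f x + g x := by
    intro x
    set m := max (f x) (g x) with hm
    have h2 : f x ^ a * g x ^ (1 - a) ≤ m ^ a * m ^ (1 - a) :=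
      mul_le_mul' (ENNReal.rpow_le_rpow (le_max_left _ _) h0.le)
        (ENNReal.rpow_le_rpow (le_max_right _ _) h1a.le)
    refine h2.trans ?_
    rcases eq_or_ne m 0 with hm0 | hm0
    · simp [hm0, ENNReal.zero_rpow_of_pos h0, ENNReal.zero_rpow_of_pos h1a]
    rcases eq_or_ne m ⊤ with hmt | hmt
    · rw [hm] at hmt
      rcases max_eq_iff.mp hmt with ⟨h, -⟩ | ⟨h, -⟩
      · simp [h]
      · simp [h]
    · have : m ^ a * m ^ (1 - a) = m := by
        rw [← ENNReal.rpow_add _ _ hm0 hmt]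
        norm_num
      rw [this]
      exact max_le le_self_add le_add_self
  calc hellingerInt a P Q ≤ ∫⁻ x, (f x + g x) ∂ν := lintegral_mono hpt
    _ = ∫⁻ x, f x ∂ν + ∫⁻ x, g x ∂ν :=
        lintegral_add_left (Measure.measurable_rnDeriv _ _) _
    _ = P Set.univ + Q Set.univ := by
        rw [Measure.lintegral_rnDeriv (absCont_add_left P Q),
          Measure.lintegral_rnDeriv (absCont_add_right P Q)]

lemma min_le_hellingerInt {a : ℝ} (h0 : 0 < a) (h1 : a < 1) :
    ∫⁻ x, min (P.rnDeriv (P + Q) x) (Q.rnDeriv (P + Q) x) ∂(P + Q) ≤ hellingerInt a P Q := by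
  set ν := P + Q
  set f := P.rnDeriv ν
  set g := Q.rnDeriv ν
  have h1a : (0:ℝ) < 1 - a := by linarith
  refine lintegral_mono fun x => ?_
  set m := min (f x) (g x) with hm
  have h2 : m ^ a * m ^ (1 - a) ≤ f x ^ a * g x ^ (1 - a) :=
    mul_le_mul' (ENNReal.rpow_le_rpow (min_le_left _ _) h0.le)
      (ENNReal.rpow_le_rpow (min_le_right _ _) h1a.le)
  refine le_trans (le_of_eq ?_) h2
  rcases eq_or_ne m 0 with hm0 | hm0
  · simp [hm0, ENNReal.zero_rpow_of_pos h0, ENNReal.zero_rpow_of_pos h1a]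
  rcases eq_or_ne m ⊤ with hmt | hmt
  · simp [hmt, ENNReal.top_rpow_of_pos h0, ENNReal.top_rpow_of_pos h1a]
  · rw [← ENNReal.rpow_add _ _ hm0 hmt]
    norm_num

end Sing

section Prob
variable [IsProbabilityMeasure P] [IsProbabilityMeasure Q]

lemma hellingerInt_eq_top_of_sing {a : ℝ} (h1 : 1 < a)
    (hsing : (P + Q) {x | 0 < P.rnDeriv (P + Q) x ∧ 0 < Q.rnDeriv (P + Q) x} = 0) :
    hellingerInt a P Q = ⊤ := by
  set ν := P + Q with hν
  set f := P.rnDeriv ν with hfdef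
  set g := Q.rnDeriv ν with hgdef
  have hf : Measurable f := Measure.measurable_rnDeriv _ _
  have hg : Measurable g := Measure.measurable_rnDeriv _ _
  set T : Set X := {x | 0 < f x} ∩ {x | ¬ 0 < g x} with hT
  have hTm : MeasurableSet T := by
    refine (hf measurableSet_Ioi).inter ?_
    have : {x | ¬ 0 < g x} = g ⁻¹' {0} := by
      ext x; simp [pos_iff_ne_zero]
    rw [this]; exact hg (measurableSet_singleton 0)
  -- ν T > 0
  have hPf0 : P {x | ¬ 0 < f x} = 0 := by
    have := withDensity_not_pos ν hf
    rwa [withDensity_f_eq] at this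
  have hPS : P {x | 0 < f x ∧ 0 < g x} = 0 :=
    le_antisymm (le_trans (Measure.le_iff'.mp (Measure.le_add_right le_rfl) _) hsing.le)
      (zero_le)
  have hPT : P T ≠ 0 := by
    intro h0
    have hcover : (Set.univ : Set X) ⊆
        T ∪ ({x | 0 < f x ∧ 0 < g x} ∪ {x | ¬ 0 < f x}) := by
      intro x _
      by_cases hxf : 0 < f x
      · by_cases hxg : 0 < g x
        · exact Or.inr (Or.inl ⟨hxf, hxg⟩)
        · exact Or.inl ⟨hxf, hxg⟩
      · exact Or.inr (Or.inr hxf)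
    have : P Set.univ = 0 :=
      measure_mono_null hcover (measure_union_null h0 (measure_union_null hPS hPf0))
    simp [measure_univ] at this
  have hνT : ν T ≠ 0 := by
    intro h0
    exact hPT (le_antisymm
      (le_trans (Measure.le_iff'.mp (Measure.le_add_right le_rfl) _) h0.le) (zero_le))
  -- integrand is ⊤ on T
  have hpt : ∀ x ∈ T, f x ^ a * g x ^ (1 - a) = ⊤ := by
    intro x hx
    obtain ⟨hxf, hxg⟩ := hx
    have hgx : g x = 0 := by simpa [pos_iff_ne_zero, not_not] using hxg
    rw [hgx, ENNReal.zero_rpow_of_neg (by linarith), ENNReal.mul_top]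
    rw [Ne, ENNReal.rpow_eq_zero_iff_of_pos (by linarith : (0:ℝ) < a)]
    exact (pos_iff_ne_zero.mp hxf)
  refine top_le_iff.mp ?_
  calc (⊤ : ℝ≥0∞) = ∫⁻ _ in T, ⊤ ∂ν := by
        rw [setLIntegral_const, ENNReal.top_mul hνT]
    _ = ∫⁻ x in T, f x ^ a * g x ^ (1 - a) ∂ν := by
        refine setLIntegral_congr_fun hTm (fun x hx => ?_)
        exact (hpt x hx).symm
    _ ≤ hellingerInt a P Q := setLIntegral_le_lintegral _ _


lemma renyiSimple_eq_top_of_sing (hsing : P.MutuallySingular Q) {a : ℝ}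
    (h0 : 0 < a) (hne : a ≠ 1) : renyiSimple a P Q = ⊤ := by
  have hS := (mutuallySingular_iff_S (P := P) (Q := Q)).mp hsing
  rcases lt_or_gt_of_ne hne with hlt | hgt
  · rw [renyiSimple, (hellingerInt_eq_zero_iff h0 hlt).mpr hS, ENNReal.log_zero,
      EReal.coe_mul_bot_of_neg (inv_lt_zero.mpr (by linarith))]
  · rw [renyiSimple, hellingerInt_eq_top_of_sing hgt hS, ENNReal.log_top,
      EReal.coe_mul_top_of_pos (inv_pos.mpr (by linarith))]

lemma renyiSimple_bound_of_not_sing (hn : ¬ P.MutuallySingular Q) {a : ℝ}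
    (h0 : 0 < a) (h1 : a < 1) :
    ∃ r : ℝ, renyiSimple a P Q = (r : EReal) ∧
      |r| ≤ (1 - a)⁻¹ *
        (|Real.log (∫⁻ x, min (P.rnDeriv (P + Q) x) (Q.rnDeriv (P + Q) x) ∂(P + Q)).toReal|
          + Real.log 2) := by
  set ν := P + Q with hν
  set f := P.rnDeriv ν with hfdef
  set g := Q.rnDeriv ν with hgdef
  have hf : Measurable f := Measure.measurable_rnDeriv _ _
  have hg : Measurable g := Measure.measurable_rnDeriv _ _
  set c : ℝ≥0∞ := ∫⁻ x, min (f x) (g x) ∂ν with hc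
  have hS : ν {x | 0 < f x ∧ 0 < g x} ≠ 0 := by
    intro h
    exact hn ((mutuallySingular_iff_S (P := P) (Q := Q)).mpr h)
  have hc0 : c ≠ 0 := by
    rw [hc, ← pos_iff_ne_zero, lintegral_pos_iff_support (hf.min hg)]
    rw [pos_iff_ne_zero]
    convert hS using 2
    ext x
    simp only [Function.mem_support, ne_eq, mem_setOf_eq, pos_iff_ne_zero]
    rw [← not_or]
    exact not_congr (by exact min_eq_bot)
  have hcle : c ≤ 1 := by
    have : c ≤ ∫⁻ x, f x ∂ν := lintegral_mono fun x => min_le_left _ _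
    rwa [Measure.lintegral_rnDeriv (absCont_add_left P Q), measure_univ] at this
  have hct : c ≠ ⊤ := (hcle.trans_lt (by norm_num)).ne
  set H : ℝ≥0∞ := hellingerInt a P Q with hH
  have hcH : c ≤ H := min_le_hellingerInt h0 h1
  have hH2 : H ≤ 2 := by
    have := hellingerInt_le (P := P) (Q := Q) h0 h1
    rwa [measure_univ, measure_univ, one_add_one_eq_two] at this
  have hH0 : H ≠ 0 := fun h => hc0 (le_antisymm (h ▸ hcH) (zero_le))
  have hHt : H ≠ ⊤ := (hH2.trans_lt (by norm_num)).ne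
  have hctR : 0 < c.toReal := ENNReal.toReal_pos hc0 hct
  have hcHR : c.toReal ≤ H.toReal := ENNReal.toReal_mono hHt hcH
  have hH2R : H.toReal ≤ 2 := by
    have := ENNReal.toReal_mono (by norm_num : (2:ℝ≥0∞) ≠ ⊤) hH2
    simpa using this
  have hlog1 : Real.log c.toReal ≤ Real.log H.toReal := Real.log_le_log hctR hcHR
  have hlog2 : Real.log H.toReal ≤ Real.log 2 :=
    Real.log_le_log (lt_of_lt_of_le hctR hcHR) hH2R
  have hlog2pos : (0:ℝ) ≤ Real.log 2 := Real.log_nonneg (by norm_num)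
  refine ⟨(a - 1)⁻¹ * Real.log H.toReal, ?_, ?_⟩
  · rw [renyiSimple, ← hH, ENNReal.log_pos_real hH0 hHt, ← EReal.coe_mul]
  · rw [abs_mul, abs_inv, abs_of_neg (by linarith : a - 1 < 0), neg_sub]
    refine mul_le_mul_of_nonneg_left ?_ (inv_nonneg.mpr (by linarith))
    refine abs_le.mpr ⟨?_, ?_⟩
    · have := neg_abs_le (Real.log c.toReal)
      linarith
    · have := le_abs_self (Real.log c.toReal)
      have h' := abs_nonneg (Real.log c.toReal)
      linarith


lemma renyiDiv_eq_top_of_sing (hsing : P.MutuallySingular Q) (α : ℝ≥0∞) :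
    renyiDiv α P Q = ⊤ := by
  rw [renyiDiv]
  split_ifs with h0 h1 ht
  · have hev : ∀ᶠ a in 𝓝[>] (0:ℝ), renyiSimple a P Q = (⊤ : EReal) := by
      filter_upwards [Ioo_mem_nhdsGT_of_mem
        (by constructor <;> norm_num : (0:ℝ) ∈ Ico (0:ℝ) 1)] with a ha
      exact renyiSimple_eq_top_of_sing hsing ha.1 ha.2.ne
    rw [limsup_congr hev, limsup_const]
  · have hev : ∀ᶠ a in 𝓝[<] (1:ℝ), renyiSimple a P Q = (⊤ : EReal) := by
      filter_upwards [Ioo_mem_nhdsLT_of_mem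
        (by constructor <;> norm_num : (1:ℝ) ∈ Ioc (0:ℝ) 1)] with a ha
      exact renyiSimple_eq_top_of_sing hsing ha.1 ha.2.ne
    rw [limsup_congr hev, limsup_const]
  · have hev : ∀ᶠ a in (atTop : Filter ℝ), renyiSimple a P Q = (⊤ : EReal) := by
      filter_upwards [eventually_gt_atTop (1:ℝ)] with a ha
      exact renyiSimple_eq_top_of_sing hsing (by linarith) ha.ne'
    rw [limsup_congr hev, limsup_const]
  · have hpos : 0 < α.toReal := ENNReal.toReal_pos h0 ht
    have hne : α.toReal ≠ 1 := by
      intro h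
      apply h1
      rw [← ENNReal.toReal_one] at h
      exact (ENNReal.toReal_eq_toReal_iff' ht (by norm_num)).mp h
    exact renyiSimple_eq_top_of_sing hsing hpos hne

lemma renyiDiv_ne_top_of_not_sing (hn : ¬ P.MutuallySingular Q) {α : ℝ≥0∞} (hα : α < 1) :
    renyiDiv α P Q ≠ ⊤ := by
  have hαt : α ≠ ⊤ := ne_top_of_lt hα
  by_cases h0 : α = 0
  case pos =>
    rw [renyiDiv, if_pos h0]
    -- α = 0 : bound the limsup
    set K : ℝ :=
      |Real.log (∫⁻ x, min (P.rnDeriv (P + Q) x) (Q.rnDeriv (P + Q) x) ∂(P + Q)).toReal|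
        + Real.log 2 with hK
    have hKpos : 0 ≤ K := by
      rw [hK]
      have := Real.log_nonneg (by norm_num : (1:ℝ) ≤ 2)
      have := abs_nonneg
        (Real.log (∫⁻ x, min (P.rnDeriv (P + Q) x) (Q.rnDeriv (P + Q) x) ∂(P + Q)).toReal)
      linarith
    have hev : ∀ᶠ a in 𝓝[>] (0:ℝ), renyiSimple a P Q ≤ ((2 * K : ℝ) : EReal) := by
      filter_upwards [Ioc_mem_nhdsGT_of_mem
        (⟨le_rfl, by norm_num⟩ : (0:ℝ) ∈ Ico (0:ℝ) (1/2))] with a ha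
      obtain ⟨r, hr, hrb⟩ := renyiSimple_bound_of_not_sing hn ha.1 (by linarith [ha.2])
      rw [hr, EReal.coe_le_coe_iff]
      have hinv : (1 - a)⁻¹ ≤ 2 := by
        rw [inv_le_comm₀ (by linarith [ha.2]) (by norm_num)]
        linarith [ha.2]
      calc r ≤ |r| := le_abs_self r
        _ ≤ (1 - a)⁻¹ * K := hrb
        _ ≤ 2 * K := mul_le_mul_of_nonneg_right hinv hKpos
    have hle : limsup (fun a : ℝ => renyiSimple a P Q) (𝓝[>] (0:ℝ))
        ≤ ((2 * K : ℝ) : EReal) := limsup_le_of_le (by isBoundedDefault) hev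
    exact ne_top_of_le_ne_top (EReal.coe_ne_top _) hle
  case neg =>
    rw [renyiDiv, if_neg h0, if_neg hα.ne, if_neg hαt]
    have hpos : 0 < α.toReal := ENNReal.toReal_pos h0 hαt
    have hlt : α.toReal < 1 := by
      rw [← ENNReal.toReal_one]
      exact (ENNReal.toReal_lt_toReal hαt (by norm_num)).mpr hα
    obtain ⟨r, hr, -⟩ := renyiSimple_bound_of_not_sing hn hpos hlt
    rw [hr]
    exact EReal.coe_ne_top r

end Prob
end RenyiAux

/-- **Mutual singularity.** For probability measures `P, Q` with densities `p, q`
with respect to a common σ-finite dominating measure `μ`, the following are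
equivalent: (i) `P ⊥ Q`; (ii) `Q({p > 0}) = 0`; (iii) `D_α(P‖Q) = ∞` for some
`α ∈ [0,1)`; (iv) `D_α(P‖Q) = ∞` for all `α ∈ [0,∞]`. -/
theorem renyiDiv_mutuallySingular_iff
    {X : Type*} [MeasurableSpace X] (P Q : Measure X)
    [IsProbabilityMeasure P] [IsProbabilityMeasure Q]
    (μ : Measure X) [SigmaFinite μ] (p q : X → ℝ≥0∞)
    (hp : Measurable p) (hq : Measurable q)
    (hP : P = μ.withDensity p) (hQ : Q = μ.withDensity q) :
    (Measure.MutuallySingular P Q ↔ Q {x | 0 < p x} = 0) ∧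
    (Measure.MutuallySingular P Q ↔ ∃ α : ℝ≥0∞, α < 1 ∧ renyiDiv α P Q = ⊤) ∧
    (Measure.MutuallySingular P Q ↔ ∀ α : ℝ≥0∞, renyiDiv α P Q = ⊤) := by
  have hQμ : Q ≪ μ := by
    rw [hQ]; exact withDensity_absolutelyContinuous μ q
  have hiff1 : Measure.MutuallySingular P Q ↔ Q {x | 0 < p x} = 0 := by
    constructor
    · rintro ⟨A, hA, hPA, hQAc⟩
      have hμA : μ (A ∩ {x | 0 < p x}) = 0 :=
        withDensity_null_inter hp hA (by rw [← hP]; exact hPA)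
      have h1 : Q (A ∩ {x | 0 < p x}) = 0 := hQμ hμA
      refine measure_mono_null ?_ (measure_union_null h1 hQAc)
      intro x hx
      by_cases hxA : x ∈ A
      · exact Or.inl ⟨hxA, hx⟩
      · exact Or.inr hxA
    · intro h
      refine ⟨{x | ¬ 0 < p x}, ?_, ?_, ?_⟩
      · have : {x | ¬ 0 < p x} = p ⁻¹' {0} := by
          ext x; simp [pos_iff_ne_zero]
        rw [this]; exact hp (measurableSet_singleton 0)
      · rw [hP]; exact withDensity_not_pos μ hp
      · rw [Set.compl_setOf]
        simpa only [not_not] using h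
  refine ⟨hiff1, ⟨?_, ?_⟩, ⟨?_, ?_⟩⟩
  · exact fun hs => ⟨0, zero_lt_one, renyiDiv_eq_top_of_sing hs 0⟩
  · rintro ⟨α, hα, htop⟩
    by_contra hns
    exact renyiDiv_ne_top_of_not_sing hns hα htop
  · exact fun hs α => renyiDiv_eq_top_of_sing hs α
  · intro h
    by_contra hns
    exact renyiDiv_ne_top_of_not_sing hns (zero_lt_one) (h 0)
end

section
/- (Generalized Pinsker inequality.) For any order α ∈ (0,1] and any probability measures P, Q on a measurable space dominated by a common σ-finite measure μ, (α/2)·V(P,Q)² ≤ D_α(P‖Q), where V(P,Q) = ∫ |p − q| dμ is the total variation distance. -/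
open MeasureTheory Real Filter Set
open scoped ENNReal NNReal Topology Classical

lemma key_real (α : ℝ) (h0 : 0 < α) (h1 : α < 1) (t : ℝ) (ht : 0 ≤ t) :
    α*(1-α)*(t-1)^2 ≤ ((4-2*α)/3*t+(2+2*α)/3)*(α*t+(1-α)-t^α) := by
  set a : ℝ := (4-2*α)/3 with ha_def
  set b : ℝ := (2+2*α)/3 with hb_def
  have ha : 0 < a := by rw [ha_def]; linarith
  have hb : 0 < b := by rw [hb_def]; linarith
  have hab : a + b = 2 := by rw [ha_def, hb_def]; ring
  have hba : b = 2 - a := by linarith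
  set K : ℝ := α*(1-α)/a^2 with hK_def
  have hKa : K * a^2 = α*(1-α) := by
    rw [hK_def]; field_simp
  have hupos : ∀ s : ℝ, 0 ≤ s → 0 < a*s+b := by
    intro s hs
    have : 0 ≤ a*s := mul_nonneg ha.le hs
    linarith
  rcases eq_or_lt_of_le ht with rfl | htpos
  · -- t = 0
    rw [Real.zero_rpow h0.ne']
    have : α ≤ b := by rw [hb_def]; linarith
    nlinarith
  · -- t > 0 : use convexity of F
    set F : ℝ → ℝ := fun t => α*t + (1-α) - t^α - K*(a*t + b - 4 + 4/(a*t+b)) with hF_def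
    set F1 : ℝ → ℝ := fun t => α - α*t^(α-1) - K*(a - 4*a/(a*t+b)^2) with hF1_def
    set F2 : ℝ → ℝ := fun t => α*(1-α)*t^(α-2) - K*(8*a^2/(a*t+b)^3) with hF2_def
    have hderivF : ∀ s : ℝ, 0 < s → HasDerivAt F (F1 s) s := by
      intro s hs
      have hu : 0 < a*s+b := hupos s hs.le
      have h1' : HasDerivAt (fun t : ℝ => t ^ α) (α * s^(α-1)) s := by
        simpa using Real.hasDerivAt_rpow_const (p := α) (Or.inl hs.ne')
      have h2' : HasDerivAt (fun t : ℝ => a*t+b) a s := by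
        simpa using ((hasDerivAt_id s).const_mul a).add_const b
      have h3' : HasDerivAt (fun t : ℝ => 4/(a*t+b)) (-(4*a)/(a*s+b)^2) s := by
        simp only [div_eq_mul_inv]
        exact ((h2'.inv hu.ne').const_mul (4:ℝ)).congr_deriv (by ring)
      have : HasDerivAt F (α - α*s^(α-1) - K*(a + -(4*a)/(a*s+b)^2)) s := by
        have hlin : HasDerivAt (fun t : ℝ => α*t + (1-α)) α s := by
          simpa using ((hasDerivAt_id s).const_mul α).add_const (1-α)
        have hrest : HasDerivAt (fun t : ℝ => K*(a*t + b - 4 + 4/(a*t+b)))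
            (K*(a + -(4*a)/(a*s+b)^2)) s := by
          have : HasDerivAt (fun t : ℝ => a*t + b - 4 + 4/(a*t+b)) (a + -(4*a)/(a*s+b)^2) s := by
            exact (h2'.sub_const 4).add h3'
          exact this.const_mul K
        exact (hlin.sub h1').sub hrest
      convert this using 1
      rw [hF1_def]
      ring
    have hderivF1 : ∀ s : ℝ, 0 < s → HasDerivAt F1 (F2 s) s := by
      intro s hs
      have hu : 0 < a*s+b := hupos s hs.le
      have h1' : HasDerivAt (fun t : ℝ => t ^ (α-1)) ((α-1) * s^(α-1-1)) s :=
        Real.hasDerivAt_rpow_const (p := α-1) (Or.inl hs.ne')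
      have h2' : HasDerivAt (fun t : ℝ => a*t+b) a s := by
        simpa using ((hasDerivAt_id s).const_mul a).add_const b
      have hsq : HasDerivAt (fun t : ℝ => (a*t+b)^2) (2*(a*s+b)*a) s := by
        have := h2'.pow 2
        exact this.congr_deriv (by norm_num)
      have h3' : HasDerivAt (fun t : ℝ => 4*a/(a*t+b)^2) (-(8*a^2)/(a*s+b)^3) s := by
        have hsqne : (a*s+b)^2 ≠ 0 := by positivity
        simp only [div_eq_mul_inv]
        exact ((hsq.inv hsqne).const_mul (4*a)).congr_deriv (by field_simp <;> ring)
      have : HasDerivAt F1 (-(α * ((α-1) * s^(α-1-1))) - K*(0 - -(8*a^2)/(a*s+b)^3)) s := by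
        have hc : HasDerivAt (fun _ : ℝ => α) 0 s := hasDerivAt_const s α
        have hmul : HasDerivAt (fun t : ℝ => α * t^(α-1)) (α * ((α-1) * s^(α-1-1))) s :=
          h1'.const_mul α
        have hrest : HasDerivAt (fun t : ℝ => K*(a - 4*a/(a*t+b)^2))
            (K*(0 - -(8*a^2)/(a*s+b)^3)) s :=
          (((hasDerivAt_const s a).sub h3')).const_mul K
        exact ((hc.sub hmul).sub hrest).congr_deriv (by ring)
      convert this using 1
      rw [hF2_def]
      have : α - 1 - 1 = α - 2 := by ring
      rw [this]
      field_simp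
      ring
    -- F2 ≥ 0 on Ioi 0
    have hF2nonneg : ∀ s : ℝ, 0 < s → 0 ≤ F2 s := by
      intro s hs
      have hu : 0 < a*s+b := hupos s hs.le
      -- AM-GM : s^(a/2) ≤ (a/2)*s + b/2
      have hamgm : s ^ (a/2) ≤ (a/2)*s + (b/2) := by
        have := Real.geom_mean_le_arith_mean2_weighted (w₁ := a/2) (w₂ := b/2)
          (p₁ := s) (p₂ := 1) (by positivity) (by positivity) hs.le zero_le_one
          (by linarith)
        simpa using this
      have hkey : 8 * s^(2-α) ≤ (a*s+b)^3 := by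
        have h32 : (s ^ (a/2))^3 ≤ ((a/2)*s + (b/2))^3 :=
          pow_le_pow_left₀ (by positivity) hamgm 3
        have hl : (s ^ (a/2))^3 = s^(2-α) := by
          rw [← Real.rpow_natCast (s ^ (a/2)) 3, ← Real.rpow_mul hs.le]
          congr 1
          push_cast
          rw [ha_def]; ring
        have hr : ((a/2)*s + (b/2))^3 = (a*s+b)^3/8 := by ring
        rw [hl, hr] at h32
        linarith
      -- conclude
      have hs2 : (0:ℝ) < s^(2-α) := Real.rpow_pos_of_pos hs _
      have h8 : 8/(a*s+b)^3 ≤ s^(α-2) := by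
        have hsinv : s^(α-2) = 1/s^(2-α) := by
          rw [show (α-2:ℝ) = -(2-α) by ring, Real.rpow_neg hs.le, one_div]
        rw [hsinv, div_le_div_iff₀ (by positivity) hs2]
        nlinarith
      have : K*(8*a^2/(a*s+b)^3) = α*(1-α)*(8/(a*s+b)^3) := by
        rw [hK_def]; field_simp
      rw [hF2_def]
      simp only []
      rw [this]
      have hαα : 0 < α*(1-α) := by nlinarith
      nlinarith [mul_le_mul_of_nonneg_left h8 hαα.le]
    -- F1 monotone on Ioi 0
    have hF1cont : ContinuousOn F1 (Ioi 0) := by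
      intro s hs
      exact ((hderivF1 s hs).differentiableAt.continuousAt).continuousWithinAt
    have hF1mono : MonotoneOn F1 (Ioi 0) := by
      apply monotoneOn_of_deriv_nonneg (convex_Ioi 0) hF1cont
      · intro s hs
        rw [interior_Ioi] at hs
        exact ((hderivF1 s hs).differentiableAt).differentiableWithinAt
      · intro s hs
        rw [interior_Ioi] at hs
        rw [(hderivF1 s hs).deriv]
        exact hF2nonneg s hs
    have hF1one : F1 1 = 0 := by
      rw [hF1_def]
      simp only [Real.one_rpow, mul_one]
      rw [hab]
      have h4 : a - 4*a/(2:ℝ)^2 = 0 := by ring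
      rw [h4, mul_zero]
      ring
    -- F t ≥ 0 for t > 0
    have hFt : 0 ≤ F t := by
      rcases le_or_gt 1 t with h1t | ht1
      · -- monotone on Ici 1
        have hFmono : MonotoneOn F (Ici 1) := by
          apply monotoneOn_of_deriv_nonneg (convex_Ici 1)
          · intro s hs
            exact ((hderivF s (lt_of_lt_of_le one_pos hs)).differentiableAt.continuousAt).continuousWithinAt
          · intro s hs
            rw [interior_Ici] at hs
            exact ((hderivF s (lt_trans one_pos hs)).differentiableAt).differentiableWithinAt
          · intro s hs
            rw [interior_Ici] at hs
            rw [(hderivF s (lt_trans one_pos hs)).deriv]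
            have := hF1mono (mem_Ioi.mpr one_pos) (mem_Ioi.mpr (lt_trans one_pos hs)) hs.le
            rw [hF1one] at this
            exact this
        have hF1' : F 1 = 0 := by
          rw [hF_def]
          simp only [Real.one_rpow, mul_one]
          rw [hab]
          norm_num
        have := hFmono (mem_Ici.mpr le_rfl) (mem_Ici.mpr h1t) h1t
        rw [hF1'] at this
        exact this
      · -- antitone on Ioc 0 1
        have hFanti : AntitoneOn F (Ioc 0 1) := by
          apply antitoneOn_of_deriv_nonpos (convex_Ioc 0 1)
          · intro s hs
            exact ((hderivF s hs.1).differentiableAt.continuousAt).continuousWithinAt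
          · intro s hs
            rw [interior_Ioc] at hs
            exact ((hderivF s hs.1).differentiableAt).differentiableWithinAt
          · intro s hs
            rw [interior_Ioc] at hs
            rw [(hderivF s hs.1).deriv]
            have := hF1mono (mem_Ioi.mpr hs.1) (mem_Ioi.mpr one_pos) hs.2.le
            rw [hF1one] at this
            exact this
        have hF1' : F 1 = 0 := by
          rw [hF_def]
          simp only [Real.one_rpow, mul_one]
          rw [hab]
          norm_num
        have := hFanti (mem_Ioc.mpr ⟨htpos, ht1.le⟩) (mem_Ioc.mpr ⟨one_pos, le_rfl⟩) ht1.le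
        rw [hF1'] at this
        exact this
    -- convert F t ≥ 0 to the goal
    have hu : 0 < a*t+b := hupos t ht
    rw [hF_def] at hFt
    simp only [] at hFt
    have h2 : a*t+b-2 = a*(t-1) := by rw [hba]; ring
    have hmain : K*(a*t + b - 4 + 4/(a*t+b)) ≤ α*t + (1-α) - t^α := by linarith
    have := mul_le_mul_of_nonneg_left hmain hu.le
    have h4 : (a*t+b) * (a*t + b - 4 + 4/(a*t+b)) = (a*(t-1))^2 := by
      rw [← h2]; field_simp; ring
    calc α*(1-α)*(t-1)^2 = K*(a*(t-1))^2 := by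
          rw [← hKa]; ring
      _ = (a*t+b) * (K*(a*t + b - 4 + 4/(a*t+b))) := by
          rw [← h4]; ring
      _ ≤ (a*t+b) * (α*t + (1-α) - t^α) := this


lemma key_real2 (α : ℝ) (h0 : 0 < α) (h1 : α < 1) (x y : ℝ) (hx : 0 ≤ x) (hy : 0 ≤ y) :
    α*(1-α)*(x-y)^2 ≤ ((4-2*α)/3*x+(2+2*α)/3*y) * (α*x+(1-α)*y - x^α*y^(1-α)) := by
  rcases eq_or_lt_of_le hy with rfl | hy'
  · -- y = 0
    rw [Real.zero_rpow (by linarith : 1-α ≠ 0)]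
    rcases eq_or_lt_of_le hx with rfl | hx'
    · simp
    · simp only [mul_zero, add_zero, sub_zero]
      nlinarith [mul_nonneg (mul_nonneg (by linarith : (0:ℝ) ≤ (4-2*α)/3 - (1-α)) h0.le)
        (sq_nonneg x)]
  · have key := key_real α h0 h1 (x/y) (div_nonneg hx hy'.le)
    have hyne : y ≠ 0 := hy'.ne'
    have hyα : (0:ℝ) < y^α := Real.rpow_pos_of_pos hy' α
    have hc : (x/y)^α * y = x^α * y^(1-α) := by
      rw [Real.div_rpow hx hy'.le, Real.rpow_sub hy', Real.rpow_one]
      field_simp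
    have h2 := mul_le_mul_of_nonneg_left key (sq_nonneg y)
    have e1 : y^2 * (α*(1-α)*(x/y-1)^2) = α*(1-α)*(x-y)^2 := by
      first
      | (field_simp; ring)
      | field_simp
    have e2 : y^2 * (((4-2*α)/3*(x/y)+(2+2*α)/3)*(α*(x/y)+(1-α)-(x/y)^α)) =
        ((4-2*α)/3*x+(2+2*α)/3*y) * (α*x+(1-α)*y - x^α*y^(1-α)) := by
      rw [← hc]
      field_simp
    rw [e1, e2] at h2
    exact h2

lemma key_ennreal (α : ℝ) (h0 : 0 < α) (h1 : α < 1) (x y : ℝ≥0∞) (hx : x ≠ ∞) (hy : y ≠ ∞) :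
    (x - y) + (y - x) ≤
      (ENNReal.ofReal (α*(1-α))⁻¹ *
        ((ENNReal.ofReal α * x + ENNReal.ofReal (1-α) * y) - x^α * y^(1-α))) ^ (1/2:ℝ)
      * (ENNReal.ofReal ((4-2*α)/3) * x + ENNReal.ofReal ((2+2*α)/3) * y) ^ (1/2:ℝ) := by
  set xr := x.toReal with hxr
  set yr := y.toReal with hyr
  have hxr0 : 0 ≤ xr := ENNReal.toReal_nonneg
  have hyr0 : 0 ≤ yr := ENNReal.toReal_nonneg
  have hxx : x = ENNReal.ofReal xr := (ENNReal.ofReal_toReal hx).symm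
  have hyy : y = ENNReal.ofReal yr := (ENNReal.ofReal_toReal hy).symm
  -- LHS = ofReal |xr - yr|
  have hlhs : (x - y) + (y - x) = ENNReal.ofReal |xr - yr| := by
    rw [hxx, hyy, ← ENNReal.ofReal_sub _ hyr0, ← ENNReal.ofReal_sub _ hxr0]
    rcases le_total xr yr with h | h
    · rw [ENNReal.ofReal_of_nonpos (by linarith), abs_of_nonpos (by linarith), zero_add, neg_sub]
    · rw [ENNReal.ofReal_of_nonpos (show yr - xr ≤ 0 by linarith), abs_of_nonneg (by linarith),
        add_zero]
  -- RHS pieces as ofReal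
  have hg : x^α * y^(1-α) = ENNReal.ofReal (xr^α * yr^(1-α)) := by
    rw [hxx, hyy, ENNReal.ofReal_rpow_of_nonneg hxr0 h0.le,
      ENNReal.ofReal_rpow_of_nonneg hyr0 (by linarith),
      ← ENNReal.ofReal_mul (Real.rpow_nonneg hxr0 α)]
  have hm : ENNReal.ofReal α * x + ENNReal.ofReal (1-α) * y
      = ENNReal.ofReal (α*xr + (1-α)*yr) := by
    rw [hxx, hyy, ← ENNReal.ofReal_mul h0.le, ← ENNReal.ofReal_mul (by linarith : (0:ℝ) ≤ 1-α),
      ← ENNReal.ofReal_add (mul_nonneg h0.le hxr0) (mul_nonneg (by linarith) hyr0)]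
  have hw : ENNReal.ofReal ((4-2*α)/3) * x + ENNReal.ofReal ((2+2*α)/3) * y
      = ENNReal.ofReal ((4-2*α)/3*xr + (2+2*α)/3*yr) := by
    rw [hxx, hyy, ← ENNReal.ofReal_mul (by linarith : (0:ℝ) ≤ (4-2*α)/3),
      ← ENNReal.ofReal_mul (by linarith : (0:ℝ) ≤ (2+2*α)/3),
      ← ENNReal.ofReal_add (mul_nonneg (by linarith) hxr0) (mul_nonneg (by linarith) hyr0)]
  have hu : (ENNReal.ofReal α * x + ENNReal.ofReal (1-α) * y) - x^α * y^(1-α)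
      = ENNReal.ofReal (α*xr + (1-α)*yr - xr^α * yr^(1-α)) := by
    rw [hm, hg, ← ENNReal.ofReal_sub _
      (mul_nonneg (Real.rpow_nonneg hxr0 _) (Real.rpow_nonneg hyr0 _))]
  have hgr0 : (0:ℝ) ≤ xr^α * yr^(1-α) :=
    mul_nonneg (Real.rpow_nonneg hxr0 _) (Real.rpow_nonneg hyr0 _)
  have haa : 0 < α*(1-α) := by nlinarith
  have hUr0 : (0:ℝ) ≤ α*xr + (1-α)*yr - xr^α * yr^(1-α) := by
    have := Real.geom_mean_le_arith_mean2_weighted h0.le (by linarith : (0:ℝ) ≤ 1-α)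
      hxr0 hyr0 (by ring)
    linarith
  have hcu0 : (0:ℝ) ≤ (α*(1-α))⁻¹ * (α*xr + (1-α)*yr - xr^α*yr^(1-α)) :=
    mul_nonneg (inv_nonneg.mpr haa.le) hUr0
  have hw0' : (0:ℝ) ≤ (4-2*α)/3*xr + (2+2*α)/3*yr :=
    add_nonneg (mul_nonneg (by linarith) hxr0) (mul_nonneg (by linarith) hyr0)
  rw [hlhs, hu, hw, ← ENNReal.ofReal_mul (inv_nonneg.mpr haa.le)]
  rw [ENNReal.ofReal_rpow_of_nonneg hcu0 (by norm_num : (0:ℝ) ≤ 1/2),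
    ENNReal.ofReal_rpow_of_nonneg hw0' (by norm_num : (0:ℝ) ≤ 1/2),
    ← ENNReal.ofReal_mul (Real.rpow_nonneg hcu0 _)]
  apply ENNReal.ofReal_le_ofReal
  -- now a real inequality
  have key := key_real2 α h0 h1 xr yr hxr0 hyr0
  set U : ℝ := α*xr + (1-α)*yr - xr^α * yr^(1-α) with hU
  set W : ℝ := (4-2*α)/3*xr + (2+2*α)/3*yr with hW
  have habs : |xr - yr|^2 = (xr-yr)^2 := sq_abs _
  have h5 : |xr - yr|^2 ≤ ((α*(1-α))⁻¹ * U) * W := by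
    rw [habs]
    rw [← sub_nonneg]
    have : (α*(1-α))⁻¹ * U * W - (xr-yr)^2
        = (α*(1-α))⁻¹ * (W * U - α*(1-α)*(xr-yr)^2) := by
      have hinv : (α*(1-α))⁻¹ * (α*(1-α)) = 1 := inv_mul_cancel₀ haa.ne'
      linear_combination (xr-yr)^2 * hinv
    rw [this]
    apply mul_nonneg (inv_nonneg.mpr haa.le)
    nlinarith
  calc |xr - yr| = (|xr-yr|^2)^(1/2:ℝ) := by
        rw [← Real.rpow_natCast |xr-yr| 2, ← Real.rpow_mul (abs_nonneg _)]
        norm_num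
    _ ≤ (((α*(1-α))⁻¹ * U) * W)^(1/2:ℝ) := by
        apply Real.rpow_le_rpow (by positivity) h5 (by norm_num)
    _ = ((α*(1-α))⁻¹ * U)^(1/2:ℝ) * W^(1/2:ℝ) := by
        rw [Real.mul_rpow hcu0 hw0']


/-- integrating against `μ` or against the density part of `μ` w.r.t.
`ν = μ.withDensity f` agree for functions vanishing where `f` vanishes. -/
lemma aux1 {X : Type*} [MeasurableSpace X] (μ ν : Measure X) [SigmaFinite μ]
    [IsFiniteMeasure ν] {f g : X → ℝ≥0∞} (hf : Measurable f) (hg : Measurable g)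
    (hν : ν = μ.withDensity f) (hg0 : ∀ x, f x = 0 → g x = 0) :
    ∫⁻ x, g x ∂μ = ∫⁻ x, g x * μ.rnDeriv ν x ∂ν := by
  have hsf : SigmaFinite ν := inferInstance
  -- Lebesgue decomposition
  have hdec : μ = μ.singularPart ν + ν.withDensity (μ.rnDeriv ν) :=
    μ.haveLebesgueDecomposition_add ν
  have hsing : μ.singularPart ν ⟂ₘ ν := Measure.mutuallySingular_singularPart μ ν
  obtain ⟨t, ht, h1, h2⟩ := hsing
  -- on tᶜ, f = 0 a.e. μ
  have hfres : ∀ᵐ x ∂μ, x ∈ tᶜ → f x = 0 := by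
    have : ∫⁻ x in tᶜ, f x ∂μ = 0 := by
      rw [← withDensity_apply f ht.compl, ← hν, h2]
    exact (setLIntegral_eq_zero_iff ht.compl hf).mp this
  have hμts : μ (tᶜ ∩ {x | g x ≠ 0}) = 0 := by
    have h3 := ae_iff.mp hfres
    refine measure_mono_null ?_ h3
    intro x hx
    simp only [mem_setOf_eq, Classical.not_imp]
    exact ⟨hx.1, fun hfx => hx.2 (hg0 x hfx)⟩
  -- singular part integral vanishes
  have hsing0 : ∫⁻ x, g x ∂(μ.singularPart ν) = 0 := by
    refine (lintegral_eq_zero_iff hg).mpr ?_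
    rw [Filter.EventuallyEq, ae_iff]
    simp only [Pi.zero_apply]
    have hsub : {x | g x ≠ 0} ⊆ t ∪ (tᶜ ∩ {x | g x ≠ 0}) := by
      intro x hx
      by_cases hxt : x ∈ t
      · exact Or.inl hxt
      · exact Or.inr ⟨hxt, hx⟩
    refine measure_mono_null hsub ?_
    refine le_antisymm ?_ zero_le
    refine (measure_union_le _ _).trans ?_
    rw [h1]
    have : μ.singularPart ν (tᶜ ∩ {x | g x ≠ 0}) = 0 :=
      measure_mono_null (subset_refl _) (le_antisymm
        ((Measure.singularPart_le μ ν (tᶜ ∩ {x | g x ≠ 0})).trans hμts.le) zero_le)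
    simp [this]
  conv_lhs => rw [hdec]
  rw [lintegral_add_measure, hsing0, zero_add,
    lintegral_withDensity_eq_lintegral_mul ν (Measure.measurable_rnDeriv μ ν) hg]
  congr 1
  ext x
  simp [mul_comm]

lemma renyi_pinsker_simple {X : Type*} [MeasurableSpace X] (P Q : Measure X)
    [IsProbabilityMeasure P] [IsProbabilityMeasure Q]
    (μ : Measure X) [SigmaFinite μ] (p q : X → ℝ≥0∞)
    (hp : Measurable p) (hq : Measurable q)
    (hP : P = μ.withDensity p) (hQ : Q = μ.withDensity q)
    (α : ℝ) (hα0 : 0 < α) (hα1 : α < 1) :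
    ((α / 2 * (∫⁻ x, ((p x - q x) + (q x - p x)) ∂μ).toReal ^ 2 : ℝ) : EReal)
      ≤ renyiSimple α P Q := by
  have h1α : (0:ℝ) < 1 - α := by linarith
  have haa : (0:ℝ) < α * (1-α) := by nlinarith
  -- basic integrals
  have hpInt : ∫⁻ x, p x ∂μ = 1 := by
    have h := measure_univ (μ := P)
    rw [hP, withDensity_apply _ MeasurableSet.univ, setLIntegral_univ] at h
    exact h
  have hqInt : ∫⁻ x, q x ∂μ = 1 := by
    have h := measure_univ (μ := Q)
    rw [hQ, withDensity_apply _ MeasurableSet.univ, setLIntegral_univ] at h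
    exact h
  have hp_ae : ∀ᵐ x ∂μ, p x ≠ ∞ := by
    filter_upwards [ae_lt_top hp (by rw [hpInt]; exact ENNReal.one_ne_top)] with x hx using hx.ne
  have hq_ae : ∀ᵐ x ∂μ, q x ≠ ∞ := by
    filter_upwards [ae_lt_top hq (by rw [hqInt]; exact ENNReal.one_ne_top)] with x hx using hx.ne
  have hgmeas : Measurable (fun x => (p x)^α * (q x)^(1-α)) :=
    (hp.pow_const α).mul (hq.pow_const (1-α))
  -- the Hellinger integral equals the `μ`-integral of `p^α q^(1-α)`
  have hν : P + Q = μ.withDensity (fun x => p x + q x) := by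
    rw [hP, hQ, ← withDensity_add_left hp]
    rfl
  have hpr : P.rnDeriv (P+Q) =ᵐ[(P+Q)] fun x => p x * μ.rnDeriv (P+Q) x := by
    have h := Measure.rnDeriv_withDensity_left (μ := μ) (ν := P + Q) hp.aemeasurable hp_ae
    rwa [← hP] at h
  have hqr : Q.rnDeriv (P+Q) =ᵐ[(P+Q)] fun x => q x * μ.rnDeriv (P+Q) x := by
    have h := Measure.rnDeriv_withDensity_left (μ := μ) (ν := P + Q) hq.aemeasurable hq_ae
    rwa [← hQ] at h
  have hH : hellingerInt α P Q = ∫⁻ x, (p x)^α * (q x)^(1-α) ∂μ := by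
    rw [hellingerInt]
    have e1 : ∫⁻ x, P.rnDeriv (P+Q) x ^ α * Q.rnDeriv (P+Q) x ^ (1-α) ∂(P+Q)
        = ∫⁻ x, ((p x)^α * (q x)^(1-α)) * μ.rnDeriv (P+Q) x ∂(P+Q) := by
      apply lintegral_congr_ae
      filter_upwards [hpr, hqr] with x h1 h2
      rw [h1, h2, ENNReal.mul_rpow_of_nonneg _ _ hα0.le,
        ENNReal.mul_rpow_of_nonneg _ _ h1α.le]
      have hr : (μ.rnDeriv (P+Q) x)^α * (μ.rnDeriv (P+Q) x)^(1-α) = μ.rnDeriv (P+Q) x := by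
        rcases eq_or_ne (μ.rnDeriv (P+Q) x) 0 with hr0 | hr0
        · rw [hr0, ENNReal.zero_rpow_of_pos hα0, zero_mul]
        rcases eq_or_ne (μ.rnDeriv (P+Q) x) ⊤ with hrt | hrt
        · rw [hrt, ENNReal.top_rpow_of_pos hα0, ENNReal.top_rpow_of_pos h1α]
          simp
        · rw [← ENNReal.rpow_add _ _ hr0 hrt]
          norm_num
      calc (p x)^α * (μ.rnDeriv (P+Q) x)^α * ((q x)^(1-α) * (μ.rnDeriv (P+Q) x)^(1-α))
          = (p x)^α * (q x)^(1-α) * ((μ.rnDeriv (P+Q) x)^α * (μ.rnDeriv (P+Q) x)^(1-α)) := by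
            ring
        _ = (p x)^α * (q x)^(1-α) * μ.rnDeriv (P+Q) x := by rw [hr]
    rw [e1, ← aux1 μ (P+Q) (hp.add hq) hgmeas hν ?_]
    intro x hx
    have : p x = 0 := (add_eq_zero.mp hx).1
    simp [this, ENNReal.zero_rpow_of_pos hα0]
  -- AM-GM and H ≤ 1
  set H := ∫⁻ x, (p x)^α * (q x)^(1-α) ∂μ with hHdef
  have hAMGM : ∀ᵐ x ∂μ, (p x)^α * (q x)^(1-α)
      ≤ ENNReal.ofReal α * p x + ENNReal.ofReal (1-α) * q x := by
    filter_upwards [hp_ae, hq_ae] with x hxp hxq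
    have hxx : p x = ENNReal.ofReal (p x).toReal := (ENNReal.ofReal_toReal hxp).symm
    have hyy : q x = ENNReal.ofReal (q x).toReal := (ENNReal.ofReal_toReal hxq).symm
    rw [hxx, hyy, ENNReal.ofReal_rpow_of_nonneg ENNReal.toReal_nonneg hα0.le,
      ENNReal.ofReal_rpow_of_nonneg ENNReal.toReal_nonneg h1α.le,
      ← ENNReal.ofReal_mul (Real.rpow_nonneg ENNReal.toReal_nonneg _),
      ← ENNReal.ofReal_mul hα0.le, ← ENNReal.ofReal_mul h1α.le,
      ← ENNReal.ofReal_add (mul_nonneg hα0.le ENNReal.toReal_nonneg)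
        (mul_nonneg h1α.le ENNReal.toReal_nonneg)]
    exact ENNReal.ofReal_le_ofReal
      (Real.geom_mean_le_arith_mean2_weighted hα0.le h1α.le
        ENNReal.toReal_nonneg ENNReal.toReal_nonneg (by ring))
  have hMInt : ∫⁻ x, (ENNReal.ofReal α * p x + ENNReal.ofReal (1-α) * q x) ∂μ = 1 := by
    rw [lintegral_add_left (hp.const_mul _), lintegral_const_mul _ hp,
      lintegral_const_mul _ hq, hpInt, hqInt, mul_one, mul_one,
      ← ENNReal.ofReal_add hα0.le h1α.le]
    norm_num
  have hH1 : H ≤ 1 := by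
    rw [← hMInt]
    exact lintegral_mono_ae hAMGM
  have hHne : H ≠ ⊤ := (hH1.trans_lt ENNReal.one_lt_top).ne
  -- the integral of u
  set u : X → ℝ≥0∞ :=
    fun x => (ENNReal.ofReal α * p x + ENNReal.ofReal (1-α) * q x) - (p x)^α * (q x)^(1-α)
    with hudef
  have humeas : Measurable u :=
    ((measurable_const.mul hp).add (measurable_const.mul hq)).sub hgmeas
  have huInt : ∫⁻ x, u x ∂μ = 1 - H := by
    rw [hudef]
    rw [lintegral_sub hgmeas hHne hAMGM, hMInt]
  -- the integral of w
  set w : X → ℝ≥0∞ :=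
    fun x => ENNReal.ofReal ((4-2*α)/3) * p x + ENNReal.ofReal ((2+2*α)/3) * q x with hwdef
  have hwmeas : Measurable w := (measurable_const.mul hp).add (measurable_const.mul hq)
  have hwInt : ∫⁻ x, w x ∂μ = 2 := by
    rw [hwdef, lintegral_add_left (hp.const_mul _), lintegral_const_mul _ hp,
      lintegral_const_mul _ hq, hpInt, hqInt, mul_one, mul_one,
      ← ENNReal.ofReal_add (by linarith) (by linarith)]
    rw [show (4-2*α)/3 + (2+2*α)/3 = (2:ℝ) by ring]
    simp [ENNReal.ofReal_ofNat]
  -- Cauchy-Schwarz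
  set c : ℝ≥0∞ := ENNReal.ofReal (α*(1-α))⁻¹ with hcdef
  have hd_le : ∀ᵐ x ∂μ, (p x - q x) + (q x - p x) ≤ (c * u x)^(1/2:ℝ) * (w x)^(1/2:ℝ) := by
    filter_upwards [hp_ae, hq_ae] with x hxp hxq
    exact key_ennreal α hα0 hα1 _ _ hxp hxq
  have hconj : Real.HolderConjugate 2 2 := Real.HolderConjugate.two_two
  have hsq : ∀ z : ℝ≥0∞, (z^(1/2:ℝ))^(2:ℝ) = z := by
    intro z
    rw [← ENNReal.rpow_mul]
    norm_num
  have hcuInt : ∫⁻ x, ((c * u x)^(1/2:ℝ))^(2:ℝ) ∂μ = c * (1 - H) := by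
    calc ∫⁻ x, ((c * u x)^(1/2:ℝ))^(2:ℝ) ∂μ = ∫⁻ x, c * u x ∂μ := by
          apply lintegral_congr
          intro x
          exact hsq _
      _ = c * (1 - H) := by rw [lintegral_const_mul _ humeas, huInt]
  have hwInt2 : ∫⁻ x, ((w x)^(1/2:ℝ))^(2:ℝ) ∂μ = 2 := by
    calc ∫⁻ x, ((w x)^(1/2:ℝ))^(2:ℝ) ∂μ = ∫⁻ x, w x ∂μ := by
          apply lintegral_congr
          intro x
          exact hsq _
      _ = 2 := hwInt
  set V : ℝ≥0∞ := ∫⁻ x, (p x - q x) + (q x - p x) ∂μ with hVdef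
  have hVle : V ≤ (c * (1-H))^(1/2:ℝ) * (2:ℝ≥0∞)^(1/2:ℝ) := by
    have h1 : V ≤ ∫⁻ x, (fun x => (c * u x)^(1/2:ℝ)) x * (fun x => (w x)^(1/2:ℝ)) x ∂μ :=
      lintegral_mono_ae hd_le
    have h2 := ENNReal.lintegral_mul_le_Lp_mul_Lq μ hconj
      (f := fun x => (c * u x)^(1/2:ℝ)) (g := fun x => (w x)^(1/2:ℝ))
      ((measurable_const.mul humeas).pow_const _).aemeasurable
      (hwmeas.pow_const _).aemeasurable
    rw [hcuInt, hwInt2] at h2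
    calc V ≤ _ := h1
      _ ≤ (c * (1-H))^(1/(2:ℝ)) * (2:ℝ≥0∞)^(1/(2:ℝ)) := h2
  -- pass to real numbers
  have hVle2 : V ≤ 2 := by
    have hpt : ∀ x, (p x - q x) + (q x - p x) ≤ p x + q x :=
      fun x => add_le_add tsub_le_self tsub_le_self
    calc V ≤ ∫⁻ x, p x + q x ∂μ := lintegral_mono hpt
      _ = 2 := by rw [lintegral_add_left hp, hpInt, hqInt, one_add_one_eq_two]
  have hVne : V ≠ ⊤ := (hVle2.trans_lt (by norm_num)).ne
  set Vr := V.toReal with hVrdef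
  set h := H.toReal with hhdef
  have hh1 : h ≤ 1 := by
    simpa using ENNReal.toReal_mono ENNReal.one_ne_top hH1
  have hcne : c ≠ ⊤ := ENNReal.ofReal_ne_top
  have h1Hne : (1:ℝ≥0∞) - H ≠ ⊤ := (tsub_le_self.trans_lt ENNReal.one_lt_top).ne
  have hRHSne : (c * (1-H))^(1/2:ℝ) * (2:ℝ≥0∞)^(1/2:ℝ) ≠ ⊤ := by
    apply ENNReal.mul_ne_top
    · exact ENNReal.rpow_ne_top_of_nonneg (by norm_num) (ENNReal.mul_ne_top hcne h1Hne)
    · exact ENNReal.rpow_ne_top_of_nonneg (by norm_num) (by norm_num)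
  have hVr_le : Vr ≤ ((α*(1-α))⁻¹ * (1-h))^(1/2:ℝ) * (2:ℝ)^(1/2:ℝ) := by
    have h3 := ENNReal.toReal_mono hRHSne hVle
    rw [ENNReal.toReal_mul, ← ENNReal.toReal_rpow, ← ENNReal.toReal_rpow, ENNReal.toReal_mul,
      ENNReal.toReal_ofReal (inv_nonneg.mpr haa.le),
      ENNReal.toReal_sub_of_le hH1 ENNReal.one_ne_top] at h3
    simpa using h3
  have h1h0 : 0 ≤ 1 - h := by linarith
  have hVr0 : 0 ≤ Vr := ENNReal.toReal_nonneg
  have hVrsq : Vr^2 ≤ (α*(1-α))⁻¹ * (1-h) * 2 := by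
    have hA : (((α*(1-α))⁻¹ * (1-h))^(1/2:ℝ))^2 = (α*(1-α))⁻¹ * (1-h) := by
      rw [← Real.rpow_natCast _ 2, ← Real.rpow_mul (by positivity)]
      norm_num
    have hB : (((2:ℝ))^(1/2:ℝ))^2 = 2 := by
      rw [← Real.rpow_natCast _ 2, ← Real.rpow_mul (by norm_num)]
      norm_num
    calc Vr^2 ≤ (((α*(1-α))⁻¹*(1-h))^(1/2:ℝ) * ((2:ℝ))^(1/2:ℝ))^2 := by
          apply pow_le_pow_left₀ hVr0 hVr_le
      _ = (α*(1-α))⁻¹ * (1-h) * 2 := by rw [mul_pow, hA, hB]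
  have hkey : α*(1-α)/2 * Vr^2 ≤ 1 - h := by
    have hinv : α*(1-α) * (α*(1-α))⁻¹ = 1 := mul_inv_cancel₀ haa.ne'
    nlinarith [mul_le_mul_of_nonneg_left hVrsq (by positivity : (0:ℝ) ≤ α*(1-α)/2)]
  -- conclude
  rw [renyiSimple, hH]
  rcases eq_or_ne H 0 with hH0 | hH0
  · rw [hH0, ENNReal.log_zero,
      EReal.coe_mul_bot_of_neg (by apply inv_lt_zero.mpr; linarith)]
    exact le_top
  · have hh0 : 0 < h := ENNReal.toReal_pos hH0 hHne
    rw [ENNReal.log_pos_real' hh0, ← EReal.coe_mul, EReal.coe_le_coe_iff]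
    have hlog := Real.log_le_sub_one_of_pos hh0
    have e : (α-1)⁻¹ = -(1-α)⁻¹ := by rw [show α - 1 = -(1-α) by ring, neg_inv]
    rw [e]
    have hβ : 0 < (1-α)⁻¹ := by positivity
    have hβ1 : (1-α) * (1-α)⁻¹ = 1 := mul_inv_cancel₀ h1α.ne'
    calc α/2 * Vr^2 = (1-α)⁻¹ * (α*(1-α)/2 * Vr^2) := by
          field_simp
      _ ≤ (1-α)⁻¹ * (1-h) := mul_le_mul_of_nonneg_left hkey hβ.le
      _ ≤ -((1-α)⁻¹ * Real.log h) := by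
          nlinarith [mul_le_mul_of_nonneg_left hlog hβ.le]
      _ = -(1-α)⁻¹ * Real.log h := by ring


/-- **Generalized Pinsker inequality.** For every order `α ∈ (0,1]` and probability
measures `P, Q` with densities `p, q` with respect to a common σ-finite measure `μ`,
`(α/2) V(P,Q)² ≤ D_α(P‖Q)`, where `V(P,Q) = ∫ |p - q| dμ` is the total variation
distance (expressed in `ℝ≥0∞` via truncated subtraction as `(p-q) + (q-p)`). -/
theorem renyiDiv_pinsker
    {X : Type*} [MeasurableSpace X] (P Q : Measure X)
    [IsProbabilityMeasure P] [IsProbabilityMeasure Q]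
    (μ : Measure X) [SigmaFinite μ] (p q : X → ℝ≥0∞)
    (hp : Measurable p) (hq : Measurable q)
    (hP : P = μ.withDensity p) (hQ : Q = μ.withDensity q)
    (α : ℝ) (hα0 : 0 < α) (hα1 : α ≤ 1) :
    ((α / 2 * (∫⁻ x, ((p x - q x) + (q x - p x)) ∂μ).toReal ^ 2 : ℝ) : EReal)
      ≤ renyiDiv (ENNReal.ofReal α) P Q := by
  rcases lt_or_eq_of_le hα1 with hlt | heq
  · -- α < 1
    have hne0 : ENNReal.ofReal α ≠ 0 := by
      simp only [ne_eq, ENNReal.ofReal_eq_zero, not_le]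
      exact hα0
    have hne1 : ENNReal.ofReal α ≠ 1 := by
      have h2 : ENNReal.ofReal α < 1 := by
        rw [← ENNReal.ofReal_one]
        exact (ENNReal.ofReal_lt_ofReal_iff one_pos).mpr hlt
      exact h2.ne
    rw [renyiDiv, if_neg hne0, if_neg hne1, if_neg ENNReal.ofReal_ne_top,
      ENNReal.toReal_ofReal hα0.le]
    exact renyi_pinsker_simple P Q μ p q hp hq hP hQ α hα0 hlt
  · -- α = 1
    subst heq
    rw [show ENNReal.ofReal (1:ℝ) = 1 by simp, renyiDiv, if_neg one_ne_zero, if_pos rfl]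
    set Vr := (∫⁻ x, ((p x - q x) + (q x - p x)) ∂μ).toReal with hVr
    have hbound : ∀ᶠ a in 𝓝[<] (1:ℝ), ((a/2 * Vr^2 : ℝ) : EReal) ≤ renyiSimple a P Q := by
      filter_upwards [Ioo_mem_nhdsLT_of_mem (show (1:ℝ) ∈ Ioc 0 1 from ⟨one_pos, le_rfl⟩)]
        with a ha
      exact renyi_pinsker_simple P Q μ p q hp hq hP hQ a ha.1 ha.2
    have hlimR : Tendsto (fun a : ℝ => a/2 * Vr^2) (𝓝[<] (1:ℝ)) (𝓝 ((1:ℝ)/2 * Vr^2)) := by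
      apply Tendsto.mono_left _ nhdsWithin_le_nhds
      exact ((continuous_id.div_const 2).mul continuous_const).tendsto 1
    have hlim : Tendsto (fun a : ℝ => ((a/2 * Vr^2 : ℝ) : EReal)) (𝓝[<] (1:ℝ))
        (𝓝 (((1:ℝ)/2 * Vr^2 : ℝ) : EReal)) :=
      (continuous_coe_real_ereal.tendsto _).comp hlimR
    calc ((1/2 * Vr^2 : ℝ) : EReal)
        = limsup (fun a : ℝ => ((a/2 * Vr^2 : ℝ):EReal)) (𝓝[<] (1:ℝ)) := hlim.limsup_eq.symm
      _ ≤ limsup (fun a : ℝ => renyiSimple a P Q) (𝓝[<] (1:ℝ)) := limsup_le_limsup hbound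
end
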